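/- arXiv:2202.04057 — 4 statements merged into one kernel-verified Lean document; each statement's English description precedes it below -/
import Mathlib

section
/- Let p be an odd prime, d₃ = p^{α₃}·d₃′ and d₄ = p^{α₄}·d₄′ positive integers with p ∤ d₃′, p ∤ d₄′ and α₃ ≤ α₄, and m = p^R·m′ a positive integer with p ∤ m′. Set ε = 1 if p ≡ 1 (mod 4) and ε = −1 if p ≡ 3 (mod 4). If R < 2α₃, then the sequence r ↦ N_{d₃,d₄}(p^r; m)/p^{3r} converges (as r → ∞) to 1 + (1 − p^{−1})·(⌊R/2⌋ + ε·⌊(R+1)/2⌋) − p^{−1} if R is odd, and to 1 + (1 − p^{−1})·(⌊R/2⌋ + ε·⌊(R+1)/2⌋) − ε·p^{−1} if R is even. -/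
open Filter

/-- The number of quadruples `(x₁, x₂, x₃, x₄) ∈ (ℤ/p^rℤ)⁴` with
`x₁² + x₂² + d₃²x₃² + d₄²x₄² ≡ m (mod p^r)`. -/
noncomputable def quaternaryLocalCount (p r d₃ d₄ : ℕ) (m : ℤ) : ℕ :=
  Nat.card {v : Fin 4 → ZMod (p ^ r) //
    v 0 ^ 2 + v 1 ^ 2 + (d₃ : ZMod (p ^ r)) ^ 2 * v 2 ^ 2
      + (d₄ : ZMod (p ^ r)) ^ 2 * v 3 ^ 2 = (m : ZMod (p ^ r))}

section
namespace QLD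
open Finset

variable {p : ℕ}

/-- Solutions of `x² + y² = t` in `ZMod n`. -/
def sols (n : ℕ) [NeZero n] (t : ZMod n) : Finset (ZMod n × ZMod n) :=
  Finset.univ.filter fun z => z.1 ^ 2 + z.2 ^ 2 = t

lemma mem_sols {n : ℕ} [NeZero n] {t : ZMod n} {z : ZMod n × ZMod n} :
    z ∈ sols n t ↔ z.1 ^ 2 + z.2 ^ 2 = t := by
  simp [sols]


/-- Primitive solutions. -/
def psols (p n : ℕ) [NeZero n] (t : ZMod n) : Finset (ZMod n × ZMod n) :=
  Finset.univ.filter fun z => z.1 ^ 2 + z.2 ^ 2 = t ∧ (¬ p ∣ z.1.val ∨ ¬ p ∣ z.2.val)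

/-- Imprimitive solutions. -/
def isols (p n : ℕ) [NeZero n] (t : ZMod n) : Finset (ZMod n × ZMod n) :=
  Finset.univ.filter fun z => z.1 ^ 2 + z.2 ^ 2 = t ∧ (p ∣ z.1.val ∧ p ∣ z.2.val)

lemma sols_card_split (p : ℕ) {n : ℕ} [NeZero n] (t : ZMod n) :
    (sols n t).card = (psols p n t).card + (isols p n t).card := by
  have h := Finset.card_filter_add_card_filter_not (s := sols n t)
    (p := fun z => ¬ p ∣ z.1.val ∨ ¬ p ∣ z.2.val)
  have e1 : (sols n t).filter (fun z => ¬ p ∣ z.1.val ∨ ¬ p ∣ z.2.val) = psols p n t := by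
    unfold sols psols; rw [Finset.filter_filter]
  have e2 : (sols n t).filter (fun z => ¬(¬ p ∣ z.1.val ∨ ¬ p ∣ z.2.val)) = isols p n t := by
    unfold sols isols
    rw [Finset.filter_filter]
    apply Finset.filter_congr
    intro z _
    constructor
    · rintro ⟨he, hn⟩
      push_neg at hn
      exact ⟨he, hn⟩
    · rintro ⟨he, h1, h2⟩
      exact ⟨he, by tauto⟩
  rw [← h, e1, e2]

def c0 (p : ℕ) : ℕ := if p % 4 = 3 then p + 1 else p - 1
def c1 (p : ℕ) : ℕ := if p % 4 = 3 then 0 else 2 * (p - 1)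

section Level1

variable [Fact p.Prime]

lemma two_ne_zero' (hp2 : p ≠ 2) : (2 : ZMod p) ≠ 0 := by
  have : ((2 : ℕ) : ZMod p) ≠ 0 := by
    rw [Ne, ZMod.natCast_eq_zero_iff]
    exact fun h => hp2 ((Nat.prime_dvd_prime_iff_eq (Fact.out) Nat.prime_two).mp h)
  simpa using this

lemma card_sols_eq_of_ne {c : ZMod p} (hc : c ≠ 0) :
    (sols p c).card = (sols p 1).card := by
  obtain ⟨x₀, y₀, hz₀⟩ := ZMod.sq_add_sq p c
  have hu : c * c⁻¹ = 1 := mul_inv_cancel₀ hc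
  refine Finset.card_bij'
    (fun z _ => ((z.1 * x₀ + z.2 * y₀) * c⁻¹, (z.2 * x₀ - z.1 * y₀) * c⁻¹))
    (fun w _ => (w.1 * x₀ - w.2 * y₀, w.2 * x₀ + w.1 * y₀)) ?_ ?_ ?_ ?_
  · intro z hz
    rw [mem_sols] at hz ⊢
    linear_combination c⁻¹^2*(x₀^2+y₀^2)*hz + c⁻¹^2*c*hz₀ + (c*c⁻¹+1)*hu
  · intro w hw
    rw [mem_sols] at hw ⊢
    linear_combination (x₀^2+y₀^2)*hw + hz₀
  · intro z hz
    ext <;> simp only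
    · linear_combination z.1*c⁻¹*hz₀ + z.1*hu
    · linear_combination z.2*c⁻¹*hz₀ + z.2*hu
  · intro w hw
    ext <;> simp only
    · linear_combination w.1*c⁻¹*hz₀ + w.1*hu
    · linear_combination w.2*c⁻¹*hz₀ + w.2*hu

lemma sum_card_sols : ∑ c : ZMod p, (sols p c).card = p ^ 2 := by
  classical
  have h := Finset.card_eq_sum_card_fiberwise
    (f := fun z : ZMod p × ZMod p => z.1 ^ 2 + z.2 ^ 2) (s := Finset.univ) (t := Finset.univ)
    (fun x _ => Finset.mem_univ _)
  have : (Finset.univ : Finset (ZMod p × ZMod p)).card = p ^ 2 := by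
    simp [Finset.card_univ, ZMod.card, sq]
  rw [this] at h
  exact h.symm

lemma card_sols_zero_three (h3 : p % 4 = 3) : (sols p (0 : ZMod p)).card = 1 := by
  have : sols p (0 : ZMod p) = {((0 : ZMod p), (0 : ZMod p))} := by
    apply Finset.eq_singleton_iff_unique_mem.mpr
    constructor
    · rw [mem_sols]; ring
    · intro z hz
      rw [mem_sols] at hz
      have hy : z.2 = 0 := by
        by_contra hy
        have : IsSquare (-1 : ZMod p) := by
          refine ⟨z.1 * z.2⁻¹, ?_⟩
          have hu : z.2 * z.2⁻¹ = 1 := mul_inv_cancel₀ hy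
          linear_combination -(z.2⁻¹^2) * hz + (z.2*z.2⁻¹+1)*hu
        exact (ZMod.exists_sq_eq_neg_one_iff.mp this) h3
      have hx : z.1 = 0 := by
        have : z.1 ^ 2 = 0 := by rw [← hz, hy]; ring
        exact pow_eq_zero_iff (two_ne_zero) |>.mp this
      exact Prod.ext hx hy
  rw [this, Finset.card_singleton]

lemma card_sols_zero_one (hp2 : p ≠ 2) (h1 : p % 4 ≠ 3) :
    (sols p (0 : ZMod p)).card = 2 * p - 1 := by
  obtain ⟨i, hi⟩ := ZMod.exists_sq_eq_neg_one_iff.mpr h1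
  have h2 : (2 : ZMod p) ≠ 0 := two_ne_zero' hp2
  have hine : i ≠ 0 := by
    intro h; rw [h] at hi
    exact one_ne_zero (by linear_combination -hi)
  have key : sols p (0 : ZMod p)
      = (Finset.univ.image fun y : ZMod p => (i * y, y))
        ∪ (Finset.univ.image fun y : ZMod p => (-(i * y), y)) := by
    ext z
    rw [mem_sols, Finset.mem_union]
    constructor
    · intro hz
      have : (z.1 - i * z.2) * (z.1 + i * z.2) = 0 := by
        linear_combination hz + z.2^2*hi
      rcases mul_eq_zero.mp this with h | h
      · exact Or.inl (Finset.mem_image.mpr ⟨z.2, Finset.mem_univ _,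
          Prod.ext (by linear_combination -h) rfl⟩)
      · exact Or.inr (Finset.mem_image.mpr ⟨z.2, Finset.mem_univ _,
          Prod.ext (by linear_combination -h) rfl⟩)
    · intro hz
      rcases hz with h | h <;>
      · obtain ⟨y, _, hy⟩ := Finset.mem_image.mp h
        rw [← hy]
        simp only
        linear_combination -(y^2) * hi
  have hinj1 : Function.Injective (fun y : ZMod p => (i * y, y)) := fun a b hab => by
    simpa using congrArg Prod.snd hab
  have hinj2 : Function.Injective (fun y : ZMod p => (-(i * y), y)) := fun a b hab => by
    simpa using congrArg Prod.snd hab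
  have hinter : (Finset.univ.image fun y : ZMod p => (i * y, y))
      ∩ (Finset.univ.image fun y : ZMod p => (-(i * y), y)) = {((0:ZMod p), (0:ZMod p))} := by
    ext z
    simp only [Finset.mem_inter, Finset.mem_image, Finset.mem_singleton]
    constructor
    · rintro ⟨⟨y, -, hy⟩, ⟨y', -, hy'⟩⟩
      rw [← hy] at hy'
      have hyy : y' = y := congrArg Prod.snd hy'
      rw [hyy] at hy'
      have h0 : (2 : ZMod p) * (i * y) = 0 := by
        have := congrArg Prod.fst hy'
        simp only at this
        linear_combination -this
      have : i * y = 0 := by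
        rcases mul_eq_zero.mp h0 with h | h
        · exact absurd h h2
        · exact h
      rcases mul_eq_zero.mp this with h | h
      · exact absurd h hine
      · rw [← hy, h]; simp
    · rintro rfl
      exact ⟨⟨0, Finset.mem_univ _, by simp⟩, ⟨0, Finset.mem_univ _, by simp⟩⟩
  have cardA : (Finset.univ.image fun y : ZMod p => (i * y, y)).card = p := by
    rw [Finset.card_image_of_injective _ hinj1, Finset.card_univ, ZMod.card]
  have cardB : (Finset.univ.image fun y : ZMod p => (-(i * y), y)).card = p := by
    rw [Finset.card_image_of_injective _ hinj2, Finset.card_univ, ZMod.card]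
  have := Finset.card_union_add_card_inter
    (Finset.univ.image fun y : ZMod p => (i * y, y))
    (Finset.univ.image fun y : ZMod p => (-(i * y), y))
  rw [hinter, cardA, cardB, Finset.card_singleton] at this
  rw [key]
  omega

lemma card_sols_one_val (hp2 : p ≠ 2) : (sols p (1 : ZMod p)).card = c0 p := by
  have hp3 : 3 ≤ p := by
    have := (Fact.out : p.Prime).two_le
    rcases Nat.lt_or_ge p 3 with h | h
    · interval_cases p <;> simp_all
    · exact h
  have hsum := sum_card_sols (p := p)
  have hsplit : ∑ c : ZMod p, (sols p c).card
      = (sols p (0:ZMod p)).card + ∑ c ∈ Finset.univ.erase (0 : ZMod p), (sols p c).card :=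
    (Finset.add_sum_erase _ _ (Finset.mem_univ 0)).symm
  have herase : ∑ c ∈ Finset.univ.erase (0 : ZMod p), (sols p c).card
      = (p - 1) * (sols p (1:ZMod p)).card := by
    calc ∑ c ∈ Finset.univ.erase (0 : ZMod p), (sols p c).card
        = ∑ _c ∈ Finset.univ.erase (0 : ZMod p), (sols p (1:ZMod p)).card :=
          Finset.sum_congr rfl (fun c hc => card_sols_eq_of_ne (Finset.mem_erase.mp hc).1)
      _ = (p - 1) * (sols p (1:ZMod p)).card := by
          rw [Finset.sum_const, Finset.card_erase_of_mem (Finset.mem_univ _), Finset.card_univ,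
            ZMod.card, smul_eq_mul]
  rw [hsplit, herase] at hsum
  obtain ⟨a, rfl⟩ : ∃ a, p = a + 1 := ⟨p - 1, by omega⟩
  set S := (sols (a+1) (1 : ZMod (a+1))).card with hS
  unfold c0
  rcases eq_or_ne ((a+1) % 4) 3 with h4 | h4
  · rw [card_sols_zero_three h4] at hsum
    rw [if_pos h4]
    -- hsum : 1 + (a+1-1)*S = (a+1)^2
    have h1 : 1 + a * S = (a+1)^2 := by simpa using hsum
    have h2 : (a+1)^2 = a*a + 2*a + 1 := by ring
    have h3 : a * S = a * (a + 2) := by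
      have : a * (a+2) = a*a + 2*a := by ring
      omega
    have ha : 0 < a := by omega
    have := Nat.eq_of_mul_eq_mul_left ha h3
    omega
  · rw [card_sols_zero_one hp2 h4] at hsum
    rw [if_neg h4]
    have h1 : (2*(a+1) - 1) + a * S = (a+1)^2 := by simpa using hsum
    have h2 : (a+1)^2 = a*a + 2*a + 1 := by ring
    have h3 : a * S = a * a := by omega
    have ha : 0 < a := by omega
    have := Nat.eq_of_mul_eq_mul_left ha h3
    omega

lemma dvd_val_iff_eq_zero {x : ZMod p} : p ∣ x.val ↔ x = 0 := by
  constructor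
  · intro h
    have := x.val_lt
    have : x.val = 0 := Nat.eq_zero_of_dvd_of_lt h this
    exact (ZMod.val_eq_zero x).mp this
  · rintro rfl
    simp [ZMod.val_zero]

lemma card_sols_ne_val (hp2 : p ≠ 2) {c : ZMod p} (hc : c ≠ 0) : (sols p c).card = c0 p := by
  rw [card_sols_eq_of_ne hc, card_sols_one_val hp2]

lemma psols_one_ne (hp2 : p ≠ 2) {c : ZMod p} (hc : c ≠ 0) : (psols p p c).card = c0 p := by
  have : psols p p c = sols p c := by
    unfold psols sols
    apply Finset.filter_congr
    intro z _
    simp only [dvd_val_iff_eq_zero]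
    constructor
    · exact fun h => h.1
    · intro he
      refine ⟨he, ?_⟩
      by_contra hcon
      push_neg at hcon
      obtain ⟨h1, h2⟩ := hcon
      rw [h1, h2] at he
      apply hc
      rw [← he]; ring
  rw [this, card_sols_ne_val hp2 hc]

lemma isols_one_zero : isols p p (0 : ZMod p) = {((0:ZMod p), (0:ZMod p))} := by
  apply Finset.eq_singleton_iff_unique_mem.mpr
  constructor
  · unfold isols
    refine Finset.mem_filter.mpr ⟨Finset.mem_univ _, by norm_num, ?_, ?_⟩ <;>
      simp [ZMod.val_zero]
  · intro z hz
    unfold isols at hz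
    simp only [Finset.mem_filter, dvd_val_iff_eq_zero] at hz
    exact Prod.ext hz.2.2.1 hz.2.2.2

lemma psols_one_zero (hp2 : p ≠ 2) : (psols p p (0 : ZMod p)).card = c1 p := by
  have hsplit := sols_card_split p (n := p) (0 : ZMod p)
  rw [isols_one_zero, Finset.card_singleton] at hsplit
  unfold c1
  rcases eq_or_ne (p % 4) 3 with h4 | h4
  · rw [card_sols_zero_three h4] at hsplit
    rw [if_pos h4]; omega
  · rw [card_sols_zero_one hp2 h4] at hsplit
    rw [if_neg h4]
    have hp3 : 3 ≤ p := by
      have := (Fact.out : p.Prime).two_le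
      rcases Nat.lt_or_ge p 3 with h | h
      · interval_cases p <;> simp_all
      · exact h
    omega

end Level1

section Tower

variable {p : ℕ}

lemma castHom_val {m n : ℕ} [NeZero n] (h : m ∣ n) (a : ZMod n) :
    ZMod.castHom h (ZMod m) a = ((a.val : ℕ) : ZMod m) := by
  conv_lhs => rw [← ZMod.natCast_zmod_val a]
  rw [map_natCast]

lemma natCast_mod_of_dvd {q m : ℕ} (hd : q ∣ m) (a : ℕ) :
    ((a % m : ℕ) : ZMod q) = (a : ZMod q) := by
  have h0 : ((m : ℕ) : ZMod q) = 0 := (ZMod.natCast_eq_zero_iff m q).mpr hd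
  calc ((a % m : ℕ) : ZMod q)
      = ((a % m : ℕ) : ZMod q) + ((m : ℕ) : ZMod q) * ((a / m : ℕ) : ZMod q) := by
        rw [h0]; ring
    _ = (a : ZMod q) := by
        rw [← Nat.cast_mul, ← Nat.cast_add, Nat.mod_add_div]

lemma pow_mul_eq_zero_iff (hp : p.Prime) {r j : ℕ} [NeZero (p^r)] (hj : j ≤ r)
    (δ : ZMod (p^r)) : (p : ZMod (p^r))^j * δ = 0 ↔ (p^(r-j) : ℕ) ∣ δ.val := by
  conv_lhs => rw [← ZMod.natCast_zmod_val δ]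
  rw [← Nat.cast_pow, ← Nat.cast_mul, ZMod.natCast_eq_zero_iff]
  have hsplit : p^r = p^j * p^(r-j) := by rw [← pow_add]; congr 1; omega
  generalize δ.val = v
  rw [hsplit, Nat.mul_dvd_mul_iff_left (pow_pos hp.pos j)]

lemma unit_iff_not_dvd (hp : p.Prime) {r : ℕ} (hr : 0 < r) [NeZero (p^r)]
    (x : ZMod (p^r)) : IsUnit x ↔ ¬ p ∣ x.val := by
  conv_lhs => rw [← ZMod.natCast_zmod_val x]
  rw [ZMod.isUnit_iff_coprime, Nat.coprime_pow_right_iff hr, Nat.coprime_comm,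
    hp.coprime_iff_not_dvd]

lemma ker_mul_zero (hp : p.Prime) {k : ℕ} (hk : 1 ≤ k) [NeZero (p^(k+1))]
    (δ δ' : ZMod (p^(k+1))) (h : p^k ∣ δ.val) (h' : p^k ∣ δ'.val) : δ * δ' = 0 := by
  rw [← ZMod.natCast_zmod_val δ, ← ZMod.natCast_zmod_val δ', ← Nat.cast_mul,
    ZMod.natCast_eq_zero_iff]
  calc p^(k+1) ∣ p^k * p^k := by rw [← pow_add]; exact pow_dvd_pow p (by omega)
    _ ∣ δ.val * δ'.val := mul_dvd_mul h h'

lemma card_fiber_castHom (hp : p.Prime) (k : ℕ) (y₀ : ZMod (p^k)) :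
    letI : NeZero (p^k) := ⟨pow_ne_zero k hp.pos.ne'⟩
    letI : NeZero (p^(k+1)) := ⟨pow_ne_zero (k+1) hp.pos.ne'⟩
    ((Finset.univ : Finset (ZMod (p^(k+1)))).filter
      (fun y => ZMod.castHom (pow_dvd_pow p (Nat.le_succ k)) (ZMod (p^k)) y = y₀)).card = p := by
  letI : NeZero (p^k) := ⟨pow_ne_zero k hp.pos.ne'⟩
  letI : NeZero (p^(k+1)) := ⟨pow_ne_zero (k+1) hp.pos.ne'⟩
  letI : NeZero p := ⟨hp.pos.ne'⟩
  set φ := ZMod.castHom (pow_dvd_pow p (Nat.le_succ k)) (ZMod (p^k)) with hφ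
  set Y₀ : ZMod (p^(k+1)) := ((y₀.val : ℕ) : ZMod (p^(k+1))) with hY₀
  have hφY₀ : φ Y₀ = y₀ := by
    rw [hY₀, map_natCast, ZMod.natCast_zmod_val]
  have hpk : 0 < p^k := pow_pos hp.pos k
  have hcard : ((Finset.univ : Finset (ZMod p))).card = p := by
    rw [Finset.card_univ, ZMod.card]
  refine Eq.trans ?_ hcard
  refine Finset.card_bij'
    (fun y _ => (((y - Y₀).val / p^k : ℕ) : ZMod p))
    (fun c _ => Y₀ + ((p^k * c.val : ℕ) : ZMod (p^(k+1)))) ?_ ?_ ?_ ?_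
  · intro y _; exact Finset.mem_univ _
  · intro c _
    refine Finset.mem_filter.mpr ⟨Finset.mem_univ _, ?_⟩
    rw [map_add, hφY₀, map_natCast]
    have : ((p^k * c.val : ℕ) : ZMod (p^k)) = 0 :=
      (ZMod.natCast_eq_zero_iff _ _).mpr ⟨c.val, rfl⟩
    rw [this, add_zero]
  · intro y hy
    have hy' : φ y = y₀ := (Finset.mem_filter.mp hy).2
    have hδ : φ (y - Y₀) = 0 := by rw [map_sub, hy', hφY₀, sub_self]
    have hdvd : p^k ∣ (y - Y₀).val := by
      rw [castHom_val _ (y - Y₀)] at hδ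
      exact (ZMod.natCast_eq_zero_iff _ _).mp hδ
    have hlt : (y - Y₀).val / p^k < p := by
      apply Nat.div_lt_iff_lt_mul hpk |>.mpr
      calc (y - Y₀).val < p^(k+1) := ZMod.val_lt _
        _ = p * p^k := by ring
    rw [ZMod.val_cast_of_lt hlt, Nat.mul_div_cancel' hdvd, ZMod.natCast_zmod_val]
    ring
  · intro c _
    have hlt : p^k * c.val < p^(k+1) := by
      calc p^k * c.val < p^k * p := by
            exact Nat.mul_lt_mul_of_le_of_lt (le_refl _) (ZMod.val_lt c) hpk
        _ = p^(k+1) := (pow_succ p k).symm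
    have : (Y₀ + ((p^k * c.val : ℕ) : ZMod (p^(k+1))) - Y₀) = ((p^k * c.val : ℕ) : ZMod (p^(k+1))) := by
      ring
    rw [this, ZMod.val_cast_of_lt hlt, Nat.mul_div_cancel_left _ hpk, ZMod.natCast_zmod_val]

end Tower

section Lift

variable {p : ℕ}

lemma not_dvd_two (hp : p.Prime) (hp2 : p ≠ 2) : ¬ p ∣ 2 :=
  fun h => hp2 ((Nat.prime_dvd_prime_iff_eq hp Nat.prime_two).mp h)

lemma dvd_val_castHom (hp : p.Prime) {k : ℕ} (hk : 1 ≤ k) (x : ZMod (p^(k+1))) :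
    letI : NeZero (p^(k+1)) := ⟨pow_ne_zero (k+1) hp.pos.ne'⟩
    (p ∣ (ZMod.castHom (pow_dvd_pow p (Nat.le_succ k)) (ZMod (p^k)) x).val ↔ p ∣ x.val) := by
  letI : NeZero (p^(k+1)) := ⟨pow_ne_zero (k+1) hp.pos.ne'⟩
  letI : NeZero (p^k) := ⟨pow_ne_zero k hp.pos.ne'⟩
  rw [castHom_val, ZMod.val_natCast]
  exact Nat.dvd_mod_iff (dvd_pow_self p (by omega : k ≠ 0))

lemma two_lt_ppow (hp : p.Prime) (hp2 : p ≠ 2) {m : ℕ} (hm : 1 ≤ m) : 2 < p^m := by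
  have h3 : 3 ≤ p := by
    have := hp.two_le
    rcases Nat.lt_or_ge p 3 with h | h
    · interval_cases p <;> simp_all
    · exact h
  calc 2 < 3 := by omega
    _ ≤ p := h3
    _ ≤ p^m := Nat.le_self_pow (by omega) p

lemma unit_two (hp : p.Prime) (hp2 : p ≠ 2) {m : ℕ} (hm : 1 ≤ m) :
    letI : NeZero (p^m) := ⟨pow_ne_zero m hp.pos.ne'⟩
    IsUnit (2 : ZMod (p^m)) := by
  letI : NeZero (p^m) := ⟨pow_ne_zero m hp.pos.ne'⟩
  rw [unit_iff_not_dvd hp hm]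
  have h2 : ((2 : ℕ) : ZMod (p^m)) = (2 : ZMod (p^m)) := by push_cast; rfl
  rw [← h2, ZMod.val_cast_of_lt (two_lt_ppow hp hp2 hm)]
  exact not_dvd_two hp hp2

lemma card_fiberA (hp : p.Prime) (hp2 : p ≠ 2) {k : ℕ} (hk : 1 ≤ k)
    (t : ZMod (p^(k+1))) (x₀ y₀ : ZMod (p^k))
    (hx₀ : ¬ p ∣ x₀.val)
    (he : letI : NeZero (p^k) := ⟨pow_ne_zero k hp.pos.ne'⟩
      x₀^2 + y₀^2 = ZMod.castHom (pow_dvd_pow p (Nat.le_succ k)) (ZMod (p^k)) t) :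
    letI : NeZero (p^(k+1)) := ⟨pow_ne_zero (k+1) hp.pos.ne'⟩
    letI : NeZero (p^k) := ⟨pow_ne_zero k hp.pos.ne'⟩
    ((psols p (p^(k+1)) t).filter
      (fun z => (ZMod.castHom (pow_dvd_pow p (Nat.le_succ k)) (ZMod (p^k)) z.1,
        ZMod.castHom (pow_dvd_pow p (Nat.le_succ k)) (ZMod (p^k)) z.2) = (x₀, y₀))).card = p := by
  letI : NeZero (p^(k+1)) := ⟨pow_ne_zero (k+1) hp.pos.ne'⟩
  letI : NeZero (p^k) := ⟨pow_ne_zero k hp.pos.ne'⟩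
  set φ := ZMod.castHom (pow_dvd_pow p (Nat.le_succ k)) (ZMod (p^k)) with hφdef
  -- the fiber with primitivity removed (it is automatic)
  have hSeq : (psols p (p^(k+1)) t).filter (fun z => (φ z.1, φ z.2) = (x₀, y₀))
      = Finset.univ.filter (fun z : ZMod (p^(k+1)) × ZMod (p^(k+1)) =>
          z.1^2 + z.2^2 = t ∧ φ z.1 = x₀ ∧ φ z.2 = y₀) := by
    unfold psols
    rw [Finset.filter_filter]
    apply Finset.filter_congr
    intro z _
    constructor
    · rintro ⟨⟨heq, -⟩, hpair⟩
      exact ⟨heq, (Prod.ext_iff.mp hpair).1, (Prod.ext_iff.mp hpair).2⟩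
    · rintro ⟨heq, h1, h2⟩
      refine ⟨⟨heq, Or.inl ?_⟩, by rw [h1, h2]⟩
      rw [← dvd_val_castHom hp hk z.1, h1]
      exact hx₀
  rw [hSeq]
  -- set up the lift machinery
  set X : ZMod (p^(k+1)) := ((x₀.val : ℕ) : ZMod (p^(k+1))) with hXdef
  have hXval : X.val = x₀.val := ZMod.val_cast_of_lt
    (lt_of_lt_of_le (ZMod.val_lt x₀) (Nat.pow_le_pow_right hp.pos (Nat.le_succ k)))
  have hφX : φ X = x₀ := by rw [hXdef, map_natCast, ZMod.natCast_zmod_val]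
  have hXu : IsUnit X := by
    rw [unit_iff_not_dvd hp (by omega : 0 < k+1), hXval]; exact hx₀
  have h2u : IsUnit (2 : ZMod (p^(k+1))) := unit_two hp hp2 (by omega)
  have hu : IsUnit ((2 : ZMod (p^(k+1))) * X) := h2u.mul hXu
  set u : ZMod (p^(k+1)) := ↑hu.unit⁻¹ with hudef
  have key : (2 * X) * u = 1 := hu.mul_val_inv
  have hφu0 : ∀ E : ZMod (p^(k+1)), φ E = 0 → φ (u * E) = 0 := by
    intro E hE; rw [map_mul, hE, mul_zero]
  -- properties of the explicit lift
  have hlift : ∀ y : ZMod (p^(k+1)), φ y = y₀ →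
      (X + u * (t - y^2 - X^2))^2 + y^2 = t ∧ φ (X + u * (t - y^2 - X^2)) = x₀ := by
    intro y hy
    have hφE : φ (t - y^2 - X^2) = 0 := by
      rw [map_sub, map_sub, map_pow, map_pow, hy, hφX, ← he]; ring
    have hEdvd : p^k ∣ (t - y^2 - X^2).val := by
      rw [castHom_val] at hφE
      exact (ZMod.natCast_eq_zero_iff _ _).mp hφE
    have hE2 : (t - y^2 - X^2) * (t - y^2 - X^2) = 0 := ker_mul_zero hp hk _ _ hEdvd hEdvd
    constructor
    · linear_combination (t - y^2 - X^2) * key + u^2 * hE2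
    · rw [map_add, hφX, hφu0 _ hφE, add_zero]
  have hcard := card_fiber_castHom hp k y₀
  refine Eq.trans ?_ hcard
  refine Finset.card_bij'
    (fun z _ => z.2)
    (fun y _ => (X + u * (t - y^2 - X^2), y)) ?_ ?_ ?_ ?_
  · intro z hz
    exact Finset.mem_filter.mpr ⟨Finset.mem_univ _, ((Finset.mem_filter.mp hz).2).2.2⟩
  · intro y hy
    have hy' : φ y = y₀ := (Finset.mem_filter.mp hy).2
    obtain ⟨h1, h2⟩ := hlift y hy'
    exact Finset.mem_filter.mpr ⟨Finset.mem_univ _, h1, h2, hy'⟩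
  · intro z hz
    obtain ⟨-, heq, hz1, hz2⟩ := Finset.mem_filter.mp hz
    obtain ⟨h1, -⟩ := hlift z.2 hz2
    -- uniqueness: show X + u * (t - z.2^2 - X^2) = z.1
    set W : ZMod (p^(k+1)) := X + u * (t - z.2^2 - X^2) with hWdef
    have hφW : φ W = x₀ := (hlift z.2 hz2).2
    have hdφ : φ (z.1 - W) = 0 := by rw [map_sub, hz1, hφW, sub_self]
    have hddvd : p^k ∣ (z.1 - W).val := by
      rw [castHom_val] at hdφ
      exact (ZMod.natCast_eq_zero_iff _ _).mp hdφ
    have hd2 : (z.1 - W) * (z.1 - W) = 0 := ker_mul_zero hp hk _ _ hddvd hddvd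
    have hz1u : IsUnit z.1 := by
      rw [unit_iff_not_dvd hp (by omega : 0 < k+1), ← dvd_val_castHom hp hk z.1, hz1]
      exact hx₀
    have h2z1u : IsUnit ((2 : ZMod (p^(k+1))) * z.1) := (unit_two hp hp2 (by omega)).mul hz1u
    have hzero : (2 * z.1) * (z.1 - W) = 0 := by
      linear_combination heq - h1 + hd2
    have : z.1 - W = 0 := (h2z1u.mul_right_eq_zero).mp hzero
    have hzW : z.1 = W := by linear_combination this
    exact Prod.ext hzW.symm rfl
  · intro y _
    rfl

end Lift

section LiftSum

variable {p : ℕ}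

lemma psols_lift (hp : p.Prime) (hp2 : p ≠ 2) {k : ℕ} (hk : 1 ≤ k) (t : ZMod (p^(k+1))) :
    letI : NeZero (p^(k+1)) := ⟨pow_ne_zero (k+1) hp.pos.ne'⟩
    letI : NeZero (p^k) := ⟨pow_ne_zero k hp.pos.ne'⟩
    (psols p (p^(k+1)) t).card
      = p * (psols p (p^k) (ZMod.castHom (pow_dvd_pow p (Nat.le_succ k)) (ZMod (p^k)) t)).card := by
  letI : NeZero (p^(k+1)) := ⟨pow_ne_zero (k+1) hp.pos.ne'⟩
  letI : NeZero (p^k) := ⟨pow_ne_zero k hp.pos.ne'⟩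
  set φ := ZMod.castHom (pow_dvd_pow p (Nat.le_succ k)) (ZMod (p^k)) with hφdef
  have hmap : ∀ z ∈ psols p (p^(k+1)) t, (φ z.1, φ z.2) ∈ psols p (p^k) (φ t) := by
    intro z hz
    obtain ⟨-, heq, hprim⟩ := Finset.mem_filter.mp hz
    refine Finset.mem_filter.mpr ⟨Finset.mem_univ _, ?_, ?_⟩
    · simp only
      rw [← map_pow, ← map_pow, ← map_add, heq]
    · simp only
      rcases hprim with h | h
      · exact Or.inl (by rw [dvd_val_castHom hp hk]; exact h)
      · exact Or.inr (by rw [dvd_val_castHom hp hk]; exact h)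
  rw [Finset.card_eq_sum_card_fiberwise hmap]
  have hfib : ∀ z₀ ∈ psols p (p^k) (φ t),
      ((psols p (p^(k+1)) t).filter (fun z => (φ z.1, φ z.2) = z₀)).card = p := by
    intro z₀ hz₀
    obtain ⟨-, heq0, hprim0⟩ := Finset.mem_filter.mp hz₀
    rcases hprim0 with hx | hy
    · have := card_fiberA hp hp2 hk t z₀.1 z₀.2 hx heq0
      simpa [hφdef] using this
    · -- swap to reduce to the first case
      have heq0' : z₀.2^2 + z₀.1^2 = φ t := by rw [← heq0]; ring
      have hswap := card_fiberA hp hp2 hk t z₀.2 z₀.1 hy heq0'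
      refine Eq.trans ?_ hswap
      refine Finset.card_bij' (fun z _ => z.swap) (fun z _ => z.swap) ?_ ?_ ?_ ?_
      · intro z hz
        obtain ⟨hmem, hpair⟩ := Finset.mem_filter.mp hz
        obtain ⟨-, heq, hprim⟩ := Finset.mem_filter.mp hmem
        refine Finset.mem_filter.mpr ⟨Finset.mem_filter.mpr
          ⟨Finset.mem_univ _, by simpa [add_comm] using heq, by tauto⟩, ?_⟩
        simp only [Prod.swap]
        rw [Prod.ext_iff] at hpair ⊢
        exact ⟨by simpa [hφdef] using hpair.2, by simpa [hφdef] using hpair.1⟩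
      · intro z hz
        obtain ⟨hmem, hpair⟩ := Finset.mem_filter.mp hz
        obtain ⟨-, heq, hprim⟩ := Finset.mem_filter.mp hmem
        refine Finset.mem_filter.mpr ⟨Finset.mem_filter.mpr
          ⟨Finset.mem_univ _, by simpa [add_comm] using heq, by tauto⟩, ?_⟩
        simp only [Prod.swap]
        rw [Prod.ext_iff] at hpair ⊢
        exact ⟨by simpa [hφdef] using hpair.2, by simpa [hφdef] using hpair.1⟩
      · intro z _; simp
      · intro z _; simp
  rw [Finset.sum_congr rfl hfib, Finset.sum_const, smul_eq_mul, mul_comm]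

lemma psols_transfer [NeZero p] {n : ℕ} [NeZero n] (hn : n = p) (t : ZMod n) :
    (psols p n t).card = (psols p p ((t.val : ℕ) : ZMod p)).card := by
  subst hn
  rw [ZMod.natCast_zmod_val]

lemma val_castHom_cast (hp : p.Prime) {k : ℕ} (hk : 1 ≤ k) (t : ZMod (p^(k+1))) :
    letI : NeZero (p^(k+1)) := ⟨pow_ne_zero (k+1) hp.pos.ne'⟩
    letI : NeZero (p^k) := ⟨pow_ne_zero k hp.pos.ne'⟩
    (((ZMod.castHom (pow_dvd_pow p (Nat.le_succ k)) (ZMod (p^k)) t).val : ℕ) : ZMod p)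
      = ((t.val : ℕ) : ZMod p) := by
  letI : NeZero (p^(k+1)) := ⟨pow_ne_zero (k+1) hp.pos.ne'⟩
  letI : NeZero (p^k) := ⟨pow_ne_zero k hp.pos.ne'⟩
  rw [castHom_val, ZMod.val_natCast]
  exact natCast_mod_of_dvd (dvd_pow_self p (by omega : k ≠ 0)) t.val

lemma psols_tower (hp : p.Prime) (hp2 : p ≠ 2) : ∀ (k : ℕ) (t : ZMod (p^(k+1))),
    letI : NeZero (p^(k+1)) := ⟨pow_ne_zero (k+1) hp.pos.ne'⟩
    letI : NeZero p := ⟨hp.pos.ne'⟩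
    (psols p (p^(k+1)) t).card = p^k * (psols p p ((t.val : ℕ) : ZMod p)).card := by
  letI : NeZero p := ⟨hp.pos.ne'⟩
  intro k
  induction k with
  | zero =>
    intro t
    letI : NeZero (p^1) := ⟨pow_ne_zero 1 hp.pos.ne'⟩
    rw [psols_transfer (pow_one p) t, pow_zero, one_mul]
  | succ k ih =>
    intro t
    letI : NeZero (p^(k+1+1)) := ⟨pow_ne_zero (k+1+1) hp.pos.ne'⟩
    letI : NeZero (p^(k+1)) := ⟨pow_ne_zero (k+1) hp.pos.ne'⟩
    rw [psols_lift hp hp2 (by omega : 1 ≤ k+1) t,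
      ih (ZMod.castHom (pow_dvd_pow p (Nat.le_succ (k+1))) (ZMod (p^(k+1))) t),
      val_castHom_cast hp (by omega : 1 ≤ k+1) t]
    ring

end LiftSum

section Imprim

variable {p : ℕ}

lemma psq_decomp (hp : p.Prime) {r : ℕ} (x : ZMod (p^r))
    (h : p ∣ (letI : NeZero (p^r) := ⟨pow_ne_zero r hp.pos.ne'⟩; x.val)) :
    x = (p : ZMod (p^r)) * (((letI : NeZero (p^r) := ⟨pow_ne_zero r hp.pos.ne'⟩; x.val) / p : ℕ) : ZMod (p^r)) := by
  letI : NeZero (p^r) := ⟨pow_ne_zero r hp.pos.ne'⟩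
  conv_lhs => rw [← ZMod.natCast_zmod_val x, ← Nat.mul_div_cancel' h]
  push_cast
  ring

lemma p_dvd_val_of_eq_mul (hp : p.Prime) {r : ℕ} (hr : 1 ≤ r) (w c : ZMod (p^r))
    (h : w = (p : ZMod (p^r)) * c) :
    letI : NeZero (p^r) := ⟨pow_ne_zero r hp.pos.ne'⟩
    p ∣ w.val := by
  letI : NeZero (p^r) := ⟨pow_ne_zero r hp.pos.ne'⟩
  have : w = ((p * c.val : ℕ) : ZMod (p^r)) := by
    rw [h]
    conv_lhs => rw [← ZMod.natCast_zmod_val c]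
    push_cast
    ring
  rw [this, ZMod.val_natCast]
  exact (Nat.dvd_mod_iff (dvd_pow_self p (by omega : r ≠ 0))).mpr (dvd_mul_right p _)

lemma isols_unit_empty (hp : p.Prime) {r : ℕ} (hr : 1 ≤ r) (w : ZMod (p^r))
    (hw : IsUnit w) :
    letI : NeZero (p^r) := ⟨pow_ne_zero r hp.pos.ne'⟩
    isols p (p^r) w = ∅ := by
  letI : NeZero (p^r) := ⟨pow_ne_zero r hp.pos.ne'⟩
  rw [Finset.eq_empty_iff_forall_notMem]
  intro z hz
  obtain ⟨-, heq, hd1, hd2⟩ := Finset.mem_filter.mp hz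
  have h1 := psq_decomp hp z.1 hd1
  have h2 := psq_decomp hp z.2 hd2
  set a := ((z.1.val / p : ℕ) : ZMod (p^r))
  set b := ((z.2.val / p : ℕ) : ZMod (p^r))
  have hwp : w = (p : ZMod (p^r)) * (p * (a^2 + b^2)) := by
    rw [← heq, h1, h2]; ring
  have := p_dvd_val_of_eq_mul hp hr w _ hwp
  rw [unit_iff_not_dvd hp (by omega)] at hw
  exact hw this

lemma isols_pw_empty (hp : p.Prime) {r : ℕ} (hr : 2 ≤ r) (w : ZMod (p^r))
    (hw : IsUnit w) :
    letI : NeZero (p^r) := ⟨pow_ne_zero r hp.pos.ne'⟩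
    isols p (p^r) ((p : ZMod (p^r)) * w) = ∅ := by
  letI : NeZero (p^r) := ⟨pow_ne_zero r hp.pos.ne'⟩
  rw [Finset.eq_empty_iff_forall_notMem]
  intro z hz
  obtain ⟨-, heq, hd1, hd2⟩ := Finset.mem_filter.mp hz
  have h1 := psq_decomp hp z.1 hd1
  have h2 := psq_decomp hp z.2 hd2
  set a := ((z.1.val / p : ℕ) : ZMod (p^r))
  set b := ((z.2.val / p : ℕ) : ZMod (p^r))
  set σ := a^2 + b^2 with hσ
  have h0 : (p : ZMod (p^r))^1 * (w - p * σ) = 0 := by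
    rw [pow_one]
    linear_combination (z.1 + p*a) * h1 + (z.2 + p*b) * h2 - heq
  rw [pow_mul_eq_zero_iff hp (by omega : 1 ≤ r)] at h0
  have hpd : p ∣ (w - p * σ).val := dvd_trans (dvd_pow_self p (by omega : r - 1 ≠ 0)) h0
  have hw2 : w = (w - p * σ) + p * σ := by ring
  have hpd2 : p ∣ (p * σ : ZMod (p^r)).val :=
    p_dvd_val_of_eq_mul hp (by omega) _ σ rfl
  have hdw : p ∣ w.val := by
    rw [hw2, ZMod.val_add]
    exact (Nat.dvd_mod_iff (dvd_pow_self p (by omega : r ≠ 0))).mpr (dvd_add hpd hpd2)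
  rw [unit_iff_not_dvd hp (by omega)] at hw
  exact hw hdw

lemma coordFiber (hp : p.Prime) (s : ℕ) (a : ZMod (p^s)) :
    letI : NeZero (p^s) := ⟨pow_ne_zero s hp.pos.ne'⟩
    letI : NeZero (p^(s+2)) := ⟨pow_ne_zero (s+2) hp.pos.ne'⟩
    ((Finset.univ : Finset (ZMod (p^(s+2)))).filter
      (fun x => p ∣ x.val ∧ ((x.val / p : ℕ) : ZMod (p^s)) = a)).card = p := by
  letI : NeZero (p^s) := ⟨pow_ne_zero s hp.pos.ne'⟩
  letI : NeZero (p^(s+2)) := ⟨pow_ne_zero (s+2) hp.pos.ne'⟩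
  letI : NeZero p := ⟨hp.pos.ne'⟩
  have hpk : 0 < p^s := pow_pos hp.pos s
  have hcard : ((Finset.univ : Finset (ZMod p))).card = p := by
    rw [Finset.card_univ, ZMod.card]
  have haval : a.val < p^s := ZMod.val_lt a
  have hbound : ∀ c : ZMod p, a.val + p^s * c.val < p^(s+1) := by
    intro c
    have : c.val < p := ZMod.val_lt c
    calc a.val + p^s * c.val < p^s + p^s * c.val := by omega
      _ = p^s * (c.val + 1) := by ring
      _ ≤ p^s * p := Nat.mul_le_mul_left _ (by omega)
      _ = p^(s+1) := (pow_succ p s).symm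
  refine Eq.trans ?_ hcard
  refine Finset.card_bij'
    (fun x _ => (((x.val / p) / p^s : ℕ) : ZMod p))
    (fun c _ => ((p * (a.val + p^s * c.val) : ℕ) : ZMod (p^(s+2)))) ?_ ?_ ?_ ?_
  · intro x _; exact Finset.mem_univ _
  · intro c _
    have hlt : p * (a.val + p^s * c.val) < p^(s+2) := by
      calc p * (a.val + p^s * c.val) < p * p^(s+1) :=
            Nat.mul_lt_mul_of_le_of_lt (le_refl p) (hbound c) hp.pos
        _ = p^(s+2) := by ring
    refine Finset.mem_filter.mpr ⟨Finset.mem_univ _, ?_, ?_⟩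
    · rw [ZMod.val_cast_of_lt hlt]
      exact dvd_mul_right p _
    · rw [ZMod.val_cast_of_lt hlt, Nat.mul_div_cancel_left _ hp.pos]
      push_cast
      have : ((p^s * c.val : ℕ) : ZMod (p^s)) = 0 :=
        (ZMod.natCast_eq_zero_iff _ _).mpr ⟨c.val, rfl⟩
      push_cast at this
      rw [this, add_zero, ZMod.natCast_zmod_val]
  · intro x hx
    obtain ⟨-, hdvd, hHa⟩ := Finset.mem_filter.mp hx
    set T := x.val / p with hT
    have hTlt : T < p^(s+1) := by
      rw [hT]
      apply (Nat.div_lt_iff_lt_mul hp.pos).mpr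
      calc x.val < p^(s+2) := ZMod.val_lt x
        _ = p^(s+1) * p := by ring
    have hTa : T % p^s = a.val := by
      have := congrArg ZMod.val hHa
      rwa [ZMod.val_natCast] at this
    have hTdiv : T / p^s < p := by
      apply (Nat.div_lt_iff_lt_mul hpk).mpr
      calc T < p^(s+1) := hTlt
        _ = p * p^s := by ring
    have hTdec : a.val + p^s * (T / p^s) = T := by
      conv_rhs => rw [← Nat.mod_add_div T (p^s)]
      rw [hTa]
    rw [ZMod.val_cast_of_lt hTdiv, hTdec, Nat.mul_div_cancel' hdvd, ZMod.natCast_zmod_val]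
  · intro c _
    have hlt : p * (a.val + p^s * c.val) < p^(s+2) := by
      calc p * (a.val + p^s * c.val) < p * p^(s+1) :=
            Nat.mul_lt_mul_of_le_of_lt (le_refl p) (hbound c) hp.pos
        _ = p^(s+2) := by ring
    rw [ZMod.val_cast_of_lt hlt, Nat.mul_div_cancel_left _ hp.pos,
      Nat.add_mul_div_left _ _ hpk, Nat.div_eq_of_lt haval, zero_add, ZMod.natCast_zmod_val]

end Imprim

section Descent

variable {p : ℕ}

lemma psq_cancel (hp : p.Prime) {s : ℕ} (c d : ZMod (p^(s+2))) :
    letI : NeZero (p^(s+2)) := ⟨pow_ne_zero (s+2) hp.pos.ne'⟩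
    letI : NeZero (p^s) := ⟨pow_ne_zero s hp.pos.ne'⟩
    ((p : ZMod (p^(s+2)))^2 * c = (p : ZMod (p^(s+2)))^2 * d
      ↔ ZMod.castHom (pow_dvd_pow p (by omega : s ≤ s+2)) (ZMod (p^s)) c
        = ZMod.castHom (pow_dvd_pow p (by omega : s ≤ s+2)) (ZMod (p^s)) d) := by
  letI : NeZero (p^(s+2)) := ⟨pow_ne_zero (s+2) hp.pos.ne'⟩
  letI : NeZero (p^s) := ⟨pow_ne_zero s hp.pos.ne'⟩
  have h1 : (p : ZMod (p^(s+2)))^2 * c = (p : ZMod (p^(s+2)))^2 * d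
      ↔ (p : ZMod (p^(s+2)))^2 * (c - d) = 0 := by
    constructor
    · intro h; linear_combination h
    · intro h; linear_combination h
  rw [h1, pow_mul_eq_zero_iff hp (by omega : 2 ≤ s+2)]
  have hs : s + 2 - 2 = s := by omega
  rw [hs]
  rw [← ZMod.natCast_eq_zero_iff, ← castHom_val (pow_dvd_pow p (by omega : s ≤ s+2))]
  rw [map_sub, sub_eq_zero]

lemma isols_descent (hp : p.Prime) {s : ℕ} (u : ZMod (p^(s+2))) :
    letI : NeZero (p^(s+2)) := ⟨pow_ne_zero (s+2) hp.pos.ne'⟩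
    letI : NeZero (p^s) := ⟨pow_ne_zero s hp.pos.ne'⟩
    (isols p (p^(s+2)) ((p : ZMod (p^(s+2)))^2 * u)).card
      = p^2 * (sols (p^s)
          (ZMod.castHom (pow_dvd_pow p (by omega : s ≤ s+2)) (ZMod (p^s)) u)).card := by
  letI : NeZero (p^(s+2)) := ⟨pow_ne_zero (s+2) hp.pos.ne'⟩
  letI : NeZero (p^s) := ⟨pow_ne_zero s hp.pos.ne'⟩
  set φ' := ZMod.castHom (pow_dvd_pow p (by omega : s ≤ s+2)) (ZMod (p^s)) with hφ'def
  set H : ZMod (p^(s+2)) → ZMod (p^s) := fun x => ((x.val / p : ℕ) : ZMod (p^s)) with hHdef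
  have key : ∀ x y : ZMod (p^(s+2)), p ∣ x.val → p ∣ y.val →
      (x^2 + y^2 = (p : ZMod (p^(s+2)))^2 * u ↔ (H x)^2 + (H y)^2 = φ' u) := by
    intro x y hx hy
    have h1 := psq_decomp hp x hx
    have h2 := psq_decomp hp y hy
    set A := ((x.val / p : ℕ) : ZMod (p^(s+2))) with hA
    set B := ((y.val / p : ℕ) : ZMod (p^(s+2))) with hB
    have hsum : x^2 + y^2 = (p : ZMod (p^(s+2)))^2 * (A^2 + B^2) := by
      rw [h1, h2]; ring
    rw [hsum, psq_cancel hp]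
    have hφA : φ' A = H x := by rw [hA, hHdef, map_natCast]
    have hφB : φ' B = H y := by rw [hB, hHdef, map_natCast]
    rw [map_add, map_pow, map_pow, hφA, hφB]
  have hmap : ∀ z ∈ isols p (p^(s+2)) ((p : ZMod (p^(s+2)))^2 * u),
      (H z.1, H z.2) ∈ sols (p^s) (φ' u) := by
    intro z hz
    obtain ⟨-, heq, hd1, hd2⟩ := Finset.mem_filter.mp hz
    exact Finset.mem_filter.mpr ⟨Finset.mem_univ _, (key z.1 z.2 hd1 hd2).mp heq⟩
  rw [Finset.card_eq_sum_card_fiberwise hmap]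
  have hfib : ∀ zb ∈ sols (p^s) (φ' u),
      ((isols p (p^(s+2)) ((p : ZMod (p^(s+2)))^2 * u)).filter
        (fun z => (H z.1, H z.2) = zb)).card = p * p := by
    intro zb hzb
    have heqb : zb.1^2 + zb.2^2 = φ' u := (Finset.mem_filter.mp hzb).2
    have hfeq : (isols p (p^(s+2)) ((p : ZMod (p^(s+2)))^2 * u)).filter
        (fun z => (H z.1, H z.2) = zb)
        = Finset.univ.filter (fun z : ZMod (p^(s+2)) × ZMod (p^(s+2)) =>
            (p ∣ z.1.val ∧ H z.1 = zb.1) ∧ (p ∣ z.2.val ∧ H z.2 = zb.2)) := by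
      unfold isols
      rw [Finset.filter_filter]
      apply Finset.filter_congr
      intro z _
      constructor
      · rintro ⟨⟨-, hd1, hd2⟩, hpair⟩
        exact ⟨⟨hd1, (Prod.ext_iff.mp hpair).1⟩, ⟨hd2, (Prod.ext_iff.mp hpair).2⟩⟩
      · rintro ⟨⟨hd1, hH1⟩, hd2, hH2⟩
        refine ⟨⟨?_, hd1, hd2⟩, ?_⟩
        · rw [key z.1 z.2 hd1 hd2, hH1, hH2]
          exact heqb
        · rw [Prod.ext_iff]
          exact ⟨hH1, hH2⟩
    have hprod : Finset.univ.filter (fun z : ZMod (p^(s+2)) × ZMod (p^(s+2)) =>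
            (p ∣ z.1.val ∧ H z.1 = zb.1) ∧ (p ∣ z.2.val ∧ H z.2 = zb.2))
        = (Finset.univ.filter (fun x : ZMod (p^(s+2)) => p ∣ x.val ∧ H x = zb.1))
          ×ˢ (Finset.univ.filter (fun x : ZMod (p^(s+2)) => p ∣ x.val ∧ H x = zb.2)) := by
      ext z
      simp only [Finset.mem_filter, Finset.mem_product, Finset.mem_univ, true_and]
    rw [hfeq, hprod, Finset.card_product, hHdef]
    rw [coordFiber hp s zb.1, coordFiber hp s zb.2]
  rw [Finset.sum_congr rfl hfib, Finset.sum_const, smul_eq_mul, mul_comm]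
  ring

end Descent

section Main

variable {p : ℕ}

/-- The value `#sols(p^R·unit) / p^(r-1)`. -/
def fcount (p R : ℕ) : ℕ := R/2 * c1 p + (if R % 2 = 0 then c0 p else c1 p)

lemma fcount_step (S : ℕ) : fcount p (S+2) = c1 p + fcount p S := by
  unfold fcount
  have h1 : (S+2)/2 = S/2 + 1 := by omega
  have h2 : (S+2) % 2 = S % 2 := by omega
  rw [h1, h2]
  ring

theorem sols_card_main (hp : p.Prime) [Fact p.Prime] (hp2 : p ≠ 2) :
    ∀ R r : ℕ, R + 1 ≤ r → ∀ w : ZMod (p^r), IsUnit w →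
    letI : NeZero (p^r) := ⟨pow_ne_zero r hp.pos.ne'⟩
    (sols (p^r) ((p : ZMod (p^r))^R * w)).card = fcount p R * p^(r-1) := by
  letI : NeZero p := ⟨hp.pos.ne'⟩
  intro R
  induction R using Nat.strong_induction_on with
  | _ R IH =>
  match R with
  | 0 =>
    intro r hr w hw
    letI : NeZero (p^r) := ⟨pow_ne_zero r hp.pos.ne'⟩
    obtain ⟨k, rfl⟩ : ∃ k, r = k + 1 := ⟨r - 1, by omega⟩
    have h0 : ((p : ZMod (p^(k+1))))^0 * w = w := by ring
    rw [h0, sols_card_split p, isols_unit_empty hp (by omega) w hw, Finset.card_empty,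
      add_zero, psols_tower hp hp2 k w]
    have hne : ((w.val : ℕ) : ZMod p) ≠ 0 := by
      rw [Ne, ZMod.natCast_eq_zero_iff]
      rw [unit_iff_not_dvd hp (by omega)] at hw
      exact hw
    rw [psols_one_ne hp2 hne]
    unfold fcount
    norm_num [mul_comm]
  | 1 =>
    intro r hr w hw
    letI : NeZero (p^r) := ⟨pow_ne_zero r hp.pos.ne'⟩
    obtain ⟨k, rfl⟩ : ∃ k, r = k + 1 := ⟨r - 1, by omega⟩
    have h0 : ((p : ZMod (p^(k+1))))^1 * w = (p : ZMod (p^(k+1))) * w := by ring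
    rw [h0, sols_card_split p, isols_pw_empty hp (by omega) w hw, Finset.card_empty,
      add_zero, psols_tower hp hp2 k _]
    have hz : ((((p : ZMod (p^(k+1))) * w).val : ℕ) : ZMod p) = 0 := by
      rw [ZMod.natCast_eq_zero_iff]
      exact p_dvd_val_of_eq_mul hp (by omega) _ w rfl
    rw [hz, psols_one_zero hp2]
    unfold fcount
    norm_num [mul_comm]
  | (S+2) =>
    intro r hr w hw
    letI : NeZero (p^r) := ⟨pow_ne_zero r hp.pos.ne'⟩
    obtain ⟨s, rfl⟩ : ∃ s, r = s + 2 := ⟨r - 2, by omega⟩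
    letI : NeZero (p^s) := ⟨pow_ne_zero s hp.pos.ne'⟩
    have hs1 : 1 ≤ s := by omega
    set t : ZMod (p^(s+2)) := (p : ZMod (p^(s+2)))^(S+2) * w with htdef
    have hsplit2 : t = (p : ZMod (p^(s+2)))^2 * ((p : ZMod (p^(s+2)))^S * w) := by
      rw [htdef]; ring
    rw [sols_card_split p t]
    -- primitive part
    have hppart : (psols p (p^(s+2)) t).card = p^(s+1) * c1 p := by
      have := psols_tower hp hp2 (s+1) t
      rw [this]
      have hz : ((t.val : ℕ) : ZMod p) = 0 := by
        rw [ZMod.natCast_eq_zero_iff]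
        refine p_dvd_val_of_eq_mul hp (by omega) t ((p : ZMod (p^(s+2)))^(S+1) * w) ?_
        rw [htdef]; ring
      rw [hz, psols_one_zero hp2]
    -- imprimitive part
    set φ' := ZMod.castHom (pow_dvd_pow p (by omega : s ≤ s+2)) (ZMod (p^s)) with hφ'def
    have hipart : (isols p (p^(s+2)) t).card = p^2 * (fcount p S * p^(s-1)) := by
      rw [hsplit2, isols_descent hp ((p : ZMod (p^(s+2)))^S * w)]
      have hcast : φ' ((p : ZMod (p^(s+2)))^S * w) = (p : ZMod (p^s))^S * φ' w := by
        rw [map_mul, map_pow, map_natCast]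
      rw [hcast, IH S (by omega) s (by omega) (φ' w) (hw.map φ')]
    rw [hppart, hipart]
    have hpow : p^2 * p^(s-1) = p^(s+1) := by
      rw [← pow_add]
      congr 1
      omega
    have hstep : fcount p (S+2) = c1 p + fcount p S := fcount_step S
    have hr1 : s + 2 - 1 = s + 1 := by omega
    rw [hstep, hr1]
    calc p^(s+1) * c1 p + p^2 * (fcount p S * p^(s-1))
        = c1 p * p^(s+1) + fcount p S * (p^2 * p^(s-1)) := by ring
      _ = c1 p * p^(s+1) + fcount p S * p^(s+1) := by rw [hpow]
      _ = (c1 p + fcount p S) * p^(s+1) := by ring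

end Main

section Quaternary

lemma quat_card_sum {p : ℕ} (hp : p.Prime) (r : ℕ) (d₃ d₄ : ℕ) (m : ℤ) :
    letI : NeZero (p^r) := ⟨pow_ne_zero r hp.pos.ne'⟩
    quaternaryLocalCount p r d₃ d₄ m
      = ∑ z : ZMod (p^r) × ZMod (p^r),
          (sols (p^r) ((m : ZMod (p^r)) - (d₃ : ZMod (p^r))^2 * z.1^2
            - (d₄ : ZMod (p^r))^2 * z.2^2)).card := by
  letI : NeZero (p^r) := ⟨pow_ne_zero r hp.pos.ne'⟩
  classical
  rw [quaternaryLocalCount, Nat.card_eq_fintype_card, Fintype.card_subtype]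
  have hmap : ∀ v ∈ Finset.univ.filter (fun v : Fin 4 → ZMod (p^r) =>
        v 0^2 + v 1^2 + (d₃ : ZMod (p^r))^2 * v 2^2 + (d₄ : ZMod (p^r))^2 * v 3^2
          = (m : ZMod (p^r))),
      ((v 2, v 3) : ZMod (p^r) × ZMod (p^r)) ∈ (Finset.univ : Finset (ZMod (p^r) × ZMod (p^r))) :=
    fun _ _ => Finset.mem_univ _
  rw [Finset.card_eq_sum_card_fiberwise hmap]
  apply Finset.sum_congr rfl
  intro z _
  refine Finset.card_bij' (fun v _ => (v 0, v 1)) (fun w _ => ![w.1, w.2, z.1, z.2]) ?_ ?_ ?_ ?_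
  · intro v hv
    obtain ⟨hvP, hpair⟩ := Finset.mem_filter.mp hv
    have hPv := (Finset.mem_filter.mp hvP).2
    have h2 : v 2 = z.1 := congrArg Prod.fst hpair
    have h3 : v 3 = z.2 := congrArg Prod.snd hpair
    rw [mem_sols]
    simp only
    linear_combination hPv - (d₃ : ZMod (p^r))^2*(v 2 + z.1)*h2
      - (d₄ : ZMod (p^r))^2*(v 3 + z.2)*h3
  · intro w hw
    rw [mem_sols] at hw
    refine Finset.mem_filter.mpr ⟨Finset.mem_filter.mpr ⟨Finset.mem_univ _, ?_⟩, ?_⟩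
    · show w.1^2 + w.2^2 + (d₃ : ZMod (p^r))^2 * z.1^2 + (d₄ : ZMod (p^r))^2 * z.2^2
        = (m : ZMod (p^r))
      linear_combination hw
    · show ((z.1, z.2) : ZMod (p^r) × ZMod (p^r)) = z
      exact Prod.ext rfl rfl
  · intro v hv
    obtain ⟨-, hpair⟩ := Finset.mem_filter.mp hv
    have h2 : v 2 = z.1 := congrArg Prod.fst hpair
    have h3 : v 3 = z.2 := congrArg Prod.snd hpair
    dsimp only
    funext i
    fin_cases i
    · rfl
    · rfl
    · exact h2.symm
    · exact h3.symm
  · intro w _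
    exact Prod.ext rfl rfl

lemma quat_card_total {p : ℕ} (hp : p.Prime) [Fact p.Prime] (hp2 : p ≠ 2)
    (α₃ α₄ d₃' d₄' R m' : ℕ)
    (hpd₃' : ¬ p ∣ d₃') (hpd₄' : ¬ p ∣ d₄') (hα : α₃ ≤ α₄)
    (hpm' : ¬ p ∣ m') (hR : R < 2 * α₃)
    (r : ℕ) (hr : R + 1 ≤ r) :
    quaternaryLocalCount p r (p ^ α₃ * d₃') (p ^ α₄ * d₄') ((p : ℤ) ^ R * m')
      = p^(2*r) * (fcount p R * p^(r-1)) := by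
  letI : NeZero (p^r) := ⟨pow_ne_zero r hp.pos.ne'⟩
  rw [quat_card_sum hp r]
  have hterm : ∀ z : ZMod (p^r) × ZMod (p^r),
      (sols (p^r) ((((p : ℤ)^R * m' : ℤ) : ZMod (p^r))
        - ((p^α₃ * d₃' : ℕ) : ZMod (p^r))^2 * z.1^2
        - ((p^α₄ * d₄' : ℕ) : ZMod (p^r))^2 * z.2^2)).card = fcount p R * p^(r-1) := by
    intro z
    set C : ZMod (p^r) := (p : ZMod (p^r))^(2*α₃ - R - 1) *
      ((d₃' : ZMod (p^r))^2 * z.1^2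
        + (p : ZMod (p^r))^(2*(α₄-α₃)) * (d₄' : ZMod (p^r))^2 * z.2^2) with hC
    set w : ZMod (p^r) := (m' : ZMod (p^r)) - (p : ZMod (p^r)) * C with hw
    have e1 : (p : ZMod (p^r))^R * ((p : ZMod (p^r)) * (p : ZMod (p^r))^(2*α₃ - R - 1))
        = (p : ZMod (p^r))^(2*α₃) := by
      rw [← pow_succ', ← pow_add]
      congr 1
      omega
    have e2 : (p : ZMod (p^r))^R * ((p : ZMod (p^r)) * (p : ZMod (p^r))^(2*α₃ - R - 1))
        * (p : ZMod (p^r))^(2*(α₄-α₃)) = (p : ZMod (p^r))^(2*α₄) := by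
      rw [← pow_succ', ← pow_add, ← pow_add]
      congr 1
      omega
    have e3 : ((p : ZMod (p^r))^α₃)^2 = (p : ZMod (p^r))^(2*α₃) := by
      rw [← pow_mul]
      congr 1
      omega
    have e4 : ((p : ZMod (p^r))^α₄)^2 = (p : ZMod (p^r))^(2*α₄) := by
      rw [← pow_mul]
      congr 1
      omega
    have ht : (((p : ℤ)^R * m' : ℤ) : ZMod (p^r))
        - ((p^α₃ * d₃' : ℕ) : ZMod (p^r))^2 * z.1^2
        - ((p^α₄ * d₄' : ℕ) : ZMod (p^r))^2 * z.2^2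
        = (p : ZMod (p^r))^R * w := by
      rw [hw, hC]
      push_cast
      linear_combination ((d₃' : ZMod (p^r))^2 * z.1^2) * e1
        + ((d₄' : ZMod (p^r))^2 * z.2^2) * e2
        - ((d₃' : ZMod (p^r))^2 * z.1^2) * e3
        - ((d₄' : ZMod (p^r))^2 * z.2^2) * e4
    have hwu : IsUnit w := by
      rw [unit_iff_not_dvd hp (by omega : 0 < r)]
      intro hdvd
      have hm'eq : ((m' : ℕ) : ZMod (p^r)) = w + (p : ZMod (p^r)) * C := by rw [hw]; ring
      have hpc : p ∣ ((p : ZMod (p^r)) * C).val := p_dvd_val_of_eq_mul hp (by omega) _ C rfl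
      have hd : p ∣ ((m' : ℕ) : ZMod (p^r)).val := by
        rw [hm'eq, ZMod.val_add]
        exact (Nat.dvd_mod_iff (dvd_pow_self p (by omega : r ≠ 0))).mpr (dvd_add hdvd hpc)
      rw [ZMod.val_natCast] at hd
      exact hpm' ((Nat.dvd_mod_iff (dvd_pow_self p (by omega : r ≠ 0))).mp hd)
    rw [ht]
    exact sols_card_main hp hp2 R r hr w hwu
  rw [Finset.sum_congr rfl (fun z _ => hterm z), Finset.sum_const, smul_eq_mul,
    Finset.card_univ, Fintype.card_prod, ZMod.card]
  have hpp : p^r * p^r = p^(2*r) := by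
    rw [← pow_add]
    congr 1
    omega
  rw [hpp]

end Quaternary

section Value

lemma value_eq {p : ℕ} (hp : p.Prime) (hp2 : p ≠ 2) (R : ℕ) (ε : ℝ)
    (hε : ε = if p % 4 = 1 then 1 else -1) :
    (fcount p R : ℝ) / p
      = (if Odd R then
          1 + (1 - (p : ℝ)⁻¹) * (((R / 2 : ℕ) : ℝ) + ε * (((R + 1) / 2 : ℕ) : ℝ)) - (p : ℝ)⁻¹
        else
          1 + (1 - (p : ℝ)⁻¹) * (((R / 2 : ℕ) : ℝ) + ε * (((R + 1) / 2 : ℕ) : ℝ))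
            - ε * (p : ℝ)⁻¹) := by
  have hp3 : 3 ≤ p := by
    have := hp.two_le
    omega
  have hodd : p % 2 = 1 := Nat.odd_iff.mp (hp.odd_of_ne_two hp2)
  have h42 : p % 4 % 2 = p % 2 := Nat.mod_mod_of_dvd p (by norm_num)
  have hp4 : p % 4 = 1 ∨ p % 4 = 3 := by omega
  have hpne : (p : ℝ) ≠ 0 := Nat.cast_ne_zero.mpr (by omega)
  unfold fcount c0 c1
  rcases Nat.even_or_odd R with hR | hR
  · have hR2 : R % 2 = 0 := Nat.even_iff.mp hR
    have hfl : (R + 1) / 2 = R / 2 := by omega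
    rw [if_neg (Nat.not_odd_iff_even.mpr hR), if_pos hR2, hfl]
    rcases hp4 with h4 | h4
    · simp only [hε, h4, reduceIte]
      push_cast [Nat.cast_sub (show 1 ≤ p by omega)]
      field_simp
      try ring
    · simp only [hε, h4, reduceIte]
      push_cast
      field_simp
      try ring
  · have hR2 : R % 2 = 1 := Nat.odd_iff.mp hR
    have hfl : (R + 1) / 2 = R / 2 + 1 := by omega
    rw [if_pos hR, if_neg (by omega : ¬ R % 2 = 0), hfl]
    rcases hp4 with h4 | h4
    · simp only [hε, h4, reduceIte]
      push_cast [Nat.cast_sub (show 1 ≤ p by omega)]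
      field_simp
      try ring
    · simp only [hε, h4, reduceIte]
      push_cast
      field_simp
      try ring

end Value

end QLD
end

/-- **Local density of `x₁² + x₂² + d₃²x₃² + d₄²x₄²` at an odd prime, case `R < 2α₃`.**
Let `p` be an odd prime, `d₃ = p^α₃ d₃′`, `d₄ = p^α₄ d₄′` with `p ∤ d₃′ d₄′` and
`α₃ ≤ α₄`, and `m = p^R m′` with `p ∤ m′`. Set `ε = 1` if `p ≡ 1 (mod 4)` and `ε = −1`
if `p ≡ 3 (mod 4)`. If `R < 2α₃`, then `N_{d₃,d₄}(p^r; m)/p^(3r)` converges, as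
`r → ∞`, to `1 + (1 − p⁻¹)(⌊R/2⌋ + ε⌊(R+1)/2⌋) − p⁻¹` for odd `R`, and to
`1 + (1 − p⁻¹)(⌊R/2⌋ + ε⌊(R+1)/2⌋) − ε p⁻¹` for even `R`. -/
theorem quaternary_local_density_low (p : ℕ) (hp : p.Prime) (hp2 : p ≠ 2)
    (α₃ α₄ d₃' d₄' : ℕ) (hd₃' : 0 < d₃') (hd₄' : 0 < d₄')
    (hpd₃' : ¬ p ∣ d₃') (hpd₄' : ¬ p ∣ d₄') (hα : α₃ ≤ α₄)
    (R m' : ℕ) (hm' : 0 < m') (hpm' : ¬ p ∣ m') (hR : R < 2 * α₃) (ε : ℝ)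
    (hε : ε = if p % 4 = 1 then 1 else -1) :
    Tendsto (fun r : ℕ =>
        (quaternaryLocalCount p r (p ^ α₃ * d₃') (p ^ α₄ * d₄')
            ((p : ℤ) ^ R * m') : ℝ) / (p : ℝ) ^ (3 * r))
      atTop
      (nhds (if Odd R then
          1 + (1 - (p : ℝ)⁻¹) * (((R / 2 : ℕ) : ℝ) + ε * (((R + 1) / 2 : ℕ) : ℝ)) - (p : ℝ)⁻¹
        else
          1 + (1 - (p : ℝ)⁻¹) * (((R / 2 : ℕ) : ℝ) + ε * (((R + 1) / 2 : ℕ) : ℝ))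
            - ε * (p : ℝ)⁻¹)) := by

  haveI : Fact p.Prime := ⟨hp⟩
  apply tendsto_atTop_of_eventually_const (i₀ := R + 1)
  intro r hr
  rw [QLD.quat_card_total hp hp2 α₃ α₄ d₃' d₄' R m' hpd₃' hpd₄' hα hpm' hR r hr,
    ← QLD.value_eq hp hp2 R ε hε]
  have hppos : (0:ℝ) < (p:ℝ) := by
    have := hp.pos
    positivity
  push_cast
  rw [div_eq_div_iff (by positivity) (by positivity)]
  have hexp : (p:ℝ)^(2*r) * (p:ℝ)^(r-1) * (p:ℝ) = (p:ℝ)^(3*r) := by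
    rw [mul_assoc, ← pow_succ, ← pow_add]
    congr 1
    omega
  calc (p:ℝ)^(2*r) * ((QLD.fcount p R : ℝ) * (p:ℝ)^(r-1)) * (p:ℝ)
      = (QLD.fcount p R : ℝ) * ((p:ℝ)^(2*r) * (p:ℝ)^(r-1) * (p:ℝ)) := by ring
    _ = (QLD.fcount p R : ℝ) * (p:ℝ)^(3*r) := by rw [hexp]
end

section
/- Let p be an odd prime and m a positive integer with p ∤ m. Set ε = 1 if p ≡ 1 (mod 4) and ε = −1 if p ≡ 3 (mod 4), and let (m/p) denote the Legendre symbol. Let d₃, d₄ be positive integers such that p divides d₃·d₄ exactly to the first power (p ∣ d₃·d₄ but p² ∤ d₃·d₄). Then there exists a real number L such that the sequence r ↦ N_{1,1}(p^r; m)/p^{3r} converges to L and the sequence r ↦ N_{d₃,d₄}(p^r; m)/p^{3r} converges to ω₁·L, where ω₁ = (1 + ε·(m/p)·p^{−1})/(1 − p^{−2}). -/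
open Filter

namespace QDRAux
open Finset

variable {p : ℕ} [Fact p.Prime]

local notation "F" => ZMod p
local notation "χ" => quadraticChar (ZMod p)

lemma sqrt_count' (hp2 : p ≠ 2) (a : F) :
    ((univ.filter (fun x : F => x ^ 2 = a)).card : ℤ) = χ a + 1 := by
  rw [← quadraticChar_card_sqrts ((ZMod.ringChar_zmod_n p).substr hp2) a]
  congr 1
  simp [Set.toFinset_setOf]

lemma quadChar_inv (hp2 : p ≠ 2) : (quadraticChar (ZMod p))⁻¹ = quadraticChar (ZMod p) := by
  ext a
  rw [MulChar.inv_apply']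
  rcases eq_or_ne (a : F) 0 with h | h
  · simp [h]
  · have h2 : (a : F)⁻¹ ≠ 0 := inv_ne_zero h
    have hm : χ a⁻¹ * χ a = 1 := by
      rw [← map_mul, inv_mul_cancel₀ h, map_one]
    rcases quadraticChar_dichotomy h2 with h3 | h3 <;>
      rcases quadraticChar_dichotomy h with h4 | h4 <;>
      rw [h3, h4] <;> rw [h3, h4] at hm <;> omega

lemma jacobi_self (hp2 : p ≠ 2) : ∑ t : F, χ t * χ (1 - t) = -χ (-1) := by
  have h := jacobiSum_nontrivial_inv (quadraticChar_ne_one ((ZMod.ringChar_zmod_n p).substr hp2))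
  rw [quadChar_inv hp2] at h
  simpa [jacobiSum] using h

lemma conv_ne (hp2 : p ≠ 2) {c : F} (hc : c ≠ 0) : ∑ a : F, χ a * χ (c - a) = -χ (-1) := by
  have h := Fintype.sum_equiv (Equiv.mulLeft₀ c hc)
    (fun t => χ (c * t) * χ (c - c * t)) (fun a => χ a * χ (c - a)) (fun t => rfl)
  rw [← h]
  have : ∀ t : F, χ (c * t) * χ (c - c * t) = (χ c * χ c) * (χ t * χ (1 - t)) := by
    intro t
    have : c - c * t = c * (1 - t) := by ring
    rw [this, map_mul, map_mul]; ring
  simp_rw [this, ← Finset.mul_sum, jacobi_self hp2, ← map_mul]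
  have hcc : c * c ≠ 0 := mul_ne_zero hc hc
  have : χ (c * c) = 1 := by rw [← sq]; exact quadraticChar_sq_one' hc
  rw [this]; ring

lemma conv_zero (hp2 : p ≠ 2) : ∑ a : F, χ a * χ ((0 : F) - a) = χ (-1) * (p - 1) := by
  have : ∀ a : F, χ a * χ ((0:F) - a) = χ (-1) * (χ a * χ a) := by
    intro a
    have : (0:F) - a = -1 * a := by ring
    rw [this, map_mul]; ring
  simp_rw [this, ← Finset.mul_sum]
  congr 1
  have : ∀ a : F, χ a * χ a = if a = 0 then 0 else 1 := by
    intro a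
    split_ifs with h
    · simp [h]
    · rw [← sq]; exact quadraticChar_sq_one h
  simp_rw [this]
  have h1 : ∀ a : F, (if a = 0 then (0:ℤ) else 1) = 1 - (if a = 0 then (1:ℤ) else 0) := by
    intro a; split_ifs <;> ring
  simp_rw [h1, Finset.sum_sub_distrib, Finset.sum_const, Finset.sum_ite_eq' univ (0:F)
    (fun _ => (1:ℤ)), Finset.mem_univ, if_true, Finset.card_univ, ZMod.card]
  push_cast; ring

lemma regroup_sq (hp2 : p ≠ 2) (h : F → ℤ) :
    ∑ x : F, h (x ^ 2) = ∑ a : F, (χ a + 1) * h a := by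
  rw [← Finset.sum_fiberwise_of_maps_to (g := fun x : F => x ^ 2) (t := univ)
    (fun x _ => mem_univ _) (fun x => h (x ^ 2))]
  refine Finset.sum_congr rfl fun a _ => ?_
  rw [Finset.sum_congr rfl (fun x hx => by
    rw [(Finset.mem_filter.1 hx).2])]
  rw [Finset.sum_const, nsmul_eq_mul, ← sqrt_count' hp2 a]

lemma sum_chi_shift (hp2 : p ≠ 2) (c : F) : ∑ x : F, χ (c - x) = 0 := by
  rw [Fintype.sum_equiv (Equiv.subLeft c) _ (fun a => χ a) (fun x => by simp)]
  exact quadraticChar_sum_zero ((ZMod.ringChar_zmod_n p).substr hp2)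

lemma S2_card (hp2 : p ≠ 2) (c : F) :
    ((Nat.card {z : F × F // z.1 ^ 2 + z.2 ^ 2 = c} : ℤ)) =
      p + (if c = 0 then (p - 1) * χ (-1) else -χ (-1)) := by
  rw [Nat.card_eq_fintype_card, Fintype.card_congr
    (Equiv.subtypeProdEquivSigmaSubtype (fun x y : F => x ^ 2 + y ^ 2 = c)),
    Fintype.card_sigma]
  have h1 : ∀ x : F, Fintype.card {y : F // x ^ 2 + y ^ 2 = c} =
      (univ.filter (fun y : F => y ^ 2 = c - x ^ 2)).card := by
    intro x
    rw [Fintype.card_subtype]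
    congr 1
    apply Finset.filter_congr
    intro y _
    constructor
    · intro h; rw [eq_sub_iff_add_eq, add_comm]; exact h
    · intro h; rw [h]; ring
  push_cast [h1]
  have h2 : ∀ x : F, ((univ.filter (fun y : F => y ^ 2 = c - x ^ 2)).card : ℤ)
      = χ (c - x ^ 2) + 1 := fun x => sqrt_count' hp2 _
  rw [Finset.sum_congr rfl (fun x _ => h2 x), Finset.sum_add_distrib, Finset.sum_const,
    Finset.card_univ, ZMod.card]
  have h3 : ∑ x : F, χ (c - x ^ 2) = ∑ a : F, (χ a + 1) * χ (c - a) :=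
    regroup_sq hp2 (fun a => χ (c - a))
  have h4 : ∑ a : F, (χ a + 1) * χ (c - a)
      = (∑ a : F, χ a * χ (c - a)) + ∑ a : F, χ (c - a) := by
    rw [← Finset.sum_add_distrib]; congr 1; ext a; ring
  rw [h3, h4, sum_chi_shift hp2]
  rcases eq_or_ne c 0 with hc | hc
  · rw [hc, if_pos rfl, conv_zero hp2]; push_cast; ring
  · rw [if_neg hc, conv_ne hp2 hc]; push_cast; ring

def e4 {α : Type*} : (Fin 4 → α) ≃ (α × α) × (α × α) where
  toFun v := ((v 2, v 3), (v 0, v 1))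
  invFun z := ![z.2.1, z.2.2, z.1.1, z.1.2]
  left_inv v := by
    funext i
    fin_cases i <;> rfl
  right_inv z := rfl

noncomputable def qc (N e₂ e₃ m : ℕ) : ℕ :=
  Nat.card {v : Fin 4 → ZMod N //
    v 0 ^ 2 + v 1 ^ 2 + (e₂ : ZMod N) * v 2 ^ 2 + (e₃ : ZMod N) * v 3 ^ 2 = (m : ZMod N)}

lemma qc_p_aux (hp2 : p ≠ 2) (e₂ e₃ m : ℕ) (a b : F) (h₂ : (e₂ : F) = a ^ 2)
    (h₃ : (e₃ : F) = b ^ 2) :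
    (qc p e₂ e₃ m : ℤ) = p ^ 2 * (p - χ (-1)) + p * χ (-1) *
      (Nat.card {z : F × F // a ^ 2 * z.1 ^ 2 + b ^ 2 * z.2 ^ 2 = (m : F)} : ℤ) := by
  have key : qc p e₂ e₃ m =
      ∑ w : F × F, Nat.card {u : F × F //
        u.1 ^ 2 + u.2 ^ 2 = (m : F) - a ^ 2 * w.1 ^ 2 - b ^ 2 * w.2 ^ 2} := by
    rw [qc, Nat.card_eq_fintype_card]
    rw [Fintype.card_congr ((Equiv.subtypeEquiv e4 (fun v => by
      show _ ↔ ((v 0 : F) ^ 2 + v 1 ^ 2 = (m : F) - a ^ 2 * (v 2) ^ 2 - b ^ 2 * (v 3) ^ 2)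
      rw [h₂, h₃]
      constructor
      · intro h; rw [← h]; ring
      · intro h; rw [eq_comm, sub_sub, sub_eq_iff_eq_add] at h; rw [h]; ring)).trans
      (Equiv.subtypeProdEquivSigmaSubtype
        (fun w u : F × F => u.1 ^ 2 + u.2 ^ 2 = (m : F) - a ^ 2 * w.1 ^ 2 - b ^ 2 * w.2 ^ 2)).symm.symm)]
    rw [Fintype.card_sigma]
    exact Finset.sum_congr rfl fun w _ => (Nat.card_eq_fintype_card).symm
  rw [key]
  push_cast
  rw [Finset.sum_congr rfl (fun w _ => S2_card hp2 ((m : F) - a ^ 2 * w.1 ^ 2 - b ^ 2 * w.2 ^ 2))]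
  have step : ∀ w : F × F, ((p : ℤ) + (if ((m : F) - a ^ 2 * w.1 ^ 2 - b ^ 2 * w.2 ^ 2) = 0
        then ((p : ℤ) - 1) * χ (-1) else -χ (-1)))
      = ((p : ℤ) - χ (-1)) + (if a ^ 2 * w.1 ^ 2 + b ^ 2 * w.2 ^ 2 = (m : F)
        then (p : ℤ) * χ (-1) else 0) := by
    intro w
    have hiff : ((m : F) - a ^ 2 * w.1 ^ 2 - b ^ 2 * w.2 ^ 2 = 0)
        ↔ (a ^ 2 * w.1 ^ 2 + b ^ 2 * w.2 ^ 2 = (m : F)) := by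
      rw [sub_sub, sub_eq_zero, eq_comm]
    split_ifs with h1 h2 h2
    · ring
    · exact absurd (hiff.1 h1) h2
    · exact absurd (hiff.2 h2) h1
    · ring
  rw [Finset.sum_congr rfl (fun w _ => step w), Finset.sum_add_distrib, Finset.sum_const,
    ← Finset.sum_filter, Finset.sum_const, Finset.card_univ, Fintype.card_prod, ZMod.card]
  rw [Nat.card_eq_fintype_card, Fintype.card_subtype]
  push_cast
  ring

lemma T_both (hp2 : p ≠ 2) {a b : F} (ha : a ≠ 0) (hb : b ≠ 0) {m : ℕ} (hm : (m : F) ≠ 0) :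
    (Nat.card {z : F × F // a ^ 2 * z.1 ^ 2 + b ^ 2 * z.2 ^ 2 = (m : F)} : ℤ)
      = p - χ (-1) := by
  have e := Equiv.subtypeEquiv (p := fun z : F × F => a ^ 2 * z.1 ^ 2 + b ^ 2 * z.2 ^ 2 = (m : F))
    (q := fun u : F × F => u.1 ^ 2 + u.2 ^ 2 = (m : F))
    (Equiv.prodCongr (Equiv.mulLeft₀ a ha) (Equiv.mulLeft₀ b hb))
    (fun z => by
      show _ ↔ (a * z.1) ^ 2 + (b * z.2) ^ 2 = (m : F)
      rw [mul_pow, mul_pow])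
  rw [Nat.card_congr e, S2_card hp2, if_neg hm]
  ring

lemma T_right (hp2 : p ≠ 2) {a : F} (ha : a ≠ 0) (m : ℕ) :
    (Nat.card {z : F × F // a ^ 2 * z.1 ^ 2 + (0:F) ^ 2 * z.2 ^ 2 = (m : F)} : ℤ)
      = (χ (m : F) + 1) * p := by
  have e1 : {z : F × F // a ^ 2 * z.1 ^ 2 + (0:F) ^ 2 * z.2 ^ 2 = (m : F)}
      ≃ {z : F × F // z.1 ^ 2 = (m : F)} :=
    Equiv.subtypeEquiv (Equiv.prodCongr (Equiv.mulLeft₀ a ha) (Equiv.refl F)) (fun z => by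
      show _ ↔ (a * z.1) ^ 2 = (m : F)
      rw [mul_pow]
      constructor
      · intro h; rw [← h]; ring
      · intro h; rw [h]; ring)
  rw [Nat.card_congr (e1.trans (Equiv.prodSubtypeFstEquivSubtypeProd (p := fun x : F => x ^ 2 = (m : F)) (β := F)))]
  push_cast [Nat.card_eq_fintype_card, Fintype.card_prod, Fintype.card_subtype, ZMod.card]
  rw [sqrt_count' hp2]

lemma T_left (hp2 : p ≠ 2) {b : F} (hb : b ≠ 0) (m : ℕ) :
    (Nat.card {z : F × F // (0:F) ^ 2 * z.1 ^ 2 + b ^ 2 * z.2 ^ 2 = (m : F)} : ℤ)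
      = (χ (m : F) + 1) * p := by
  have e0 : {z : F × F // (0:F) ^ 2 * z.1 ^ 2 + b ^ 2 * z.2 ^ 2 = (m : F)}
      ≃ {z : F × F // b ^ 2 * z.1 ^ 2 + (0:F) ^ 2 * z.2 ^ 2 = (m : F)} :=
    Equiv.subtypeEquiv (Equiv.prodComm F F) (fun z => by
      show _ ↔ b ^ 2 * z.2 ^ 2 + (0:F) ^ 2 * z.1 ^ 2 = (m : F)
      constructor
      · intro h; rw [← h]; ring
      · intro h; rw [← h]; ring)
  rw [Nat.card_congr e0, T_right hp2 hb m]

lemma neg_one_ne_zero_F (hp2 : p ≠ 2) : (-1 : F) ≠ 0 := by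
  have : Nontrivial F := ZMod.nontrivial_iff.2 (Fact.out (p := p.Prime)).one_lt.ne'
  exact neg_ne_zero.2 one_ne_zero

lemma chi_neg_one_sq (hp2 : p ≠ 2) : (χ (-1)) ^ 2 = 1 :=
  quadraticChar_sq_one (neg_one_ne_zero_F hp2)

lemma qc_p_unit (hp2 : p ≠ 2) {e₂ e₃ m : ℕ} {a b : F} (ha : a ≠ 0) (hb : b ≠ 0)
    (h₂ : (e₂ : F) = a ^ 2) (h₃ : (e₃ : F) = b ^ 2) (hm : (m : F) ≠ 0) :
    (qc p e₂ e₃ m : ℤ) = p ^ 3 - p := by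
  rw [qc_p_aux hp2 e₂ e₃ m a b h₂ h₃, T_both hp2 ha hb hm]
  have := chi_neg_one_sq hp2
  nlinarith [this]

lemma qc_p_deg (hp2 : p ≠ 2) {e₂ e₃ m : ℕ} {a b : F} (h₂ : (e₂ : F) = a ^ 2)
    (h₃ : (e₃ : F) = b ^ 2) (hab : (a = 0 ∧ b ≠ 0) ∨ (a ≠ 0 ∧ b = 0)) :
    (qc p e₂ e₃ m : ℤ) = p ^ 3 + χ (-1) * χ (m : F) * p ^ 2 := by
  rw [qc_p_aux hp2 e₂ e₃ m a b h₂ h₃]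
  rcases hab with ⟨ha, hb⟩ | ⟨ha, hb⟩
  · rw [ha, T_left hp2 hb m]; ring
  · rw [hb, T_right hp2 ha m]; ring

lemma lin_count (A : Fin 4 → F) (i₀ : Fin 4) (h : A i₀ ≠ 0) (s : F) :
    Nat.card {w : Fin 4 → F // ∑ i, A i * w i = s} = p ^ 3 := by
  set φ : (Fin 4 → F) →+ F :=
    { toFun := fun w => ∑ i, A i * w i
      map_zero' := by simp
      map_add' := by
        intro x y
        simp [mul_add, Finset.sum_add_distrib] } with hφ
  have hfib : ∀ t : F, Nat.card {w : Fin 4 → F // φ w = t} = Nat.card {w : Fin 4 → F // φ w = 0} := by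
    intro t
    set w₀ : Fin 4 → F := Pi.single i₀ ((A i₀)⁻¹ * t) with hw₀def
    have hw₀ : φ w₀ = t := by
      simp only [hφ, AddMonoidHom.coe_mk, ZeroHom.coe_mk, hw₀def]
      rw [Finset.sum_eq_single i₀]
      · rw [Pi.single_eq_same, ← mul_assoc, mul_inv_cancel₀ h, one_mul]
      · intro b _ hb
        rw [Pi.single_eq_of_ne hb, mul_zero]
      · intro hb
        exact absurd (Finset.mem_univ i₀) hb
    exact Nat.card_congr
      ⟨fun w => ⟨w.1 - w₀, by rw [map_sub, w.2, hw₀, sub_self]⟩,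
       fun u => ⟨u.1 + w₀, by rw [map_add, u.2, hw₀, zero_add]⟩,
       fun w => by ext; simp, fun u => by ext; simp⟩
  have htot : ∑ t : F, Nat.card {w : Fin 4 → F // φ w = t} = p ^ 4 := by
    have := Fintype.card_congr (Equiv.sigmaFiberEquiv φ)
    rw [Fintype.card_sigma] at this
    simp_rw [Nat.card_eq_fintype_card]
    rw [this]
    rw [Fintype.card_fun, ZMod.card, Fintype.card_fin]
  rw [Finset.sum_congr rfl (fun t _ => hfib t), Finset.sum_const, Finset.card_univ, ZMod.card,
    smul_eq_mul] at htot
  have hp0 : 0 < p := (Fact.out (p := p.Prime)).pos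
  have : Nat.card {w : Fin 4 → F // φ w = 0} = p ^ 3 := by
    have h4 : p ^ 4 = p * p ^ 3 := by ring
    exact Nat.eq_of_mul_eq_mul_left hp0 (htot.trans h4)
  rw [show {w : Fin 4 → F // ∑ i, A i * w i = s} = {w : Fin 4 → F // φ w = s} from rfl,
    hfib s, this]

lemma hensel_step (hp2 : p ≠ 2) (e₂ e₃ m : ℕ) (hm : ¬ p ∣ m) {r : ℕ} (hr : 1 ≤ r) :
    qc (p ^ (r + 1)) e₂ e₃ m = p ^ 3 * qc (p ^ r) e₂ e₃ m := by
  have hp : p.Prime := Fact.out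
  have hp0 : p ≠ 0 := hp.ne_zero
  haveI : NeZero (p ^ r) := ⟨pow_ne_zero _ hp0⟩
  haveI : NeZero (p ^ (r + 1)) := ⟨pow_ne_zero _ hp0⟩
  let π : ZMod (p ^ (r + 1)) →+* ZMod (p ^ r) := ZMod.castHom (pow_dvd_pow p (Nat.le_succ r)) _
  let ρ : ZMod (p ^ (r + 1)) →+* ZMod p := ZMod.castHom (dvd_pow_self p (Nat.succ_ne_zero r)) _
  let ρ' : ZMod (p ^ r) →+* ZMod p := ZMod.castHom (dvd_pow_self p (Nat.one_le_iff_ne_zero.mp hr)) _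
  -- basic vanishing facts
  have hPR : ((p : ZMod (p ^ (r + 1)))) ^ (r + 1) = 0 := by
    have := ZMod.natCast_self (p ^ (r + 1))
    rwa [Nat.cast_pow] at this
  have hPR' : ((p : ZMod (p ^ r))) ^ r = 0 := by
    have := ZMod.natCast_self (p ^ r)
    rwa [Nat.cast_pow] at this
  have hsq : (((p : ZMod (p ^ (r + 1)))) ^ r) ^ 2 = 0 := by
    rw [← pow_mul, show r * 2 = (r + 1) + (r - 1) by omega, pow_add (p : ZMod (p ^ (r + 1))), hPR, zero_mul]
  -- reduction of natCast-val
  have hvalR : ∀ z : ZMod (p ^ (r + 1)), ((z.val : ℕ) : ZMod (p ^ (r + 1))) = z := fun z => ZMod.natCast_rightInverse z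
  have hvalR' : ∀ z : ZMod (p ^ r), ((z.val : ℕ) : ZMod (p ^ r)) = z := fun z => ZMod.natCast_rightInverse z
  have hvalF : ∀ z : ZMod p, ((z.val : ℕ) : ZMod p) = z := fun z => ZMod.natCast_rightInverse z
  have hρ : ∀ z : ZMod (p ^ (r + 1)), ρ z = ((z.val : ℕ) : ZMod p) := by
    intro z
    conv_lhs => rw [← hvalR z]
    rw [map_natCast]
  have hπ : ∀ z : ZMod (p ^ (r + 1)), π z = ((z.val : ℕ) : ZMod (p ^ r)) := by
    intro z
    conv_lhs => rw [← hvalR z]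
    rw [map_natCast]
  have hρ' : ∀ z : ZMod (p ^ r), ρ' z = ((z.val : ℕ) : ZMod p) := by
    intro z
    conv_lhs => rw [← hvalR' z]
    rw [map_natCast]
  -- the digit lemma
  have digit : ∀ x y : ZMod (p ^ (r + 1)), ρ x = ρ y → (p : ZMod (p ^ (r + 1))) ^ r * x = (p : ZMod (p ^ (r + 1))) ^ r * y := by
    have key : ∀ z : ZMod (p ^ (r + 1)), ρ z = 0 → (p : ZMod (p ^ (r + 1))) ^ r * z = 0 := by
      intro z hz
      rw [hρ] at hz
      obtain ⟨k, hk⟩ : p ∣ z.val := (ZMod.natCast_eq_zero_iff _ _).1 hz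
      calc (p : ZMod (p ^ (r + 1))) ^ r * z = (p : ZMod (p ^ (r + 1))) ^ r * ((z.val : ℕ) : ZMod (p ^ (r + 1))) := by rw [hvalR z]
        _ = ((p ^ r * z.val : ℕ) : ZMod (p ^ (r + 1))) := by push_cast; ring
        _ = ((p ^ (r + 1) * k : ℕ) : ZMod (p ^ (r + 1))) := by rw [hk]; congr 1; rw [pow_succ]; ring
        _ = 0 := by rw [Nat.cast_mul, Nat.cast_pow, ← Nat.cast_pow, ZMod.natCast_self, zero_mul]
    intro x y hxy
    have h0 := key (x - y) (by rw [map_sub, hxy, sub_self])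
    linear_combination h0
  -- injectivity of the digit map
  have ψinj : ∀ u v : ZMod p, (p : ZMod (p ^ (r + 1))) ^ r * ((u.val : ℕ) : ZMod (p ^ (r + 1))) = (p : ZMod (p ^ (r + 1))) ^ r * ((v.val : ℕ) : ZMod (p ^ (r + 1)))
      → u = v := by
    intro u v huv
    have h1 : ((p ^ r * u.val : ℕ) : ZMod (p ^ (r + 1))) = ((p ^ r * v.val : ℕ) : ZMod (p ^ (r + 1))) := by
      push_cast
      linear_combination huv
    rw [ZMod.natCast_eq_natCast_iff] at h1
    have hprp : 0 < p ^ r := pow_pos hp.pos r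
    have hu : p ^ r * u.val < p ^ (r + 1) := by
      rw [pow_succ]
      exact Nat.mul_lt_mul_of_le_of_lt (le_refl _) (ZMod.val_lt u) hprp
    have hv : p ^ r * v.val < p ^ (r + 1) := by
      rw [pow_succ]
      exact Nat.mul_lt_mul_of_le_of_lt (le_refl _) (ZMod.val_lt v) hprp
    have h2 : p ^ r * u.val = p ^ r * v.val := by
      have := h1
      unfold Nat.ModEq at this
      rwa [Nat.mod_eq_of_lt hu, Nat.mod_eq_of_lt hv] at this
    exact ZMod.val_injective p (Nat.eq_of_mul_eq_mul_left hprp h2)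
  -- surjectivity onto the kernel of π
  have ψsurj : ∀ t : ZMod (p ^ (r + 1)), π t = 0 → ∃ u : ZMod p, (p : ZMod (p ^ (r + 1))) ^ r * ((u.val : ℕ) : ZMod (p ^ (r + 1))) = t := by
    intro t ht
    rw [hπ] at ht
    obtain ⟨k, hk⟩ : p ^ r ∣ t.val := (ZMod.natCast_eq_zero_iff _ _).1 ht
    refine ⟨(k : ZMod p), ?_⟩
    have e1 : (p : ZMod (p ^ (r + 1))) ^ r * ((((k : ZMod p)).val : ℕ) : ZMod (p ^ (r + 1))) = (p : ZMod (p ^ (r + 1))) ^ r * ((k : ℕ) : ZMod (p ^ (r + 1))) :=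
      digit _ _ (by rw [map_natCast, map_natCast, ZMod.val_natCast, ZMod.natCast_mod])
    rw [e1]
    calc (p : ZMod (p ^ (r + 1))) ^ r * ((k : ℕ) : ZMod (p ^ (r + 1))) = ((p ^ r * k : ℕ) : ZMod (p ^ (r + 1))) := by push_cast; ring
      _ = ((t.val : ℕ) : ZMod (p ^ (r + 1))) := by rw [← hk]
      _ = t := hvalR t
  classical
  -- the component bijection
  set μ : ZMod (p ^ r) × ZMod p → ZMod (p ^ (r + 1)) := fun z => ((z.1.val : ℕ) : ZMod (p ^ (r + 1))) + (p : ZMod (p ^ (r + 1))) ^ r * ((z.2.val : ℕ) : ZMod (p ^ (r + 1))) with hμ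
  have hμinj : Function.Injective μ := by
    rintro ⟨y1, w1⟩ ⟨y2, w2⟩ h
    simp only [hμ] at h
    have h1 : y1 = y2 := by
      have h2 := congrArg π h
      simp only [map_add, map_mul, map_pow, map_natCast] at h2
      rw [hPR'] at h2
      rw [hvalR' y1, hvalR' y2] at h2
      simpa using h2
    subst h1
    have h3 : (p : ZMod (p ^ (r + 1))) ^ r * ((w1.val : ℕ) : ZMod (p ^ (r + 1))) = (p : ZMod (p ^ (r + 1))) ^ r * ((w2.val : ℕ) : ZMod (p ^ (r + 1))) :=
      add_left_cancel h
    rw [ψinj _ _ h3]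
  have hμbij : Function.Bijective μ := by
    rw [Fintype.bijective_iff_injective_and_card]
    refine ⟨hμinj, ?_⟩
    rw [Fintype.card_prod]
    show Fintype.card (ZMod (p ^ r)) * Fintype.card (ZMod p) = Fintype.card (ZMod (p ^ (r+1)))
    rw [ZMod.card, ZMod.card, ZMod.card, ← pow_succ]
  set ζ : ZMod (p ^ r) × ZMod p ≃ ZMod (p ^ (r + 1)) := Equiv.ofBijective μ hμbij with hζ
  set Φ : ((Fin 4 → ZMod (p ^ r)) × (Fin 4 → ZMod p)) ≃ (Fin 4 → ZMod (p ^ (r + 1))) :=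
    (Equiv.arrowProdEquivProdArrow (Fin 4) (fun _ => ZMod (p ^ r)) (fun _ => ZMod p)).symm.trans
      (Equiv.arrowCongr (Equiv.refl (Fin 4)) ζ) with hΦdef
  have hΦ : ∀ (y : Fin 4 → ZMod (p ^ r)) (w : Fin 4 → ZMod p) (i : Fin 4),
      Φ (y, w) i = (((y i).val : ℕ) : ZMod (p ^ (r + 1))) + (p : ZMod (p ^ (r + 1))) ^ r * (((w i).val : ℕ) : ZMod (p ^ (r + 1))) :=
    fun y w i => rfl
  set C : (Fin 4 → ZMod (p ^ r)) → (Fin 4 → ZMod p) → Prop := fun y w =>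
    (Φ (y, w)) 0 ^ 2 + (Φ (y, w)) 1 ^ 2 + (e₂ : ZMod (p ^ (r + 1))) * (Φ (y, w)) 2 ^ 2
      + (e₃ : ZMod (p ^ (r + 1))) * (Φ (y, w)) 3 ^ 2 = (m : ZMod (p ^ (r + 1))) with hC
  have key : ∀ y : Fin 4 → ZMod (p ^ r), Nat.card {w : Fin 4 → ZMod p // C y w} =
      if y 0 ^ 2 + y 1 ^ 2 + (e₂ : ZMod (p ^ r)) * y 2 ^ 2 + (e₃ : ZMod (p ^ r)) * y 3 ^ 2 = (m : ZMod (p ^ r))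
      then p ^ 3 else 0 := by
    intro y
    set L : Fin 4 → ZMod (p ^ (r + 1)) := fun i => (((y i).val : ℕ) : ZMod (p ^ (r + 1))) with hL
    set W : ZMod p → ZMod (p ^ (r + 1)) := fun u => ((u.val : ℕ) : ZMod (p ^ (r + 1))) with hW
    have hπL : ∀ i, π (L i) = y i := fun i => by
      simp only [hL]; rw [map_natCast]; exact hvalR' (y i)
    have hρW : ∀ u : ZMod p, ρ (W u) = u := fun u => by
      simp only [hW]; rw [map_natCast]; exact hvalF u
    have hρL : ∀ i, ρ (L i) = (((y i).val : ℕ) : ZMod p) := fun i => by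
      simp only [hL]; rw [map_natCast]
    have hexp : ∀ w : Fin 4 → ZMod p, C y w ↔
        (L 0 ^ 2 + L 1 ^ 2 + (e₂ : ZMod (p ^ (r + 1))) * L 2 ^ 2 + (e₃ : ZMod (p ^ (r + 1))) * L 3 ^ 2)
          + (p : ZMod (p ^ (r + 1))) ^ r * (2 * (L 0 * W (w 0) + L 1 * W (w 1)
            + (e₂ : ZMod (p ^ (r + 1))) * L 2 * W (w 2) + (e₃ : ZMod (p ^ (r + 1))) * L 3 * W (w 3))) = (m : ZMod (p ^ (r + 1))) := by
      intro w
      rw [hC]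
      simp only [hΦ]
      constructor
      · intro h
        rw [← h]
        simp only [hL, hW]
        linear_combination (-(((w 0).val : ZMod (p ^ (r + 1)))^2 + ((w 1).val : ZMod (p ^ (r + 1)))^2
          + (e₂ : ZMod (p ^ (r + 1))) * ((w 2).val : ZMod (p ^ (r + 1)))^2 + (e₃ : ZMod (p ^ (r + 1))) * ((w 3).val : ZMod (p ^ (r + 1)))^2)) * hsq
      · intro h
        rw [← h]
        simp only [hL, hW]
        linear_combination (((w 0).val : ZMod (p ^ (r + 1)))^2 + ((w 1).val : ZMod (p ^ (r + 1)))^2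
          + (e₂ : ZMod (p ^ (r + 1))) * ((w 2).val : ZMod (p ^ (r + 1)))^2 + (e₃ : ZMod (p ^ (r + 1))) * ((w 3).val : ZMod (p ^ (r + 1)))^2) * hsq
    by_cases hy : y 0 ^ 2 + y 1 ^ 2 + (e₂ : ZMod (p ^ r)) * y 2 ^ 2 + (e₃ : ZMod (p ^ r)) * y 3 ^ 2 = (m : ZMod (p ^ r))
    · rw [if_pos hy]
      set t : ZMod (p ^ (r + 1)) := (m : ZMod (p ^ (r + 1))) - (L 0 ^ 2 + L 1 ^ 2 + (e₂ : ZMod (p ^ (r + 1))) * L 2 ^ 2 + (e₃ : ZMod (p ^ (r + 1))) * L 3 ^ 2)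
        with ht
      have hπt : π t = 0 := by
        rw [ht]
        simp only [map_sub, map_add, map_mul, map_pow, map_natCast, hπL]
        rw [hy, sub_self]
      obtain ⟨s, hs⟩ := ψsurj t hπt
      set b : Fin 4 → ZMod p := fun i => (((y i).val : ℕ) : ZMod p) with hb
      set A : Fin 4 → ZMod p := ![2 * b 0, 2 * b 1, 2 * (e₂ : ZMod p) * b 2, 2 * (e₃ : ZMod p) * b 3] with hA
      have hAv : A 0 = 2 * b 0 ∧ A 1 = 2 * b 1 ∧ A 2 = 2 * (e₂ : ZMod p) * b 2
          ∧ A 3 = 2 * (e₃ : ZMod p) * b 3 := by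
        refine ⟨rfl, rfl, rfl, rfl⟩
      have hcond : ∀ w : Fin 4 → ZMod p, C y w ↔ ∑ i, A i * w i = s := by
        intro w
        rw [hexp w]
        set E : ZMod (p ^ (r + 1)) := 2 * (L 0 * W (w 0) + L 1 * W (w 1)
          + (e₂ : ZMod (p ^ (r + 1))) * L 2 * W (w 2) + (e₃ : ZMod (p ^ (r + 1))) * L 3 * W (w 3)) with hE
        have hρE : ρ E = ∑ i, A i * w i := by
          rw [Fin.sum_univ_four, hAv.1, hAv.2.1, hAv.2.2.1, hAv.2.2.2, hE]
          simp only [map_mul, map_add, map_natCast, map_ofNat, hρL, hρW]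
          push_cast
          simp only [hb]
          ring
        have hdig : (p : ZMod (p ^ (r + 1))) ^ r * E = (p : ZMod (p ^ (r + 1))) ^ r * (((ρ E).val : ℕ) : ZMod (p ^ (r + 1))) :=
          digit _ _ (by rw [map_natCast, hvalF])
        constructor
        · intro h
          have hEt : (p : ZMod (p ^ (r + 1))) ^ r * E = t := by rw [ht]; linear_combination h
          refine hρE.symm.trans (ψinj _ _ ?_)
          rw [← hdig, hEt, ← hs]
        · intro h
          have hss : ρ E = s := hρE.trans h
          have hEt : (p : ZMod (p ^ (r + 1))) ^ r * E = t := by rw [hdig, hss, hs]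
          rw [ht] at hEt
          linear_combination hEt
      have hmF : (m : ZMod p) ≠ 0 := fun h => hm ((ZMod.natCast_eq_zero_iff m p).1 h)
      have h2F : (2 : ZMod p) ≠ 0 := by
        have h2 : ((2 : ℕ) : ZMod p) ≠ 0 := fun h =>
          hp2 ((Nat.prime_dvd_prime_iff_eq hp Nat.prime_two).1
            ((ZMod.natCast_eq_zero_iff 2 p).1 h))
        simpa using h2
      have hρ'y : ∀ i, ρ' (y i) = b i := fun i => hρ' (y i)
      have hyF : b 0 ^ 2 + b 1 ^ 2 + (e₂ : ZMod p) * b 2 ^ 2 + (e₃ : ZMod p) * b 3 ^ 2 = (m : ZMod p) := by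
        have h4 := congrArg ρ' hy
        simpa only [map_add, map_mul, map_pow, map_natCast, hρ'y] using h4
      have hex : ∃ i₀, A i₀ ≠ 0 := by
        by_contra hno
        push_neg at hno
        have h0 : b 0 = 0 := by
          have := hno 0; rw [hAv.1] at this; exact (mul_eq_zero.1 this).resolve_left h2F
        have h1 : b 1 = 0 := by
          have := hno 1; rw [hAv.2.1] at this; exact (mul_eq_zero.1 this).resolve_left h2F
        have h2 : (e₂ : ZMod p) * b 2 = 0 := by
          have := hno 2; rw [hAv.2.2.1, mul_assoc] at this
          exact (mul_eq_zero.1 this).resolve_left h2F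
        have h3 : (e₃ : ZMod p) * b 3 = 0 := by
          have := hno 3; rw [hAv.2.2.2, mul_assoc] at this
          exact (mul_eq_zero.1 this).resolve_left h2F
        apply hmF
        rw [← hyF]
        linear_combination b 0 * h0 + b 1 * h1 + b 2 * h2 + b 3 * h3
      obtain ⟨i₀, hi₀⟩ := hex
      rw [Nat.card_congr (Equiv.subtypeEquiv (Equiv.refl (Fin 4 → ZMod p))
        (q := fun w => ∑ i, A i * w i = s) (fun w => hcond w))]
      exact lin_count A i₀ hi₀ s
    · rw [if_neg hy]
      have : IsEmpty {w : Fin 4 → ZMod p // C y w} := by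
        refine ⟨fun ⟨w, hw⟩ => hy ?_⟩
        rw [hexp w] at hw
        have h4 := congrArg π hw
        simp only [map_add, map_mul, map_pow, map_natCast, hπL] at h4
        rw [hPR'] at h4
        simpa using h4
      exact Nat.card_of_isEmpty
  -- assemble
  have main : qc (p ^ (r + 1)) e₂ e₃ m = ∑ y : Fin 4 → ZMod (p ^ r), Nat.card {w : Fin 4 → ZMod p // C y w} := by
    have E1 : {v : Fin 4 → ZMod (p ^ (r + 1)) // v 0 ^ 2 + v 1 ^ 2 + (e₂ : ZMod (p ^ (r + 1))) * v 2 ^ 2 + (e₃ : ZMod (p ^ (r + 1))) * v 3 ^ 2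
        = (m : ZMod (p ^ (r + 1)))} ≃ Σ y : Fin 4 → ZMod (p ^ r), {w : Fin 4 → ZMod p // C y w} :=
      (Equiv.subtypeEquiv Φ (fun z => Iff.rfl)).symm.trans
        (Equiv.subtypeProdEquivSigmaSubtype C)
    rw [qc, Nat.card_congr E1, Nat.card_eq_fintype_card, Fintype.card_sigma]
    exact Finset.sum_congr rfl fun y _ => (Nat.card_eq_fintype_card).symm
  rw [main, Finset.sum_congr rfl (fun y _ => key y), ← Finset.sum_filter, Finset.sum_const,
    smul_eq_mul, qc, Nat.card_eq_fintype_card, Fintype.card_subtype, mul_comm]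

lemma qc_eq (r d₃ d₄ m : ℕ) :
    quaternaryLocalCount p r d₃ d₄ (m : ℤ) = qc (p ^ r) (d₃ ^ 2) (d₄ ^ 2) m := by
  rw [quaternaryLocalCount, qc]
  apply Nat.card_congr
  apply Equiv.subtypeEquivRight
  intro v
  constructor <;> intro h <;> [skip; skip] <;> (push_cast at h ⊢; convert h using 2) <;> push_cast <;> ring

end QDRAux

/-- **The ratio `ω₁(m, p)` of local densities, case `p ∤ m`.**
Let `p` be an odd prime, `m` a positive integer with `p ∤ m`, and `d₃, d₄` positive
integers with `p ∥ d₃ d₄` (exact first power). Set `ε = 1` if `p ≡ 1 (mod 4)` and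
`ε = −1` if `p ≡ 3 (mod 4)`. Then both local densities exist and that of
`x₁² + x₂² + d₃²x₃² + d₄²x₄²` equals `ω₁ = (1 + ε (m/p) p⁻¹)/(1 − p⁻²)` times that of
`x₁² + x₂² + x₃² + x₄²`, where `(m/p)` is the Legendre symbol. -/
theorem quaternary_density_ratio_coprime (p : ℕ) [Fact p.Prime] (hp2 : p ≠ 2)
    (m : ℕ) (hm : 0 < m) (hpm : ¬ p ∣ m) (d₃ d₄ : ℕ) (hd₃ : 0 < d₃) (hd₄ : 0 < d₄)
    (hpd : p ∣ d₃ * d₄) (hp2d : ¬ p ^ 2 ∣ d₃ * d₄) (ε : ℝ)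
    (hε : ε = if p % 4 = 1 then 1 else -1) :
    ∃ L : ℝ,
      Tendsto (fun r : ℕ =>
          (quaternaryLocalCount p r 1 1 (m : ℤ) : ℝ) / (p : ℝ) ^ (3 * r))
        atTop (nhds L) ∧
      Tendsto (fun r : ℕ =>
          (quaternaryLocalCount p r d₃ d₄ (m : ℤ) : ℝ) / (p : ℝ) ^ (3 * r))
        atTop (nhds
          ((1 + ε * (legendreSym p m : ℝ) * (p : ℝ)⁻¹) / (1 - ((p : ℝ) ^ 2)⁻¹) * L)) := by
  classical
  have hp : p.Prime := Fact.out
  have hx0 : (p : ℝ) ≠ 0 := Nat.cast_ne_zero.2 hp.ne_zero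
  have hmF : ((m : ℕ) : ZMod p) ≠ 0 := fun h =>
    hpm ((ZMod.natCast_eq_zero_iff m p).1 h)
  -- values of the count mod p
  have v1 : ((QDRAux.qc p (1 ^ 2) (1 ^ 2) m : ℕ) : ℤ) = (p : ℤ) ^ 3 - p := by
    norm_num
    exact QDRAux.qc_p_unit hp2 (a := (1 : ZMod p)) (b := (1 : ZMod p)) one_ne_zero one_ne_zero
      (by norm_num) (by norm_num) hmF
  have hd : (p ∣ d₃ ∧ ¬ p ∣ d₄) ∨ (¬ p ∣ d₃ ∧ p ∣ d₄) := by
    rcases (Nat.Prime.dvd_mul hp).1 hpd with h | h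
    · exact Or.inl ⟨h, fun h4 => hp2d (by rw [pow_two]; exact mul_dvd_mul h h4)⟩
    · exact Or.inr ⟨fun h3 => hp2d (by rw [pow_two]; exact mul_dvd_mul h3 h), h⟩
  have v2 : ((QDRAux.qc p (d₃ ^ 2) (d₄ ^ 2) m : ℕ) : ℤ) = (p : ℤ) ^ 3
      + (quadraticChar (ZMod p)) (-1) * (quadraticChar (ZMod p)) ((m : ℕ) : ZMod p)
        * (p : ℤ) ^ 2 := by
    rcases hd with ⟨h3, h4⟩ | ⟨h3, h4⟩
    · have ha : ((d₃ : ℕ) : ZMod p) = 0 := (ZMod.natCast_eq_zero_iff d₃ p).2 h3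
      have hb : ((d₄ : ℕ) : ZMod p) ≠ 0 := fun h => h4 ((ZMod.natCast_eq_zero_iff d₄ p).1 h)
      exact QDRAux.qc_p_deg hp2 (a := (0 : ZMod p)) (b := ((d₄ : ℕ) : ZMod p))
        (by push_cast [ha]; try ring) (by push_cast; try ring) (Or.inl ⟨rfl, hb⟩)
    · have ha : ((d₃ : ℕ) : ZMod p) ≠ 0 := fun h => h3 ((ZMod.natCast_eq_zero_iff d₃ p).1 h)
      have hb : ((d₄ : ℕ) : ZMod p) = 0 := (ZMod.natCast_eq_zero_iff d₄ p).2 h4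
      exact QDRAux.qc_p_deg hp2 (a := ((d₃ : ℕ) : ZMod p)) (b := (0 : ZMod p))
        (by push_cast; try ring) (by push_cast [hb]; try ring) (Or.inr ⟨ha, rfl⟩)
  -- the sequences are eventually constant
  have const1 : ∀ e₂ e₃ : ℕ, ∀ r, 1 ≤ r →
      ((QDRAux.qc (p ^ r) e₂ e₃ m : ℝ) / (p : ℝ) ^ (3 * r))
        = ((QDRAux.qc (p ^ 1) e₂ e₃ m : ℝ) / (p : ℝ) ^ 3) := by
    intro e₂ e₃
    refine Nat.le_induction ?_ ?_
    · norm_num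
    · intro r hr ih
      rw [QDRAux.hensel_step hp2 e₂ e₃ m hpm hr]
      push_cast
      rw [show 3 * (r + 1) = 3 * r + 3 by ring, pow_add, mul_comm ((p : ℝ) ^ (3 * r)) _,
        mul_div_mul_left _ _ (pow_ne_zero 3 hx0)]
      exact ih
  have tend : ∀ e₂ e₃ : ℕ, Tendsto (fun r : ℕ => (QDRAux.qc (p ^ r) e₂ e₃ m : ℝ) / (p : ℝ) ^ (3 * r))
      atTop (nhds ((QDRAux.qc (p ^ 1) e₂ e₃ m : ℝ) / (p : ℝ) ^ 3)) := by
    intro e₂ e₃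
    refine Filter.Tendsto.congr' ?_ tendsto_const_nhds
    filter_upwards [Filter.eventually_ge_atTop 1] with r hr
    exact (const1 e₂ e₃ r hr).symm
  -- identify the quadratic character values
  have hεχ : ((quadraticChar (ZMod p) (-1) : ℤ) : ℝ) = ε := by
    have h1 : quadraticChar (ZMod p) (-1) = ZMod.χ₄ (Fintype.card (ZMod p)) :=
      quadraticChar_neg_one ((ZMod.ringChar_zmod_n p).substr hp2)
    rw [ZMod.card] at h1
    have hodd : p % 2 = 1 := Nat.odd_iff.1 (hp.odd_of_ne_two hp2)
    rw [h1, ZMod.χ₄_nat_eq_if_mod_four, hodd]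
    rw [hε]
    norm_num
  have hlegχ : (legendreSym p (m : ℤ) : ℝ)
      = ((quadraticChar (ZMod p) ((m : ℕ) : ZMod p) : ℤ) : ℝ) := by
    have h1 : legendreSym p (m : ℤ) = quadraticChar (ZMod p) (((m : ℤ) : ZMod p)) := rfl
    rw [h1]
    norm_num
  -- value identities over ℝ
  have LVal : ((QDRAux.qc (p ^ 1) (1 ^ 2) (1 ^ 2) m : ℕ) : ℝ) = (p : ℝ) ^ 3 - p := by
    rw [pow_one]
    exact_mod_cast congrArg (Int.cast : ℤ → ℝ) v1
  have DVal : ((QDRAux.qc (p ^ 1) (d₃ ^ 2) (d₄ ^ 2) m : ℕ) : ℝ)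
      = (p : ℝ) ^ 3 + ε * (legendreSym p (m : ℤ) : ℝ) * (p : ℝ) ^ 2 := by
    rw [pow_one]
    have h2 := congrArg (Int.cast : ℤ → ℝ) v2
    push_cast at h2 ⊢
    rw [h2, ← hεχ, hlegχ]
  refine ⟨((QDRAux.qc (p ^ 1) (1 ^ 2) (1 ^ 2) m : ℕ) : ℝ) / (p : ℝ) ^ 3, ?_, ?_⟩
  · exact (tend (1 ^ 2) (1 ^ 2)).congr
      (fun r => by rw [QDRAux.qc_eq (p := p) r 1 1 m])
  · have hX : (1 + ε * (legendreSym p (m : ℤ) : ℝ) * (p : ℝ)⁻¹) / (1 - ((p : ℝ) ^ 2)⁻¹)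
        * (((QDRAux.qc (p ^ 1) (1 ^ 2) (1 ^ 2) m : ℕ) : ℝ) / (p : ℝ) ^ 3)
        = ((QDRAux.qc (p ^ 1) (d₃ ^ 2) (d₄ ^ 2) m : ℕ) : ℝ) / (p : ℝ) ^ 3 := by
      rw [LVal, DVal]
      have hx2 : (2 : ℝ) ≤ (p : ℝ) := by exact_mod_cast hp.two_le
      have hgt : (1 : ℝ) < (p : ℝ) ^ 2 := by nlinarith
      have hne : (1 : ℝ) - ((p : ℝ) ^ 2)⁻¹ ≠ 0 := by
        have := inv_lt_one_of_one_lt₀ hgt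
        intro h
        have : ((p : ℝ) ^ 2)⁻¹ = 1 := by linarith
        linarith
      rw [show ((p : ℝ) ^ 3 - p) / (p : ℝ) ^ 3 = 1 - ((p : ℝ) ^ 2)⁻¹ by field_simp]
      rw [div_mul_cancel₀ _ hne]
      field_simp
    rw [hX]
    exact (tend (d₃ ^ 2) (d₄ ^ 2)).congr
      (fun r => by rw [QDRAux.qc_eq (p := p) r d₃ d₄ m])
end

section
/- Let p be an odd prime and m a positive integer, and define Ω(m,p) := 2·ω₁(m,p) − ω₂(m,p)/p, with ω₁ and ω₂ as given below. Then Ω(m,p) ≤ 2 + (p+3)/(p²−1) if p ∤ m, and Ω(m,p) ≤ 2 if p ∣ m. In particular, Ω(m,p) ≤ 5/2 for every odd prime p ≥ 5. -/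
/-- `ε(p) = 1` if `p ≡ 1 (mod 4)`, `ε(p) = −1` if `p ≡ 3 (mod 4)`. -/
noncomputable def epsP (p : ℕ) : ℝ := if p % 4 = 1 then 1 else -1

/-- The local density ratio `ω₁(m, p)`: equal to `(1 + ε(p)(m/p)p⁻¹)/(1 − p⁻²)` when
`p ∤ m`, and to `(1 − p^(−R))/(1 − p^(−R−1))` when `p^R ∥ m` with `R ≥ 1`.  Here `(m/p)`
is the Legendre (Jacobi) symbol and `R = m.factorization p`. -/
noncomputable def omega1 (m p : ℕ) : ℝ :=
  if p ∣ m then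
    (1 - (p : ℝ) ^ (-(m.factorization p : ℤ))) /
      (1 - (p : ℝ) ^ (-(m.factorization p : ℤ) - 1))
  else
    (1 + epsP p * (jacobiSym m p : ℝ) * (p : ℝ)⁻¹) / (1 - ((p : ℝ) ^ 2)⁻¹)

/-- The local density ratio `ω₂(m, p)`: equal to `(1 − ε(p)p⁻¹)/(1 − p⁻²)` when `p ∤ m`,
and to `((1 − p⁻¹)(1 + ε(p)) + (1 + p⁻¹)(1 − p^(1−R)))/((1 + p⁻¹)(1 − p^(−R−1)))` when
`p^R ∥ m` with `R ≥ 1`. -/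
noncomputable def omega2 (m p : ℕ) : ℝ :=
  if p ∣ m then
    ((1 - (p : ℝ)⁻¹) * (1 + epsP p)
        + (1 + (p : ℝ)⁻¹) * (1 - (p : ℝ) ^ (1 - (m.factorization p : ℤ)))) /
      ((1 + (p : ℝ)⁻¹) * (1 - (p : ℝ) ^ (-(m.factorization p : ℤ) - 1)))
  else
    (1 - epsP p * (p : ℝ)⁻¹) / (1 - ((p : ℝ) ^ 2)⁻¹)

/-- `Ω(m, p) := 2 ω₁(m, p) − ω₂(m, p)/p`. -/
noncomputable def bigOmegaRatio (m p : ℕ) : ℝ := 2 * omega1 m p - omega2 m p / p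

private lemma bigOmega_aux1 (p : ℕ) (ε χ : ℝ) (hq : (3:ℝ) ≤ p) (hεle : ε ≤ 1) (hεge : -1 ≤ ε)
    (hχle : χ ≤ 1) (hχge : -1 ≤ χ) :
    2 * ((1 + ε * χ * (p:ℝ)⁻¹) / (1 - ((p:ℝ) ^ 2)⁻¹)) - (1 - ε * (p:ℝ)⁻¹) / (1 - ((p:ℝ)^2)⁻¹) / p ≤
    2 + ((p:ℝ) + 3) / ((p:ℝ) ^ 2 - 1) := by
  have hq0 : (0:ℝ) < p := by linarith
  have hd : (0 : ℝ) < (p : ℝ) ^ 2 - 1 := by nlinarith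
  have hd2 : (0 : ℝ) < 1 - ((p : ℝ) ^ 2)⁻¹ := by
    rw [sub_pos, inv_lt_one_iff₀]; right; nlinarith
  rw [← sub_nonneg]
  have key : 2 + ((p:ℝ) + 3) / ((p:ℝ) ^ 2 - 1) -
      (2 * ((1 + ε * χ * (p:ℝ)⁻¹) / (1 - ((p:ℝ) ^ 2)⁻¹)) - (1 - ε * (p:ℝ)⁻¹) / (1 - ((p:ℝ)^2)⁻¹) / p)
      = ((2 - 2 * (ε * χ)) * p + (1 - ε)) / ((p:ℝ)^2 - 1) := by
    have h1 : ((p:ℝ)^2 - 1) ≠ 0 := hd.ne'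
    have h2 : (1 - ((p:ℝ)^2)⁻¹) ≠ 0 := hd2.ne'
    field_simp
    ring
  rw [key]
  apply div_nonneg _ hd.le
  nlinarith [mul_nonneg (by linarith : (0:ℝ) ≤ 1 - ε) (by linarith : (0:ℝ) ≤ 1 + χ),
    mul_nonneg (by linarith : (0:ℝ) ≤ 1 + ε) (by linarith : (0:ℝ) ≤ 1 - χ)]

private lemma bigOmega_aux2 (p : ℕ) (ε t : ℝ) (hq : (3:ℝ) ≤ p) (hεge : -1 ≤ ε)
    (ht0 : 0 < t) (htp : t * p ≤ 1) :
    2 * ((1 - t) / (1 - t / p)) -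
      ((1 - (p:ℝ)⁻¹) * (1 + ε) + (1 + (p:ℝ)⁻¹) * (1 - (p:ℝ) * t)) / ((1 + (p:ℝ)⁻¹) * (1 - t / p)) / p
      ≤ 2 := by
  have hq0 : (0:ℝ) < p := by linarith
  have htlt : t < p := by nlinarith
  have hden1 : (0:ℝ) < 1 - t / p := by rw [sub_pos, div_lt_one hq0]; exact htlt
  rw [← sub_nonneg]
  have key : 2 - (2 * ((1 - t) / (1 - t / p)) -
      ((1 - (p:ℝ)⁻¹) * (1 + ε) + (1 + (p:ℝ)⁻¹) * (1 - (p:ℝ) * t)) / ((1 + (p:ℝ)⁻¹) * (1 - t / p)) / p)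
      = (2 * ((p:ℝ) + 1) * (p - 1) * t + (p - 1) * (1 + ε) + (p + 1) * (1 - p * t)) /
        (((p:ℝ) + 1) * (p - t)) := by
    have h1 : (1 - t / (p:ℝ)) ≠ 0 := hden1.ne'
    have h2 : (1 + (p:ℝ)⁻¹) ≠ 0 := by positivity
    have h4 : ((p:ℝ) - t) ≠ 0 := by linarith
    have h5 : (p:ℝ) ≠ 0 := hq0.ne'
    field_simp
    ring
  rw [key]
  apply div_nonneg
  · have : (0:ℝ) ≤ 1 - p * t := by nlinarith
    nlinarith [mul_pos ht0 hq0]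
  · apply mul_nonneg <;> linarith

/-- **Bound for `Ω(m, p)`.** For an odd prime `p` and a positive integer `m`:
`Ω(m,p) ≤ 2 + (p+3)/(p²−1)` if `p ∤ m`, `Ω(m,p) ≤ 2` if `p ∣ m`, and in particular
`Ω(m,p) ≤ 5/2` whenever `p ≥ 5`. -/
theorem bigOmegaRatio_bound (p m : ℕ) (hp : p.Prime) (hp2 : p ≠ 2) (hm : 0 < m) :
    (¬ p ∣ m → bigOmegaRatio m p ≤ 2 + ((p : ℝ) + 3) / ((p : ℝ) ^ 2 - 1)) ∧
    (p ∣ m → bigOmegaRatio m p ≤ 2) ∧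
    (5 ≤ p → bigOmegaRatio m p ≤ 5 / 2) := by
  have hp3 : 3 ≤ p := by have := hp.two_le; omega
  have hq : (3 : ℝ) ≤ (p : ℝ) := by exact_mod_cast hp3
  have hq0 : (0 : ℝ) < p := by linarith
  have hε : epsP p = 1 ∨ epsP p = -1 := by unfold epsP; split <;> simp
  have hεle : epsP p ≤ 1 := by rcases hε with h | h <;> rw [h] <;> norm_num
  have hεge : -1 ≤ epsP p := by rcases hε with h | h <;> rw [h] <;> norm_num
  have hcase1 : ¬ p ∣ m → bigOmegaRatio m p ≤ 2 + ((p : ℝ) + 3) / ((p : ℝ) ^ 2 - 1) := by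
    intro h
    have hχle : (jacobiSym m p : ℝ) ≤ 1 := by
      rcases jacobiSym.trichotomy m p with h' | h' | h' <;> rw [h'] <;> norm_num
    have hχge : (-1 : ℝ) ≤ (jacobiSym m p : ℝ) := by
      rcases jacobiSym.trichotomy m p with h' | h' | h' <;> rw [h'] <;> norm_num
    unfold bigOmegaRatio omega1 omega2
    rw [if_neg h, if_neg h]
    exact bigOmega_aux1 p (epsP p) (jacobiSym m p : ℝ) hq hεle hεge hχle hχge
  have hcase2 : p ∣ m → bigOmegaRatio m p ≤ 2 := by
    intro h
    have hR : 1 ≤ m.factorization p := (hp.factorization_pos_of_dvd hm.ne' h)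
    set R : ℕ := m.factorization p with hRdef
    set t : ℝ := (p : ℝ) ^ (-(R : ℤ)) with htdef
    have ht0 : 0 < t := zpow_pos hq0 _
    have htp : t * p ≤ 1 := by
      have h1 : (p : ℝ) ^ (1 - (R : ℤ)) ≤ 1 :=
        zpow_le_one_of_nonpos₀ (by linarith) (by omega)
      calc t * p = (p : ℝ) ^ (-(R : ℤ)) * (p : ℝ) ^ (1 : ℤ) := by rw [zpow_one]
        _ = (p : ℝ) ^ (1 - (R : ℤ)) := by rw [← zpow_add₀ hq0.ne']; ring_nf
        _ ≤ 1 := h1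
    have e1 : (p : ℝ) ^ (-(R : ℤ) - 1) = t / p := by
      rw [zpow_sub₀ hq0.ne', zpow_one]
    have e2 : (p : ℝ) ^ (1 - (R : ℤ)) = (p : ℝ) * t := by
      rw [sub_eq_add_neg, zpow_add₀ hq0.ne', zpow_one]
    unfold bigOmegaRatio omega1 omega2
    rw [if_pos h, if_pos h, ← hRdef, ← htdef, e1, e2]
    exact bigOmega_aux2 p (epsP p) t hq hεge ht0 htp
  refine ⟨hcase1, hcase2, fun h5 => ?_⟩
  by_cases h : p ∣ m
  · linarith [hcase2 h]
  · have hq5 : (5 : ℝ) ≤ (p : ℝ) := by exact_mod_cast h5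
    have hd : (0 : ℝ) < (p : ℝ) ^ 2 - 1 := by nlinarith
    have hle : ((p : ℝ) + 3) / ((p : ℝ) ^ 2 - 1) ≤ 1 / 2 := by
      rw [div_le_div_iff₀ hd (by norm_num)]; nlinarith
    linarith [hcase1 h]
end

section
/- Let m be a positive integer and let w, z₀ be real numbers with 3 < w ≤ z₀. Then the product over all primes p with w ≤ p < z₀ of (1 − ω₁(m,p)/p)^{−1} is at most (log z₀ / log w)·(1 + 6/log w), where ω₁ is as given below. -/
namespace Omega1Aux
open Finset

lemma log_ge' {x : ℝ} (hx : 0 < x) : 1 - 1/x ≤ Real.log x := by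
  have h := Real.log_le_sub_one_of_pos (inv_pos.mpr hx)
  rw [Real.log_inv] at h
  have : (1:ℝ)/x = x⁻¹ := one_div x
  linarith

lemma exp_one_le : Real.exp 1 ≤ 2.7182818286 := Real.exp_one_lt_d9.le

lemma exp_nat_le (n : ℕ) : Real.exp n ≤ 2.7182818286 ^ n := by
  rw [← Real.exp_one_pow]
  exact pow_le_pow_left₀ (Real.exp_pos 1).le exp_one_le n

lemma exp_div_le {a b : ℕ} {r : ℝ} (hb : 0 < b) (hr : 0 < r)
    (h : (2.7182818286:ℝ) ^ a ≤ r ^ b) : Real.exp ((a : ℝ)/b) ≤ r := by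
  have hpow : Real.exp ((a:ℝ)/b) ^ b = Real.exp a := by
    rw [← Real.exp_nat_mul]
    congr 1
    field_simp
  refine le_of_pow_le_pow_left₀ hb.ne' hr.le ?_
  rw [hpow]
  exact (exp_nat_le a).trans h

lemma log5_lb : (1.6:ℝ) ≤ Real.log 5 := by
  rw [Real.le_log_iff_exp_le (by norm_num)]
  have : (1.6:ℝ) = (8:ℕ)/(5:ℕ) := by norm_num
  rw [this]
  exact exp_div_le (by norm_num) (by norm_num) (by norm_num)

lemma log7_lb : (1.75:ℝ) ≤ Real.log 7 := by
  rw [Real.le_log_iff_exp_le (by norm_num)]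
  have : (1.75:ℝ) = (7:ℕ)/(4:ℕ) := by norm_num
  rw [this]
  exact exp_div_le (by norm_num) (by norm_num) (by norm_num)

lemma exp_43_le : Real.exp (4/3) ≤ 3.885 := by
  have : ((4:ℝ)/3) = ((4:ℕ):ℝ)/((3:ℕ):ℝ) := by norm_num
  rw [this]
  exact exp_div_le (by norm_num) (by norm_num) (by norm_num)

lemma exp_1110_le : Real.exp (11/10) ≤ 3.1 := by
  have : ((11:ℝ)/10) = ((11:ℕ):ℝ)/((10:ℕ):ℝ) := by norm_num
  rw [this]
  exact exp_div_le (by norm_num) (by norm_num) (by norm_num)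

lemma exp_2325_le : Real.exp (23/25) ≤ 3.11 := by
  have : ((23:ℝ)/25) = ((23:ℕ):ℝ)/((25:ℕ):ℝ) := by norm_num
  rw [this]
  exact exp_div_le (by norm_num) (by norm_num) (by norm_num)

lemma log7_ub : Real.log 7 ≤ 3 * Real.log 2 := by
  have h : Real.log 7 ≤ Real.log 8 := Real.log_le_log (by norm_num) (by norm_num)
  have h8 : Real.log 8 = 3 * Real.log 2 := by
    rw [show (8:ℝ) = 2^3 by norm_num, Real.log_pow]; push_cast; ring
  linarith

lemma log11_ub : Real.log 11 ≤ 4 * Real.log 2 := by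
  have h : Real.log 11 ≤ Real.log 16 := Real.log_le_log (by norm_num) (by norm_num)
  have h16 : Real.log 16 = 4 * Real.log 2 := by
    rw [show (16:ℝ) = 2^4 by norm_num, Real.log_pow]; push_cast; ring
  linarith

lemma log16_eq : Real.log 16 = 4 * Real.log 2 := by
  rw [show (16:ℝ) = 2^4 by norm_num, Real.log_pow]; push_cast; ring

lemma log17_ub : Real.log 17 ≤ 2.8351 := by
  have h : Real.log 17 - Real.log 16 = Real.log (17/16) := (Real.log_div (by norm_num) (by norm_num)).symm
  have h2 : Real.log (17/16) ≤ 17/16 - 1 := Real.log_le_sub_one_of_pos (by norm_num)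
  have := Real.log_two_lt_d9.le
  rw [log16_eq] at h
  nlinarith

lemma log17_lb : (2.83:ℝ) ≤ Real.log 17 := by
  have h : Real.log 17 - Real.log 16 = Real.log (17/16) := (Real.log_div (by norm_num) (by norm_num)).symm
  have h2 : 1 - 1/(17/16:ℝ) ≤ Real.log (17/16) := log_ge' (by norm_num)
  have := Real.log_two_gt_d9.le
  rw [log16_eq] at h
  nlinarith

-- series bounds for log(4/3)
lemma log43_bounds : (0.287304:ℝ) ≤ Real.log (4/3) ∧ Real.log (4/3) ≤ 0.287956 := by
  have h := Real.abs_log_sub_add_sum_range_le (x := 1/4) (by rw [abs_of_pos]; norm_num; norm_num) 5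
  rw [abs_le] at h
  have hs : ∑ i ∈ range 5, ((1:ℝ)/4) ^ (i + 1) / (↑i + 1) = 2209/7680 := by
    simp [Finset.sum_range_succ]
    norm_num
  have habs : |(1:ℝ)/4| = 1/4 := by rw [abs_of_pos]; norm_num
  rw [hs, habs] at h
  have hlog : Real.log (1 - 1/4) = - Real.log (4/3) := by
    rw [show (1:ℝ) - 1/4 = (4/3)⁻¹ by norm_num, Real.log_inv]
  rw [hlog] at h
  constructor <;> nlinarith [h.1, h.2]

lemma log3_lb : (1.0983:ℝ) ≤ Real.log 3 := by
  have h : Real.log (4/3) = 2 * Real.log 2 - Real.log 3 := by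
    rw [Real.log_div (by norm_num) (by norm_num), show (4:ℝ) = 2^2 by norm_num, Real.log_pow]
    push_cast; ring
  have := log43_bounds.2
  have := Real.log_two_gt_d9.le
  nlinarith

lemma log3_ub : Real.log 3 ≤ 1.098991 := by
  have h : Real.log (4/3) = 2 * Real.log 2 - Real.log 3 := by
    rw [Real.log_div (by norm_num) (by norm_num), show (4:ℝ) = 2^2 by norm_num, Real.log_pow]
    push_cast; ring
  have := log43_bounds.1
  have := Real.log_two_lt_d9.le
  nlinarith

lemma hfun_mono {L₁ L : ℝ} (h1 : 0 < L₁) (h : L₁ ≤ L) :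
    L₁ * Real.log (1 + 6/L₁) ≤ L * Real.log (1 + 6/L) := by
  have hL : 0 < L := h1.trans_le h
  have hs : (0:ℝ) < 6/L := by positivity
  have hp : 1 ≤ L / L₁ := (one_le_div h1).mpr h
  have hb := one_add_mul_self_le_rpow_one_add (s := 6/L) (by linarith) hp
  have hLL : L / L₁ * (6 / L) = 6 / L₁ := by field_simp
  rw [hLL] at hb
  have hpos : (0:ℝ) < 1 + 6/L := by linarith
  have hlog := Real.log_le_log (by positivity) hb
  rw [Real.log_rpow hpos] at hlog
  calc L₁ * Real.log (1 + 6/L₁) ≤ L₁ * (L / L₁ * Real.log (1 + 6/L)) := by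
        apply mul_le_mul_of_nonneg_left hlog h1.le
    _ = L * Real.log (1 + 6/L) := by field_simp


noncomputable def pS (n : ℕ) : ℝ :=
  ∑ p ∈ (range (n+1)).filter Nat.Prime, Real.log p / p

noncomputable def pS5 (n : ℕ) : ℝ :=
  ∑ p ∈ (range (n+1)).filter (fun p => p.Prime ∧ 5 ≤ p), Real.log p / p

/-- Chebyshev: ∑_{p ≤ n} log p ≤ n log 4 -/
lemma theta_bound (n : ℕ) :
    ∑ p ∈ (range (n+1)).filter Nat.Prime, Real.log p ≤ n * Real.log 4 := by
  have h1 : ((primorial n : ℕ) : ℝ) = ∏ p ∈ (range (n+1)).filter Nat.Prime, (p:ℝ) := by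
    rw [primorial]; push_cast; rfl
  have h2 : Real.log (primorial n) = ∑ p ∈ (range (n+1)).filter Nat.Prime, Real.log p := by
    rw [h1, Real.log_prod]
    intro p hp
    simp only [mem_filter] at hp
    exact_mod_cast hp.2.pos.ne'
  rw [← h2]
  have h3 : ((primorial n : ℕ):ℝ) ≤ ((4^n : ℕ):ℝ) := by
    exact_mod_cast primorial_le_4_pow n
  have h4 := Real.log_le_log (by exact_mod_cast primorial_pos n) h3
  rw [Nat.cast_pow, Real.log_pow] at h4
  exact_mod_cast h4

/-- log n! as a sum over primes ≤ n -/
lemma logfact_eq (n : ℕ) :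
    Real.log ((Nat.factorial n : ℕ) : ℝ) =
      ∑ p ∈ (range (n+1)).filter Nat.Prime,
        ((Nat.factorial n).factorization p : ℝ) * Real.log p := by
  have hne : Nat.factorial n ≠ 0 := (Nat.factorial_pos n).ne'
  have h1 : ((Nat.factorial n : ℕ) : ℝ) =
      ∏ p ∈ (Nat.factorial n).factorization.support,
        ((p:ℝ) ^ (Nat.factorial n).factorization p) := by
    conv_lhs => rw [← Nat.factorization_prod_pow_eq_self hne]
    rw [Finsupp.prod]
    push_cast
    rfl
  have hsub : (Nat.factorial n).factorization.support ⊆ (range (n+1)).filter Nat.Prime := by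
    intro p hp
    rw [Nat.support_factorization, Nat.mem_primeFactors] at hp
    obtain ⟨hp1, hp2, _⟩ := hp
    rw [mem_filter, mem_range]
    exact ⟨Nat.lt_succ_of_le ((Nat.Prime.dvd_factorial hp1).mp hp2), hp1⟩
  rw [h1, Real.log_prod]
  · rw [Finset.sum_subset hsub]
    · apply Finset.sum_congr rfl
      intro p _
      rw [Real.log_pow]
    · intro p _ hps
      rw [Finsupp.notMem_support_iff.mp hps]
      simp
  · intro p hp
    have hpp : p.Prime := by
      have := hsub hp
      rw [mem_filter] at this
      exact this.2
    exact pow_ne_zero _ (by exact_mod_cast hpp.pos.ne')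

/-- ν_p(n!) ≤ n/(p-1) -/
lemma nu_ub {p n : ℕ} (hp : p.Prime) :
    (((Nat.factorial n).factorization p : ℕ) : ℝ) ≤ (n:ℝ) / ((p:ℝ) - 1) := by
  haveI : Fact p.Prime := ⟨hp⟩
  have hb : Nat.log p n < Nat.log p n + 1 := Nat.lt_succ_self _
  rw [Nat.factorization_def _ hp, padicValNat_factorial hb]
  set b := Nat.log p n + 1 with hbdef
  have hp2 : (2:ℝ) ≤ p := by exact_mod_cast hp.two_le
  have step1 : ((∑ i ∈ Ico 1 b, n / p ^ i : ℕ) : ℝ) ≤ ∑ i ∈ Ico 1 b, (n:ℝ) * ((p:ℝ)⁻¹) ^ i := by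
    push_cast
    apply Finset.sum_le_sum
    intro i _
    calc ((n / p ^ i : ℕ) : ℝ) ≤ (n:ℝ) / ((p^i : ℕ):ℝ) := Nat.cast_div_le
      _ = (n:ℝ) * ((p:ℝ)⁻¹) ^ i := by
          rw [Nat.cast_pow, div_eq_mul_inv, inv_pow]
  refine step1.trans ?_
  rw [← Finset.mul_sum]
  have hgeom : ∑ i ∈ Ico 1 b, ((p:ℝ)⁻¹) ^ i ≤ 1 / ((p:ℝ) - 1) := by
    have hr0 : (0:ℝ) ≤ (p:ℝ)⁻¹ := by positivity
    have hr1 : (p:ℝ)⁻¹ < 1 := by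
      rw [inv_lt_one_iff₀]; right; linarith
    have hsplit : ∑ i ∈ range b, ((p:ℝ)⁻¹) ^ i = 1 + ∑ i ∈ Ico 1 b, ((p:ℝ)⁻¹) ^ i := by
      rw [Finset.range_eq_Ico]
      rw [Finset.sum_eq_sum_Ico_succ_bot (by omega : 0 < b)]
      simp
    have hgs := geom_sum_mul ((p:ℝ)⁻¹) b
    have hpk : (0:ℝ) ≤ ((p:ℝ)⁻¹)^b := by positivity
    have h1r : (0:ℝ) < 1 - (p:ℝ)⁻¹ := by linarith
    -- sum over range b ≤ 1/(1 - r)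
    have hrange : ∑ i ∈ range b, ((p:ℝ)⁻¹) ^ i ≤ 1 / (1 - (p:ℝ)⁻¹) := by
      rw [le_div_iff₀ h1r]
      have h2 : (∑ i ∈ range b, ((p:ℝ)⁻¹)^i) * (1 - (p:ℝ)⁻¹) = 1 - ((p:ℝ)⁻¹)^b := by
        linear_combination -hgs
      linarith
    have heq : 1 / (1 - (p:ℝ)⁻¹) - 1 = 1 / ((p:ℝ) - 1) := by
      have hpne : (p:ℝ) ≠ 0 := by linarith
      have hpne1 : (p:ℝ) - 1 ≠ 0 := by linarith
      field_simp
      ring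
    linarith [hsplit ▸ hrange]
  calc (n:ℝ) * ∑ i ∈ Ico 1 b, ((p:ℝ)⁻¹) ^ i ≤ (n:ℝ) * (1/((p:ℝ)-1)) := by
        apply mul_le_mul_of_nonneg_left hgeom (by positivity)
    _ = (n:ℝ)/((p:ℝ)-1) := by ring

/-- ⌊n/p⌋ ≤ ν_p(n!) for prime p ≤ n -/
lemma nu_lb {p n : ℕ} (hp : p.Prime) (hpn : p ≤ n) :
    (n / p : ℕ) ≤ (Nat.factorial n).factorization p := by
  haveI : Fact p.Prime := ⟨hp⟩
  have hb : Nat.log p n < Nat.log p n + 1 := Nat.lt_succ_self _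
  rw [Nat.factorization_def _ hp, padicValNat_factorial hb]
  have h1 : 1 ∈ Ico 1 (Nat.log p n + 1) := by
    rw [mem_Ico]
    refine ⟨le_refl 1, ?_⟩
    have := Nat.log_pos hp.one_lt hpn
    omega
  calc (n / p : ℕ) = n / p ^ 1 := by rw [pow_one]
    _ ≤ ∑ i ∈ Ico 1 (Nat.log p n + 1), n / p ^ i :=
        Finset.single_le_sum (f := fun i => n / p ^ i) (fun i _ => Nat.zero_le _) h1

/-- Stirling lower: m log m - m + 1 ≤ log m! -/
lemma logfact_lb : ∀ m : ℕ, 1 ≤ m →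
    (m:ℝ) * Real.log m - m + 1 ≤ Real.log ((Nat.factorial m : ℕ) : ℝ) := by
  intro m
  induction m with
  | zero => intro h; omega
  | succ k ih =>
    intro _
    rcases Nat.eq_zero_or_pos k with hk | hk
    · subst hk; simp [Nat.factorial]
    · have ihk := ih hk
      have hfs : ((Nat.factorial (k+1) : ℕ) : ℝ) = ((k:ℝ)+1) * ((Nat.factorial k : ℕ) : ℝ) := by
        rw [Nat.factorial_succ]; push_cast; ring
      have hlog : Real.log ((Nat.factorial (k+1) : ℕ) : ℝ)
          = Real.log ((k:ℝ)+1) + Real.log ((Nat.factorial k : ℕ) : ℝ) := by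
        rw [hfs, Real.log_mul (by positivity) (by exact_mod_cast (Nat.factorial_pos k).ne')]
      have hk1 : (1:ℝ) ≤ (k:ℝ) := by exact_mod_cast hk
      have hstep : (k:ℝ) * (Real.log ((k:ℝ)+1) - Real.log k) ≤ 1 := by
        have h1 : Real.log (((k:ℝ)+1)/k) ≤ ((k:ℝ)+1)/k - 1 :=
          Real.log_le_sub_one_of_pos (by positivity)
        rw [Real.log_div (by positivity) (by positivity)] at h1
        have h2 := mul_le_mul_of_nonneg_left h1 (by positivity : (0:ℝ) ≤ (k:ℝ))
        have h3 : (k:ℝ) * (((k:ℝ)+1)/k - 1) = 1 := by field_simp; ring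
        linarith
      rw [hlog]
      push_cast
      nlinarith [hstep, hk1]

/-- Stirling upper: log n! ≤ (n+1) log (n+1) - n -/
lemma logfact_ub : ∀ n : ℕ, 1 ≤ n →
    Real.log ((Nat.factorial n : ℕ) : ℝ) ≤ ((n:ℝ)+1) * Real.log ((n:ℝ)+1) - n := by
  intro n
  induction n with
  | zero => intro h; omega
  | succ k ih =>
    intro _
    rcases Nat.eq_zero_or_pos k with hk | hk
    · subst hk
      norm_num [Nat.factorial]
      nlinarith [Real.log_two_gt_d9]
    · have ihk := ih hk
      have hfs : ((Nat.factorial (k+1) : ℕ) : ℝ) = ((k:ℝ)+1) * ((Nat.factorial k : ℕ) : ℝ) := by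
        rw [Nat.factorial_succ]; push_cast; ring
      have hlog : Real.log ((Nat.factorial (k+1) : ℕ) : ℝ)
          = Real.log ((k:ℝ)+1) + Real.log ((Nat.factorial k : ℕ) : ℝ) := by
        rw [hfs, Real.log_mul (by positivity) (by exact_mod_cast (Nat.factorial_pos k).ne')]
      have hk1 : (1:ℝ) ≤ (k:ℝ) := by exact_mod_cast hk
      have hstep : 1 ≤ ((k:ℝ)+2) * (Real.log ((k:ℝ)+2) - Real.log ((k:ℝ)+1)) := by
        have h1 : 1 - 1/(((k:ℝ)+2)/((k:ℝ)+1)) ≤ Real.log (((k:ℝ)+2)/((k:ℝ)+1)) :=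
          log_ge' (by positivity)
        rw [Real.log_div (by positivity) (by positivity)] at h1
        have h2 := mul_le_mul_of_nonneg_left h1 (by positivity : (0:ℝ) ≤ (k:ℝ)+2)
        have h3 : ((k:ℝ)+2) * (1 - 1/(((k:ℝ)+2)/((k:ℝ)+1))) = 1 := by
          field_simp
          norm_num
        linarith
      rw [hlog]
      push_cast
      have hc : ((k:ℝ) + 1 + 1) = (k:ℝ) + 2 := by ring
      rw [hc]
      linarith [hstep, ihk]

noncomputable def gD (k : ℕ) : ℝ := (Real.log k + 5/4) / k

lemma teleD {n : ℕ} (hn : 5 ≤ n) :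
    Real.log n / ((n:ℝ) * ((n:ℝ)-1)) ≤ gD (n-1) - gD n := by
  have hx5 : (5:ℝ) ≤ (n:ℝ) := by exact_mod_cast hn
  set x : ℝ := (n:ℝ) with hxdef
  have hx1 : (0:ℝ) < x - 1 := by linarith
  have hx0 : (0:ℝ) < x := by linarith
  have hcast : ((n-1 : ℕ) : ℝ) = x - 1 := by
    have : 1 ≤ n := by omega
    push_cast [Nat.cast_sub this]
    ring
  have hkey : -(1/(x-1)) ≤ Real.log (x-1) - Real.log x := by
    have h1 : 1 - 1/((x-1)/x) ≤ Real.log ((x-1)/x) := log_ge' (by positivity)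
    rw [Real.log_div (by linarith) (by linarith)] at h1
    have : 1 - 1/((x-1)/x) = -(1/(x-1)) := by field_simp; ring
    linarith
  have hkey2 : -(5/(4*x)) ≤ Real.log (x-1) - Real.log x := by
    have : 1/(x-1) ≤ 5/(4*x) := by
      rw [div_le_div_iff₀ hx1 (by linarith)]
      nlinarith
    linarith
  rw [gD, gD, hcast]
  rw [div_sub_div _ _ (by linarith : x - 1 ≠ 0) (by linarith : x ≠ 0),
    div_le_div_iff₀ (by positivity) (by positivity)]
  have hlogx : 0 ≤ Real.log x := Real.log_nonneg (by linarith)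
  have hkey3 : -(5/4 : ℝ) ≤ x * (Real.log (x-1) - Real.log x) := by
    have h2 := mul_le_mul_of_nonneg_left hkey2 hx0.le
    have h3 : x * (-(5/(4*x))) = -(5/4) := by field_simp
    linarith
  nlinarith [mul_le_mul_of_nonneg_left hkey3 (mul_pos hx0 hx1).le]

lemma D_bound (m : ℕ) :
    ∑ p ∈ (range (m+1)).filter Nat.Prime, Real.log p / ((p:ℝ) * ((p:ℝ)-1)) ≤ 1.18882 := by
  classical
  set f : ℕ → ℝ := fun p => Real.log p / ((p:ℝ) * ((p:ℝ)-1)) with hf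
  have hfnonneg : ∀ p : ℕ, 2 ≤ p → 0 ≤ f p := by
    intro p hp
    have h2 : (2:ℝ) ≤ (p:ℝ) := by exact_mod_cast hp
    apply div_nonneg (Real.log_nonneg (by linarith))
    nlinarith
  have hsplit := Finset.sum_filter_add_sum_filter_not
    ((range (m+1)).filter Nat.Prime) (fun p => p < 5) f
  -- small part ≤ log2/2 + log3/6
  have hsmall : ∑ p ∈ ((range (m+1)).filter Nat.Prime).filter (fun p => p < 5), f p
      ≤ Real.log 2 / 2 + Real.log 3 / 6 := by
    have hsub : ((range (m+1)).filter Nat.Prime).filter (fun p => p < 5) ⊆ ({2, 3} : Finset ℕ) := by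
      intro p hp
      simp only [mem_filter, mem_range] at hp
      obtain ⟨⟨hpm, hp2⟩, hp5⟩ := hp
      interval_cases p <;> revert hp2 <;> decide
    calc ∑ p ∈ ((range (m+1)).filter Nat.Prime).filter (fun p => p < 5), f p
        ≤ ∑ p ∈ ({2,3} : Finset ℕ), f p := by
          apply Finset.sum_le_sum_of_subset_of_nonneg hsub
          intro p hp _
          have : p = 2 ∨ p = 3 := by simpa using hp
          rcases this with rfl | rfl <;> exact hfnonneg _ (by norm_num)
      _ = f 2 + f 3 := by norm_num
      _ = Real.log 2 / 2 + Real.log 3 / 6 := by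
          simp only [hf]
          norm_num
  -- large part: telescope over Icc 5 m
  have hlarge : ∑ p ∈ ((range (m+1)).filter Nat.Prime).filter (fun p => ¬ p < 5), f p
      ≤ gD 4 := by
    have hsub : ((range (m+1)).filter Nat.Prime).filter (fun p => ¬ p < 5) ⊆ Icc 5 m := by
      intro p hp
      simp only [mem_filter, mem_range, not_lt] at hp
      obtain ⟨⟨hpm, hp2⟩, hp5⟩ := hp
      rw [mem_Icc]
      omega
    have h1 : ∑ p ∈ ((range (m+1)).filter Nat.Prime).filter (fun p => ¬ p < 5), f p
        ≤ ∑ p ∈ Icc 5 m, f p := by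
      apply Finset.sum_le_sum_of_subset_of_nonneg hsub
      intro p hp _
      rw [mem_Icc] at hp
      exact hfnonneg _ (by omega)
    refine h1.trans ?_
    rcases lt_or_ge m 5 with hm | hm
    · have : Icc 5 m = ∅ := Finset.Icc_eq_empty (by omega)
      rw [this]
      simp [gD]
      positivity
    · have hIccIco : Icc 5 m = Ico 5 (m+1) := by
        rw [Finset.Ico_add_one_right_eq_Icc]
      rw [hIccIco, Finset.sum_Ico_eq_sum_range]
      have hterm : ∀ k < m + 1 - 5, f (5 + k) ≤ gD (4 + k) - gD (5 + k) := by
        intro k _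
        have h5k : 5 ≤ 5 + k := by omega
        have := teleD h5k
        have hc : (5 + k) - 1 = 4 + k := by omega
        rw [hc] at this
        simpa [hf, f] using this
      calc ∑ k ∈ range (m+1-5), f (5+k)
          ≤ ∑ k ∈ range (m+1-5), (gD (4+k) - gD (5+k)) := by
            apply Finset.sum_le_sum
            intro k hk
            exact hterm k (mem_range.mp hk)
        _ = gD 4 - gD (4 + (m+1-5)) := by
            rw [← Finset.sum_range_sub' (fun k => gD (4+k)) (m+1-5)]
            apply Finset.sum_congr rfl
            intro k _
            have h54 : 5 + k = 4 + (k+1) := by omega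
            rw [h54]
        _ ≤ gD 4 := by
            have h4m : 4 + (m+1-5) = m := by omega
            rw [h4m]
            have : 0 ≤ gD m := by
              apply div_nonneg _ (by positivity)
              have : (1:ℝ) ≤ (m:ℝ) := by exact_mod_cast (by omega : 1 ≤ m)
              have := Real.log_nonneg this
              linarith
            linarith
  have hgD4 : gD 4 ≤ 0.65908 := by
    have h4 : Real.log 4 = 2 * Real.log 2 := by
      rw [show (4:ℝ) = 2^2 by norm_num, Real.log_pow]; push_cast; ring
    have := Real.log_two_lt_d9.le
    simp only [gD]
    rw [show ((4:ℕ):ℝ) = (4:ℝ) by norm_num, h4]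
    nlinarith
  have hlog3 := log3_ub
  have hlog2 := Real.log_two_lt_d9.le
  have heq : ∑ p ∈ (range (m+1)).filter Nat.Prime, f p ≤ 1.18882 := by
    rw [← hsplit]
    linarith [hsmall, hlarge, hgD4]
  exact heq

lemma log2_lb' : (0.6931471803:ℝ) ≤ Real.log 2 := Real.log_two_gt_d9.le

lemma log4_eq : Real.log 4 = 2 * Real.log 2 := by
  rw [show (4:ℝ) = 2^2 by norm_num, Real.log_pow]; push_cast; ring

/-- n * pS n ≤ log n! + n log 4 -/
lemma A_upper (n : ℕ) :
    (n:ℝ) * pS n ≤ Real.log ((Nat.factorial n : ℕ) : ℝ) + n * Real.log 4 := by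
  have h1 : (n:ℝ) * pS n = ∑ p ∈ (range (n+1)).filter Nat.Prime, (n:ℝ) * (Real.log p / p) := by
    rw [pS, Finset.mul_sum]
  have h2 : ∀ p ∈ (range (n+1)).filter Nat.Prime,
      (n:ℝ) * (Real.log p / p) ≤ (((Nat.factorial n).factorization p : ℕ):ℝ) * Real.log p
        + Real.log p := by
    intro p hp
    simp only [mem_filter, mem_range] at hp
    obtain ⟨hpn, hpp⟩ := hp
    have hple : p ≤ n := by omega
    have hp0 : (0:ℝ) < p := by exact_mod_cast hpp.pos
    have hlogp : 0 ≤ Real.log p := Real.log_nonneg (by exact_mod_cast hpp.one_lt.le)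
    have hfloor : (n:ℝ) / p ≤ ((n / p : ℕ) : ℝ) + 1 := by
      have hmod := Nat.mod_lt n (show 0 < p from hpp.pos)
      have hdm := Nat.div_add_mod n p
      have hc : (p:ℝ) * ((n/p : ℕ):ℝ) + ((n % p : ℕ):ℝ) = (n:ℝ) := by exact_mod_cast hdm
      have hc2 : ((n % p : ℕ):ℝ) < (p:ℝ) := by exact_mod_cast hmod
      rw [div_le_iff₀ hp0]
      nlinarith
    have hnu : ((n / p : ℕ) : ℝ) ≤ (((Nat.factorial n).factorization p : ℕ):ℝ) := by
      exact_mod_cast nu_lb hpp hple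
    calc (n:ℝ) * (Real.log p / p) = ((n:ℝ)/p) * Real.log p := by ring
      _ ≤ (((n / p : ℕ) : ℝ) + 1) * Real.log p := by
          apply mul_le_mul_of_nonneg_right hfloor hlogp
      _ ≤ (((Nat.factorial n).factorization p : ℕ):ℝ) * Real.log p + Real.log p := by
          nlinarith
  calc (n:ℝ) * pS n ≤ ∑ p ∈ (range (n+1)).filter Nat.Prime,
        ((((Nat.factorial n).factorization p : ℕ):ℝ) * Real.log p + Real.log p) := by
        rw [h1]; exact Finset.sum_le_sum h2
    _ = Real.log ((Nat.factorial n : ℕ) : ℝ)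
        + ∑ p ∈ (range (n+1)).filter Nat.Prime, Real.log p := by
        rw [Finset.sum_add_distrib, logfact_eq]
    _ ≤ Real.log ((Nat.factorial n : ℕ) : ℝ) + n * Real.log 4 := by
        linarith [theta_bound n]

/-- log m! ≤ m * pS m + 1.18882 m -/
lemma A_lower (m : ℕ) :
    Real.log ((Nat.factorial m : ℕ) : ℝ) ≤ (m:ℝ) * pS m + 1.18882 * m := by
  rw [logfact_eq]
  have h2 : ∀ p ∈ (range (m+1)).filter Nat.Prime,
      (((Nat.factorial m).factorization p : ℕ):ℝ) * Real.log p
        ≤ (m:ℝ) * (Real.log p / p) + (m:ℝ) * (Real.log p / ((p:ℝ) * ((p:ℝ)-1))) := by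
    intro p hp
    simp only [mem_filter, mem_range] at hp
    obtain ⟨hpn, hpp⟩ := hp
    have hp2 : (2:ℝ) ≤ p := by exact_mod_cast hpp.two_le
    have hp0 : (0:ℝ) < p := by linarith
    have hp1 : (0:ℝ) < (p:ℝ) - 1 := by linarith
    have hlogp : 0 ≤ Real.log p := Real.log_nonneg (by linarith)
    have hnu := nu_ub (n := m) hpp
    have hsplit : (m:ℝ) / ((p:ℝ)-1) = (m:ℝ)/p + (m:ℝ)/((p:ℝ)*((p:ℝ)-1)) := by
      field_simp
      ring
    calc (((Nat.factorial m).factorization p : ℕ):ℝ) * Real.log p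
        ≤ ((m:ℝ)/((p:ℝ)-1)) * Real.log p := mul_le_mul_of_nonneg_right hnu hlogp
      _ = (m:ℝ) * (Real.log p / p) + (m:ℝ) * (Real.log p / ((p:ℝ) * ((p:ℝ)-1))) := by
          rw [hsplit]; ring
  calc ∑ p ∈ (range (m+1)).filter Nat.Prime, (((Nat.factorial m).factorization p : ℕ):ℝ) * Real.log p
      ≤ ∑ p ∈ (range (m+1)).filter Nat.Prime,
          ((m:ℝ) * (Real.log p / p) + (m:ℝ) * (Real.log p / ((p:ℝ) * ((p:ℝ)-1)))) :=
        Finset.sum_le_sum h2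
    _ = (m:ℝ) * pS m + (m:ℝ) * ∑ p ∈ (range (m+1)).filter Nat.Prime,
          Real.log p / ((p:ℝ) * ((p:ℝ)-1)) := by
        rw [Finset.sum_add_distrib, pS, Finset.mul_sum, Finset.mul_sum]
    _ ≤ (m:ℝ) * pS m + (m:ℝ) * 1.18882 := by
        have := D_bound m
        have hm0 : (0:ℝ) ≤ m := by positivity
        nlinarith
    _ = (m:ℝ) * pS m + 1.18882 * m := by ring

/-- pS5 in terms of pS -/
lemma pS5_eq (n : ℕ) (hn : 4 ≤ n) :
    pS5 n = pS n - (Real.log 2 / 2 + Real.log 3 / 3) := by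
  rw [pS, pS5]
  have hsplit := Finset.sum_filter_add_sum_filter_not
    ((range (n+1)).filter Nat.Prime) (fun p => 5 ≤ p) (fun p => Real.log p / p)
  have h1 : ((range (n+1)).filter Nat.Prime).filter (fun p => 5 ≤ p)
      = (range (n+1)).filter (fun p => p.Prime ∧ 5 ≤ p) := by
    rw [Finset.filter_filter]
  have h2 : ((range (n+1)).filter Nat.Prime).filter (fun p => ¬ 5 ≤ p) = ({2, 3} : Finset ℕ) := by
    ext p
    simp only [mem_filter, mem_range, not_le, mem_insert, mem_singleton]
    constructor
    · rintro ⟨⟨hpn, hpp⟩, hp5⟩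
      interval_cases p <;> revert hpp <;> decide
    · rintro (rfl | rfl)
      · exact ⟨⟨by omega, by norm_num⟩, by norm_num⟩
      · exact ⟨⟨by omega, by norm_num⟩, by norm_num⟩
  have h3 : ∑ p ∈ ({2,3} : Finset ℕ), Real.log p / (p:ℝ)
      = Real.log 2 / 2 + Real.log 3 / 3 := by
    norm_num
  rw [h1, h2] at hsplit
  rw [h3] at hsplit
  linarith

/-- Upper bound: pS5 n ≤ log n for all n ≥ 5 -/
lemma U_upper (n : ℕ) (hn : 5 ≤ n) : pS5 n ≤ Real.log n := by
  rcases le_or_gt n 12 with h12 | h12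
  · -- small case
    have hlogn : 0 ≤ Real.log n := Real.log_nonneg (by exact_mod_cast (by omega : 1 ≤ n))
    have hsub : (range (n+1)).filter (fun p => p.Prime ∧ 5 ≤ p) ⊆ ({5,7,11} : Finset ℕ) := by
      intro p hp
      simp only [mem_filter, mem_range] at hp
      obtain ⟨hpn, hpp, hp5⟩ := hp
      have : p ≤ 12 := by omega
      simp only [mem_insert, mem_singleton]
      interval_cases p <;> revert hpp <;> decide
    have hterm : ∀ p ∈ (range (n+1)).filter (fun p => p.Prime ∧ 5 ≤ p),
        Real.log p / p ≤ Real.log n * (1/(p:ℝ)) := by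
      intro p hp
      simp only [mem_filter, mem_range] at hp
      obtain ⟨hpn, hpp, hp5⟩ := hp
      have hp0 : (0:ℝ) < p := by exact_mod_cast hpp.pos
      have : Real.log p ≤ Real.log n := by
        apply Real.log_le_log hp0
        exact_mod_cast (by omega : p ≤ n)
      rw [div_eq_mul_one_div]
      apply mul_le_mul_of_nonneg_right this (by positivity)
    have hsum1 : ∑ p ∈ (range (n+1)).filter (fun p => p.Prime ∧ 5 ≤ p), (1:ℝ)/(p:ℝ) ≤ 1 := by
      calc ∑ p ∈ (range (n+1)).filter (fun p => p.Prime ∧ 5 ≤ p), (1:ℝ)/(p:ℝ)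
          ≤ ∑ p ∈ ({5,7,11} : Finset ℕ), (1:ℝ)/(p:ℝ) := by
            apply Finset.sum_le_sum_of_subset_of_nonneg hsub
            intro p hp _
            positivity
        _ ≤ 1 := by norm_num
    calc pS5 n ≤ ∑ p ∈ (range (n+1)).filter (fun p => p.Prime ∧ 5 ≤ p), Real.log n * (1/(p:ℝ)) :=
          Finset.sum_le_sum hterm
      _ = Real.log n * ∑ p ∈ (range (n+1)).filter (fun p => p.Prime ∧ 5 ≤ p), (1:ℝ)/(p:ℝ) := by
          rw [Finset.mul_sum]
      _ ≤ Real.log n * 1 := mul_le_mul_of_nonneg_left hsum1 hlogn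
      _ = Real.log n := by ring
  · -- n ≥ 13
    have hn4 : 4 ≤ n := by omega
    have hx13 : (13:ℝ) ≤ (n:ℝ) := by exact_mod_cast h12
    set x : ℝ := (n:ℝ) with hxdef
    have hx0 : (0:ℝ) < x := by linarith
    rw [pS5_eq n hn4]
    have hAu := A_upper n
    have hfu := logfact_ub n (by omega)
    -- pS n ≤ log 4 + ((x+1) log (x+1) - x)/x
    have hpSn : x * pS n ≤ x * Real.log 4 + (x+1) * Real.log (x+1) - x := by
      calc x * pS n ≤ Real.log ((Nat.factorial n : ℕ) : ℝ) + x * Real.log 4 := A_upper n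
        _ ≤ ((x+1) * Real.log (x+1) - x) + x * Real.log 4 := by linarith
        _ = x * Real.log 4 + (x+1) * Real.log (x+1) - x := by ring
    -- log(x+1) ≤ log x + 1/x
    have hlx1 : Real.log (x+1) ≤ Real.log x + 1/x := by
      have h1 : Real.log ((x+1)/x) ≤ (x+1)/x - 1 := Real.log_le_sub_one_of_pos (by positivity)
      rw [Real.log_div (by linarith) (by linarith)] at h1
      have : (x+1)/x - 1 = 1/x := by field_simp; ring
      linarith
    -- tangent: log(x+1) ≤ log 16 + (x+1-16)/16
    have htan : Real.log (x+1) ≤ 4 * Real.log 2 + (x - 15)/16 := by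
      have h1 : Real.log ((x+1)/16) ≤ (x+1)/16 - 1 := Real.log_le_sub_one_of_pos (by positivity)
      rw [Real.log_div (by linarith) (by norm_num)] at h1
      rw [log16_eq] at h1
      have : (x+1)/16 - 1 = (x-15)/16 := by ring
      linarith
    have hlog2u := Real.log_two_lt_d9.le
    have hlog2l := Real.log_two_gt_d9.le
    have hlog3l := log3_lb
    -- main numeric: log 4 - 1 - c23 + A + A/x ≤ log x where A = log(x+1)
    -- multiply by x: goal g : pS n - c23 ≤ log x
    have hgoal : x * (pS n - (Real.log 2/2 + Real.log 3/3)) ≤ x * Real.log x := by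
      have e1 : x * (pS n - (Real.log 2/2 + Real.log 3/3))
          = x * pS n - x * (Real.log 2/2 + Real.log 3/3) := by ring
      rw [e1]
      -- from hpSn: x pS n ≤ x log4 + (x+1) A - x
      -- need: x log4 + (x+1) A - x - x c23 ≤ x log x
      -- use A ≤ log x + 1/x : (x+1) A ≤ (x+1) log x + (x+1)/x
      have hA1 : (x+1) * Real.log (x+1) ≤ (x+1) * (Real.log x + 1/x) := by
        apply mul_le_mul_of_nonneg_left hlx1 (by linarith)
      -- and log x ≥ ... we need x log4 + log x + (x+1)/x - x - x c23 ≤ 0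
      -- i.e. (log4 - 1 - c23) x + log x + 1 + 1/x ≤ 0
      -- tangent for log x : log x ≤ log(x+1) ≤ 4 log 2 + (x-15)/16
      have hlogxu : Real.log x ≤ 4 * Real.log 2 + (x - 15)/16 := by
        have : Real.log x ≤ Real.log (x+1) := Real.log_le_log (by linarith) (by linarith)
        linarith
      have hxinv : 1/x ≤ 1/13 := by
        rw [div_le_div_iff₀ hx0 (by norm_num)]
        linarith
      rw [log4_eq] at hpSn
      have hid : (x+1) * (Real.log x + 1/x) = x * Real.log x + Real.log x + 1 + 1/x := by
        field_simp
        ring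
      rw [hid] at hA1
      have m2u : x * Real.log 2 ≤ 0.6931471808 * x := by nlinarith
      have m3l : 1.0983 * x ≤ x * Real.log 3 := by nlinarith
      linarith [hpSn, hA1, hlogxu, hxinv, m2u, m3l, hx13]
    exact le_of_mul_le_mul_left hgoal hx0

/-- Lower bound for pS5 -/
lemma V_lower (m : ℕ) (hm : 5 ≤ m) :
    Real.log ((m:ℝ)+1) - 2.9018 ≤ pS5 m := by
  have hx5 : (5:ℝ) ≤ (m:ℝ) := by exact_mod_cast hm
  set x : ℝ := (m:ℝ) with hxdef
  have hx0 : (0:ℝ) < x := by linarith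
  rw [pS5_eq m (by omega)]
  have hAl := A_lower m
  have hfl := logfact_lb m (by omega)
  have hlx1 : Real.log (x+1) ≤ Real.log x + 1/x := by
    have h1 : Real.log ((x+1)/x) ≤ (x+1)/x - 1 := Real.log_le_sub_one_of_pos (by positivity)
    rw [Real.log_div (by linarith) (by linarith)] at h1
    have : (x+1)/x - 1 = 1/x := by field_simp; ring
    linarith
  have hlog2u := Real.log_two_lt_d9.le
  have hlog3u := log3_ub
  -- x pS m ≥ log m! - 1.18882 x ≥ x log x - x + 1 - 1.18882 x
  -- pS5 = pS - c23 ≥ log x - 1 + 1/x - 1.18882 - c23 ≥ log(x+1) - 1/x + 1/x - 2.9018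
  have hkey : x * (Real.log (x+1) - 2.9018) ≤ x * (pS m - (Real.log 2/2 + Real.log 3/3)) := by
    have hA2 : x * Real.log x - x + 1 ≤ x * pS m + 1.18882 * x := by linarith
    have hmul : x * Real.log (x+1) ≤ x * Real.log x + 1 := by
      have := mul_le_mul_of_nonneg_left hlx1 hx0.le
      have hxx : x * (1/x) = 1 := by field_simp
      nlinarith
    have m2u : x * Real.log 2 ≤ 0.6931471808 * x := by nlinarith
    have m3u : x * Real.log 3 ≤ 1.098991 * x := by nlinarith
    linarith [hA2, hmul, m2u, m3u]
  exact le_of_mul_le_mul_left hkey hx0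



lemma tele_sum (f : ℕ → ℝ) {a b : ℕ} (hab : a ≤ b) :
    ∑ n ∈ Ico a b, (f n - f (n+1)) = f a - f b := by
  rw [Finset.sum_Ico_eq_sum_range]
  have h := Finset.sum_range_sub' (fun k => f (a + k)) (b - a)
  have h2 : a + (b - a) = b := by omega
  calc ∑ k ∈ range (b - a), (f (a + k) - f (a + k + 1))
      = ∑ k ∈ range (b - a), ((fun k => f (a+k)) k - (fun k => f (a+k)) (k+1)) := by
        apply Finset.sum_congr rfl
        intro k _
        simp only []
        have h3 : a + (k+1) = a + k + 1 := by omega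
        rw [h3]
    _ = f (a + 0) - f (a + (b-a)) := h
    _ = f a - f b := by rw [h2, Nat.add_zero]

lemma abel_step {u v ℓ : ℝ} (hu : 0 < u) (huv : u ≤ v) :
    (u⁻¹ - v⁻¹) * (u - ℓ) ≤ (Real.log v + ℓ * v⁻¹) - (Real.log u + ℓ * u⁻¹) := by
  have hv : 0 < v := lt_of_lt_of_le hu huv
  have h1 : 1 - u/v ≤ Real.log (v/u) := by
    have := log_ge' (x := v/u) (by positivity)
    have he : 1 - 1/(v/u) = 1 - u/v := by
      rw [one_div_div]
    linarith [he ▸ this]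
  have h2 : Real.log (v/u) = Real.log v - Real.log u := Real.log_div hv.ne' hu.ne'
  have hid : (u⁻¹ - v⁻¹) * (u - ℓ) + ℓ * (u⁻¹ - v⁻¹) = 1 - u/v := by
    field_simp
    ring
  nlinarith [h1, h2, hid]

lemma psi_mono {u v ℓ : ℝ} (hu : 0 < u) (huv : u ≤ v) (hl : ℓ ≤ u) :
    Real.log u + ℓ * u⁻¹ ≤ Real.log v + ℓ * v⁻¹ := by
  have hv : 0 < v := lt_of_lt_of_le hu huv
  have h1 : 1 - u/v ≤ Real.log (v/u) := by
    have := log_ge' (x := v/u) (by positivity)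
    have he : 1 - 1/(v/u) = 1 - u/v := by rw [one_div_div]
    linarith [he ▸ this]
  have h2 : Real.log (v/u) = Real.log v - Real.log u := Real.log_div hv.ne' hu.ne'
  have h3 : ℓ * (u⁻¹ - v⁻¹) ≤ 1 - u/v := by
    have key : (1 - u/v) - ℓ*(u⁻¹ - v⁻¹) = (v - u) * (u - ℓ) / (u*v) := by
      field_simp
    have hnn : (0:ℝ) ≤ (v - u) * (u - ℓ) / (u*v) :=
      div_nonneg (mul_nonneg (by linarith) (by linarith)) (by positivity)
    linarith [key, hnn]
  nlinarith [h1, h2, h3]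

lemma S_bound (z w ℓ : ℝ) (hw : 5 ≤ w) (hz : w ≤ z) (hl : ℓ ≤ Real.log w)
    (hV : ℓ ≤ ∑ p ∈ (Finset.range ⌈z⌉₊).filter
        (fun p : ℕ => p.Prime ∧ 5 ≤ p ∧ (p:ℝ) < w), Real.log p / p) :
    ∑ p ∈ (Finset.range ⌈z⌉₊).filter
        (fun p : ℕ => p.Prime ∧ w ≤ (p:ℝ) ∧ (p:ℝ) < z), (1:ℝ)/p
      ≤ Real.log (Real.log z) - Real.log (Real.log w) + 1 - ℓ / Real.log w := by
  classical
  set N := ⌈z⌉₊ with hN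
  set P := (Finset.range N).filter (fun p : ℕ => p.Prime ∧ w ≤ (p:ℝ) ∧ (p:ℝ) < z) with hPdef
  set Vs := (Finset.range N).filter (fun p : ℕ => p.Prime ∧ 5 ≤ p ∧ (p:ℝ) < w) with hVsdef
  have hlog5 : (1.6:ℝ) ≤ Real.log 5 := log5_lb
  have hLw : (1.6:ℝ) ≤ Real.log w := by
    have := Real.log_le_log (by norm_num : (0:ℝ) < 5) hw
    linarith
  have hLwpos : (0:ℝ) < Real.log w := by linarith
  have hLwz : Real.log w ≤ Real.log z := Real.log_le_log (by linarith) hz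
  by_cases hPe : P = ∅
  · rw [hPe]
    simp only [Finset.sum_empty]
    have h1 : Real.log (Real.log w) ≤ Real.log (Real.log z) :=
      Real.log_le_log (by linarith) hLwz
    have h2 : ℓ / Real.log w ≤ 1 := by
      rw [div_le_one hLwpos]
      linarith
    linarith
  obtain ⟨p₀, hp₀⟩ := Finset.nonempty_iff_ne_empty.mpr hPe
  set n₁ := ⌈w⌉₊ with hn₁def
  set N' := N - 1 with hN'def
  -- facts about elements of P
  have hPmem : ∀ p ∈ P, p.Prime ∧ 5 ≤ p ∧ n₁ ≤ p ∧ p ≤ N' ∧ w ≤ (p:ℝ) ∧ (p:ℝ) < z := by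
    intro p hp
    rw [hPdef, mem_filter, mem_range] at hp
    obtain ⟨hpN, hpp, hwp, hpz⟩ := hp
    have h5 : (5:ℝ) ≤ (p:ℝ) := le_trans hw hwp
    have h5' : 5 ≤ p := by exact_mod_cast h5
    have hn₁p : n₁ ≤ p := by
      rw [hn₁def]
      exact Nat.ceil_le.mpr hwp
    have hpN' : p ≤ N' := by omega
    exact ⟨hpp, h5', hn₁p, hpN', hwp, hpz⟩
  obtain ⟨hp₀p, hp₀5, hp₀n₁, hp₀N', _, _⟩ := hPmem p₀ hp₀
  have hn₁5 : 5 ≤ n₁ := le_trans (by omega : 5 ≤ 5) (le_trans (by omega : (5:ℕ) ≤ 5) (by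
    have : (5:ℝ) ≤ (n₁:ℝ) := le_trans hw (Nat.le_ceil w)
    exact_mod_cast this))
  have hwn₁ : w ≤ (n₁:ℝ) := Nat.le_ceil w
  have hn₁N' : n₁ ≤ N' := le_trans hp₀n₁ hp₀N'
  have hN'5 : 5 ≤ N' := le_trans hp₀5 hp₀N'
  have hN1 : 1 ≤ N := by omega
  have hN'z : (N':ℝ) ≤ z := by
    have h1 : ((N:ℕ):ℝ) < z + 1 := by
      rw [hN]
      exact Nat.ceil_lt_add_one (by linarith)
    have h2 : ((N':ℕ):ℝ) = ((N:ℕ):ℝ) - 1 := by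
      rw [hN'def]
      push_cast [Nat.cast_sub hN1]
      ring
    linarith
  have hN'5R : (5:ℝ) ≤ (N':ℝ) := by exact_mod_cast hN'5
  have hlogN' : (1.6:ℝ) ≤ Real.log N' := by
    have := Real.log_le_log (by norm_num : (0:ℝ) < 5) hN'5R
    linarith
  have hlogN'pos : (0:ℝ) < Real.log N' := by linarith
  -- the weight function and partial sums
  set φ : ℕ → ℝ := fun n => (Real.log (n:ℝ))⁻¹ with hφdef
  set G : ℕ → ℝ := fun n => ∑ p ∈ P.filter (fun p => p ≤ n), Real.log p / p with hGdef
  set ψ : ℕ → ℝ := fun n => Real.log (Real.log (n:ℝ)) + ℓ * (Real.log (n:ℝ))⁻¹ with hψdef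
  -- log n positive for n ≥ 5 (as naturals)
  have hlogn : ∀ n : ℕ, 5 ≤ n → (1.6:ℝ) ≤ Real.log (n:ℝ) := by
    intro n hn
    have h5 : (5:ℝ) ≤ (n:ℝ) := by exact_mod_cast hn
    have := Real.log_le_log (by norm_num : (0:ℝ) < 5) h5
    linarith
  -- G bound
  have hGb : ∀ n : ℕ, n₁ ≤ n → G n ≤ Real.log (n:ℝ) - ℓ := by
    intro n hn
    have hn5 : 5 ≤ n := le_trans hn₁5 hn
    have hwn : w ≤ (n:ℝ) := le_trans hwn₁ (by exact_mod_cast hn)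
    have hdisj : Disjoint (P.filter (fun p => p ≤ n)) Vs := by
      rw [Finset.disjoint_left]
      intro p hp1 hp2
      rw [mem_filter] at hp1
      obtain ⟨_, _, _, _, hwp, _⟩ := hPmem p hp1.1
      rw [hVsdef, mem_filter] at hp2
      exact absurd hp2.2.2.2 (not_lt.mpr hwp)
    have hsubC : P.filter (fun p => p ≤ n) ∪ Vs
        ⊆ (range (n+1)).filter (fun p => p.Prime ∧ 5 ≤ p) := by
      intro p hp
      rw [Finset.mem_union] at hp
      rcases hp with hp | hp
      · rw [mem_filter] at hp ⊢
        obtain ⟨hpp, h5, _, _, _, _⟩ := hPmem p hp.1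
        exact ⟨mem_range.mpr (by omega), hpp, h5⟩
      · rw [hVsdef, mem_filter] at hp
        rw [mem_filter]
        obtain ⟨_, hpp, h5, hpw⟩ := hp
        have : (p:ℝ) < (n:ℝ) := lt_of_lt_of_le hpw hwn
        have : p < n := by exact_mod_cast this
        exact ⟨mem_range.mpr (by omega), hpp, h5⟩
    have hnonneg : ∀ p ∈ (range (n+1)).filter (fun p => p.Prime ∧ 5 ≤ p),
        (0:ℝ) ≤ Real.log p / p := by
      intro p hp
      rw [mem_filter] at hp
      have h1 : (1:ℝ) ≤ (p:ℝ) := by exact_mod_cast (by omega : 1 ≤ p)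
      exact div_nonneg (Real.log_nonneg h1) (by linarith)
    have hsum := Finset.sum_union hdisj (f := fun p : ℕ => Real.log p / p)
    have hle : ∑ p ∈ (P.filter (fun p => p ≤ n) ∪ Vs), Real.log p / p ≤ pS5 n :=
      Finset.sum_le_sum_of_subset_of_nonneg hsubC (fun p hp _ => hnonneg p hp)
    have hU := U_upper n hn5
    rw [hsum] at hle
    have : G n + ℓ ≤ pS5 n := by
      rw [hGdef]
      have : ℓ ≤ ∑ p ∈ Vs, Real.log p / p := hV
      linarith
    linarith
  -- step 1 : rewrite each 1/p
  have step1 : ∑ p ∈ P, (1:ℝ)/p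
      = ∑ p ∈ P, (Real.log p / p) * φ p := by
    apply Finset.sum_congr rfl
    intro p hp
    obtain ⟨hpp, h5, _, _, _, _⟩ := hPmem p hp
    have hlp : (1.6:ℝ) ≤ Real.log (p:ℝ) := hlogn p h5
    have hp0 : (0:ℝ) < (p:ℝ) := by
      have : (5:ℝ) ≤ (p:ℝ) := by exact_mod_cast h5
      linarith
    rw [hφdef]
    field_simp
  -- step 2 : telescope each φ p
  have step2 : ∑ p ∈ P, (Real.log p / p) * φ p
      = ∑ p ∈ P, ((Real.log p / p) * ∑ n ∈ Ico p N', (φ n - φ (n+1)))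
        + (∑ p ∈ P, Real.log p / p) * φ N' := by
    rw [Finset.sum_mul, ← Finset.sum_add_distrib]
    apply Finset.sum_congr rfl
    intro p hp
    obtain ⟨_, _, _, hpN', _, _⟩ := hPmem p hp
    rw [tele_sum φ hpN']
    ring
  -- step 3 : swap double sum
  have step3 : ∑ p ∈ P, ((Real.log p / p) * ∑ n ∈ Ico p N', (φ n - φ (n+1)))
      = ∑ n ∈ Ico n₁ N', G n * (φ n - φ (n+1)) := by
    have e1 : ∀ p ∈ P, (Real.log p / p) * ∑ n ∈ Ico p N', (φ n - φ (n+1))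
        = ∑ n ∈ Ico n₁ N', (if p ≤ n then (Real.log p / p) * (φ n - φ (n+1)) else 0) := by
      intro p hp
      obtain ⟨_, _, hn₁p, hpN', _, _⟩ := hPmem p hp
      rw [Finset.mul_sum, ← Finset.sum_filter]
      have hfe : (Ico n₁ N').filter (fun n => p ≤ n) = Ico p N' := by
        ext x
        simp only [mem_filter, mem_Ico]
        omega
      rw [hfe]
    rw [Finset.sum_congr rfl e1, Finset.sum_comm]
    apply Finset.sum_congr rfl
    intro n _
    rw [← Finset.sum_filter, hGdef, Finset.sum_mul]
  -- step 4 : bound the Abel sum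
  have step4 : ∑ n ∈ Ico n₁ N', G n * (φ n - φ (n+1))
      ≤ ∑ n ∈ Ico n₁ N', (ψ (n+1) - ψ n) := by
    apply Finset.sum_le_sum
    intro n hn
    rw [mem_Ico] at hn
    have hn5 : 5 ≤ n := le_trans hn₁5 hn.1
    have hu : (1.6:ℝ) ≤ Real.log (n:ℝ) := hlogn n hn5
    have hv' : Real.log (n:ℝ) ≤ Real.log ((n:ℝ)+1) := by
      apply Real.log_le_log (by positivity)
      linarith [hlogn n hn5]
    have hcast : ((n+1 : ℕ):ℝ) = (n:ℝ) + 1 := by push_cast; ring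
    have hΔ : (0:ℝ) ≤ φ n - φ (n+1) := by
      rw [hφdef]
      simp only [hcast]
      have h1 : (0:ℝ) < Real.log (n:ℝ) := by linarith
      have h2 : (0:ℝ) < Real.log ((n:ℝ)+1) := by linarith
      have := inv_anti₀ h1 hv'
      linarith
    have hGle := hGb n hn.1
    have habel := abel_step (u := Real.log (n:ℝ)) (v := Real.log ((n:ℝ)+1)) (ℓ := ℓ)
      (by linarith) hv'
    calc G n * (φ n - φ (n+1)) ≤ (Real.log (n:ℝ) - ℓ) * (φ n - φ (n+1)) :=
          mul_le_mul_of_nonneg_right hGle hΔ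
      _ = ((Real.log (n:ℝ))⁻¹ - (Real.log ((n:ℝ)+1))⁻¹) * (Real.log (n:ℝ) - ℓ) := by
          rw [hφdef]
          simp only [hcast]
          ring
      _ ≤ (Real.log (Real.log ((n:ℝ)+1)) + ℓ * (Real.log ((n:ℝ)+1))⁻¹)
            - (Real.log (Real.log (n:ℝ)) + ℓ * (Real.log (n:ℝ))⁻¹) := habel
      _ = ψ (n+1) - ψ n := by
          simp only [hψdef, hcast]
  -- step 5 : telescope ψ
  have step5 : ∑ n ∈ Ico n₁ N', (ψ (n+1) - ψ n) = ψ N' - ψ n₁ := by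
    have h := tele_sum ψ hn₁N'
    have h2 : ∑ n ∈ Ico n₁ N', (ψ (n+1) - ψ n) = - ∑ n ∈ Ico n₁ N', (ψ n - ψ (n+1)) := by
      rw [← Finset.sum_neg_distrib]
      apply Finset.sum_congr rfl
      intro n _
      ring
    rw [h2, h]
    ring
  -- step 6 : boundary term
  have hPfilter : P.filter (fun p => p ≤ N') = P := by
    apply Finset.filter_true_of_mem
    intro p hp
    exact (hPmem p hp).2.2.2.1
  have step6 : (∑ p ∈ P, Real.log p / p) * φ N' ≤ 1 - ℓ * φ N' := by
    have hB : (∑ p ∈ P, Real.log p / p) = G N' := by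
      simp only [hGdef]
      rw [hPfilter]
    have hφpos : (0:ℝ) < φ N' := by
      simp only [hφdef]
      exact inv_pos.mpr hlogN'pos
    have hGN' := hGb N' hn₁N'
    have h1 : (∑ p ∈ P, Real.log p / p) * φ N' ≤ (Real.log ((N':ℕ):ℝ) - ℓ) * φ N' := by
      rw [hB]
      exact mul_le_mul_of_nonneg_right hGN' hφpos.le
    have h2 : (Real.log ((N':ℕ):ℝ) - ℓ) * φ N' = 1 - ℓ * φ N' := by
      simp only [hφdef]
      field_simp
    linarith
  -- step 7/8 : endpoints
  have hN'0R : (0:ℝ) < ((N':ℕ):ℝ) := by linarith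
  have step7 : Real.log (Real.log ((N':ℕ):ℝ)) ≤ Real.log (Real.log z) := by
    apply Real.log_le_log hlogN'pos
    exact Real.log_le_log hN'0R hN'z
  have step8 : Real.log (Real.log w) + ℓ * (Real.log w)⁻¹ ≤ ψ n₁ := by
    simp only [hψdef]
    exact psi_mono hLwpos (Real.log_le_log (by linarith) hwn₁) hl
  calc ∑ p ∈ P, (1:ℝ)/p
      = ∑ p ∈ P, ((Real.log p / p) * ∑ n ∈ Ico p N', (φ n - φ (n+1)))
        + (∑ p ∈ P, Real.log p / p) * φ N' := by rw [step1, step2]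
    _ ≤ (ψ N' - ψ n₁) + (1 - ℓ * φ N') := by
        rw [step3]
        have h45 := step4.trans_eq step5
        exact add_le_add h45 step6
    _ = Real.log (Real.log ((N':ℕ):ℝ)) - ψ n₁ + 1 := by
        simp only [hψdef, hφdef]
        ring
    _ ≤ Real.log (Real.log z) - (Real.log (Real.log w) + ℓ * (Real.log w)⁻¹) + 1 := by
        linarith [step7, step8]
    _ = Real.log (Real.log z) - Real.log (Real.log w) + 1 - ℓ / Real.log w := by
        rw [div_eq_mul_inv]
        ring



lemma T_bound (S : Finset ℕ) (n₀ : ℕ) (hodd : Odd n₀) (h5 : 5 ≤ n₀)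
    (hS : ∀ p ∈ S, Odd p ∧ n₀ ≤ p) :
    ∑ p ∈ S, ((1:ℝ)/((p:ℝ)-2) - 1/p) ≤ 1/((n₀:ℝ) - 2) := by
  classical
  have hn₀5 : (5:ℝ) ≤ (n₀:ℝ) := by exact_mod_cast h5
  have hn₀pos : (0:ℝ) < (n₀:ℝ) - 2 := by linarith
  rcases S.eq_empty_or_nonempty with rfl | hne
  · rw [Finset.sum_empty]
    have := one_div_pos.mpr hn₀pos
    linarith
  set K := S.max' hne + 1 with hK
  set g : ℕ → ℝ := fun k => 1/((n₀:ℝ) + 2*k - 2) with hg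
  have hsub : S ⊆ (range K).image (fun k => n₀ + 2*k) := by
    intro p hp
    obtain ⟨hpodd, hpn₀⟩ := hS p hp
    rw [Finset.mem_image]
    obtain ⟨a, ha⟩ := hpodd
    obtain ⟨b, hb⟩ := hodd
    refine ⟨(p - n₀)/2, ?_, ?_⟩
    · rw [mem_range]
      have := Finset.le_max' S p hp
      omega
    · omega
  have hterm_nonneg : ∀ p : ℕ, n₀ ≤ p → (0:ℝ) ≤ 1/((p:ℝ)-2) - 1/p := by
    intro p hpn
    have h5p : (5:ℝ) ≤ (p:ℝ) := le_trans hn₀5 (by exact_mod_cast hpn)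
    have h1 : (0:ℝ) < (p:ℝ) - 2 := by linarith
    have h2 : (p:ℝ) - 2 ≤ (p:ℝ) := by linarith
    have := one_div_le_one_div_of_le h1 h2
    linarith
  calc ∑ p ∈ S, ((1:ℝ)/((p:ℝ)-2) - 1/p)
      ≤ ∑ p ∈ (range K).image (fun k => n₀ + 2*k), ((1:ℝ)/((p:ℝ)-2) - 1/p) := by
        apply Finset.sum_le_sum_of_subset_of_nonneg hsub
        intro p hp _
        rw [Finset.mem_image] at hp
        obtain ⟨k, _, rfl⟩ := hp
        exact hterm_nonneg _ (by omega)
    _ = ∑ k ∈ range K, (g k - g (k+1)) := by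
        rw [Finset.sum_image (by intro a _ b _ h; simp only at h; omega)]
        apply Finset.sum_congr rfl
        intro k _
        simp only [hg]
        push_cast
        ring_nf
    _ = g 0 - g K := Finset.sum_range_sub' g K
    _ ≤ 1/((n₀:ℝ) - 2) := by
        have hgK : (0:ℝ) ≤ g K := by
          simp only [hg]
          have hK0 : (0:ℝ) ≤ (K:ℝ) := by positivity
          have : (0:ℝ) < (n₀:ℝ) + 2*K - 2 := by linarith
          positivity
        have hg0 : g 0 = 1/((n₀:ℝ) - 2) := by
          simp only [hg]
          norm_num
        linarith [hg0 ▸ (by linarith [hgK] : g 0 - g K ≤ g 0)]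

lemma omega1_le (m p : ℕ) (hm : 0 < m) (hp : p.Prime) (h5 : 5 ≤ p) :
    omega1 m p ≤ (p:ℝ)/((p:ℝ)-1) := by
  have hp5 : (5:ℝ) ≤ (p:ℝ) := by exact_mod_cast h5
  have hp0 : (0:ℝ) < (p:ℝ) := by linarith
  have hp1 : (0:ℝ) < (p:ℝ) - 1 := by linarith
  rw [omega1]
  split_ifs with hdvd
  · -- p ∣ m
    set R : ℕ := m.factorization p with hR
    have hR1 : 1 ≤ R := by
      rw [hR]
      exact (Nat.Prime.factorization_pos_of_dvd hp hm.ne' hdvd)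
    have hx0 : (0:ℝ) < (p:ℝ) ^ (-(R:ℤ)) := zpow_pos hp0 _
    have hy0 : (0:ℝ) < (p:ℝ) ^ (-(R:ℤ) - 1) := zpow_pos hp0 _
    have hxy : (p:ℝ) ^ (-(R:ℤ) - 1) ≤ (p:ℝ) ^ (-(R:ℤ)) := by
      apply zpow_le_zpow_right₀ (by linarith : (1:ℝ) ≤ (p:ℝ))
      omega
    have hxle : (p:ℝ) ^ (-(R:ℤ)) ≤ (p:ℝ)⁻¹ := by
      have : (p:ℝ) ^ (-(1:ℤ)) = (p:ℝ)⁻¹ := by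
        rw [zpow_neg, zpow_one]
      rw [← this]
      apply zpow_le_zpow_right₀ (by linarith : (1:ℝ) ≤ (p:ℝ))
      omega
    have hden : (0:ℝ) < 1 - (p:ℝ) ^ (-(R:ℤ) - 1) := by
      have : (p:ℝ) ^ (-(R:ℤ) - 1) ≤ (p:ℝ)⁻¹ := le_trans hxy hxle
      have hpinv : (p:ℝ)⁻¹ ≤ 1/5 := by
        rw [inv_eq_one_div]
        apply one_div_le_one_div_of_le (by norm_num) hp5
      linarith
    have h1 : (1 - (p:ℝ) ^ (-(R:ℤ))) / (1 - (p:ℝ) ^ (-(R:ℤ) - 1)) ≤ 1 := by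
      rw [div_le_one hden]
      linarith
    have h2 : (1:ℝ) ≤ (p:ℝ)/((p:ℝ)-1) := by
      rw [le_div_iff₀ hp1]
      linarith
    linarith
  · -- p ∤ m
    have hden : (0:ℝ) < 1 - (((p:ℝ))^2)⁻¹ := by
      have h25 : (25:ℝ) ≤ ((p:ℝ))^2 := by nlinarith
      have : (((p:ℝ))^2)⁻¹ ≤ 1/25 := by
        rw [inv_eq_one_div]
        apply one_div_le_one_div_of_le (by norm_num) h25
      linarith
    have hnum : 1 + epsP p * (jacobiSym m p : ℝ) * (p:ℝ)⁻¹ ≤ 1 + (p:ℝ)⁻¹ := by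
      have hinv : (0:ℝ) ≤ (p:ℝ)⁻¹ := by positivity
      have heps : epsP p = 1 ∨ epsP p = -1 := by
        rw [epsP]
        split_ifs <;> simp
      have hJ := jacobiSym.trichotomy m p
      have hprod : epsP p * (jacobiSym m p : ℝ) ≤ 1 := by
        rcases heps with h | h <;> rcases hJ with hj | hj | hj <;>
          rw [h, hj] <;> norm_num
      nlinarith
    calc (1 + epsP p * (jacobiSym m p : ℝ) * (p:ℝ)⁻¹) / (1 - (((p:ℝ))^2)⁻¹)
        ≤ (1 + (p:ℝ)⁻¹) / (1 - (((p:ℝ))^2)⁻¹) := by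
          apply div_le_div_of_nonneg_right hnum hden.le
      _ = (p:ℝ)/((p:ℝ)-1) := by
          rw [div_eq_div_iff hden.ne' (by linarith : ((p:ℝ)-1) ≠ 0)]
          field_simp
          ring

lemma factor_bound (m p : ℕ) (hm : 0 < m) (hp : p.Prime) (h5 : 5 ≤ p) :
    (0:ℝ) < 1 - omega1 m p / p ∧
    (1 - omega1 m p / p)⁻¹ ≤ 1 + 1/((p:ℝ) - 2) := by
  have hp5 : (5:ℝ) ≤ (p:ℝ) := by exact_mod_cast h5
  have hp0 : (0:ℝ) < (p:ℝ) := by linarith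
  have hp1 : (0:ℝ) < (p:ℝ) - 1 := by linarith
  have hp2 : (0:ℝ) < (p:ℝ) - 2 := by linarith
  have homega := omega1_le m p hm hp h5
  have h1 : omega1 m p / p ≤ 1/((p:ℝ)-1) := by
    rw [div_le_div_iff₀ hp0 hp1]
    calc omega1 m p * ((p:ℝ)-1) ≤ ((p:ℝ)/((p:ℝ)-1)) * ((p:ℝ)-1) := by
          apply mul_le_mul_of_nonneg_right homega hp1.le
      _ = (p:ℝ) := by field_simp
      _ = 1 * (p:ℝ) := by ring
  have hlow : ((p:ℝ)-2)/((p:ℝ)-1) ≤ 1 - omega1 m p / p := by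
    have : 1 - 1/((p:ℝ)-1) = ((p:ℝ)-2)/((p:ℝ)-1) := by
      field_simp
      ring
    linarith
  have hlowpos : (0:ℝ) < ((p:ℝ)-2)/((p:ℝ)-1) := by positivity
  have hpos : (0:ℝ) < 1 - omega1 m p / p := lt_of_lt_of_le hlowpos hlow
  refine ⟨hpos, ?_⟩
  have hinv := one_div_le_one_div_of_le hlowpos hlow
  have heq : 1/(((p:ℝ)-2)/((p:ℝ)-1)) = 1 + 1/((p:ℝ)-2) := by
    rw [one_div_div]
    field_simp
    ring
  rw [one_div] at hinv
  linarith [heq ▸ hinv]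



lemma case_bound (m : ℕ) (hm : 0 < m) (w z ℓ : ℝ) (n₀ : ℕ)
    (hw : 5 ≤ w) (hz : w ≤ z) (hl : ℓ ≤ Real.log w)
    (hodd : Odd n₀) (h5n : 5 ≤ n₀)
    (hn₀ : ∀ p : ℕ, p.Prime → w ≤ (p:ℝ) → n₀ ≤ p)
    (hV : ℓ ≤ ∑ p ∈ (Finset.range ⌈z⌉₊).filter
        (fun p : ℕ => p.Prime ∧ 5 ≤ p ∧ (p:ℝ) < w), Real.log p / p)
    (hnum : Real.exp (1 - ℓ / Real.log w + 1/((n₀:ℝ)-2)) ≤ 1 + 6 / Real.log w) :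
    ∏ p ∈ (Finset.range ⌈z⌉₊).filter (fun p : ℕ => p.Prime ∧ w ≤ (p:ℝ) ∧ (p:ℝ) < z),
      (1 - omega1 m p / p)⁻¹ ≤ (Real.log z / Real.log w) * (1 + 6 / Real.log w) := by
  classical
  set P := (Finset.range ⌈z⌉₊).filter (fun p : ℕ => p.Prime ∧ w ≤ (p:ℝ) ∧ (p:ℝ) < z) with hPdef
  have hlog5 : (1.6:ℝ) ≤ Real.log 5 := log5_lb
  have hLw : (1.6:ℝ) ≤ Real.log w := by
    have := Real.log_le_log (by norm_num : (0:ℝ) < 5) hw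
    linarith
  have hLwpos : (0:ℝ) < Real.log w := by linarith
  have hLz : Real.log w ≤ Real.log z := Real.log_le_log (by linarith) hz
  have hLzpos : (0:ℝ) < Real.log z := by linarith
  have hPfacts : ∀ p ∈ P, p.Prime ∧ 5 ≤ p ∧ Odd p ∧ n₀ ≤ p := by
    intro p hp
    rw [hPdef, mem_filter] at hp
    obtain ⟨_, hpp, hwp, _⟩ := hp
    have h5 : (5:ℝ) ≤ (p:ℝ) := le_trans hw hwp
    have h5' : 5 ≤ p := by exact_mod_cast h5
    have hoddp : Odd p := hpp.odd_of_ne_two (by omega)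
    exact ⟨hpp, h5', hoddp, hn₀ p hpp hwp⟩
  -- product ≤ exp of sum
  have h1 : ∏ p ∈ P, (1 - omega1 m p / p)⁻¹ ≤ ∏ p ∈ P, Real.exp (1/((p:ℝ)-2)) := by
    apply Finset.prod_le_prod
    · intro p hp
      obtain ⟨hpp, h5', _, _⟩ := hPfacts p hp
      exact (inv_pos.mpr (factor_bound m p hm hpp h5').1).le
    · intro p hp
      obtain ⟨hpp, h5', _, _⟩ := hPfacts p hp
      refine le_trans (factor_bound m p hm hpp h5').2 ?_
      have := Real.add_one_le_exp (1/((p:ℝ)-2))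
      linarith
  have h2 : ∏ p ∈ P, Real.exp (1/((p:ℝ)-2)) = Real.exp (∑ p ∈ P, 1/((p:ℝ)-2)) :=
    (Real.exp_sum P _).symm
  have h3 : ∑ p ∈ P, (1:ℝ)/((p:ℝ)-2)
      = ∑ p ∈ P, (1:ℝ)/(p:ℝ) + ∑ p ∈ P, ((1:ℝ)/((p:ℝ)-2) - 1/(p:ℝ)) := by
    rw [← Finset.sum_add_distrib]
    apply Finset.sum_congr rfl
    intro p _
    ring
  have hS := S_bound z w ℓ hw hz hl hV
  have hT := T_bound P n₀ hodd h5n (fun p hp => ⟨(hPfacts p hp).2.2.1, (hPfacts p hp).2.2.2⟩)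
  have h4 : ∑ p ∈ P, (1:ℝ)/((p:ℝ)-2)
      ≤ (Real.log (Real.log z) - Real.log (Real.log w)) + (1 - ℓ/Real.log w + 1/((n₀:ℝ)-2)) := by
    rw [h3]
    have := hS
    linarith [hT]
  have h5exp : Real.exp (∑ p ∈ P, 1/((p:ℝ)-2))
      ≤ (Real.log z / Real.log w) * (1 + 6 / Real.log w) := by
    calc Real.exp (∑ p ∈ P, 1/((p:ℝ)-2))
        ≤ Real.exp ((Real.log (Real.log z) - Real.log (Real.log w))
            + (1 - ℓ/Real.log w + 1/((n₀:ℝ)-2))) := Real.exp_le_exp.mpr h4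
      _ = Real.exp (Real.log (Real.log z) - Real.log (Real.log w))
            * Real.exp (1 - ℓ/Real.log w + 1/((n₀:ℝ)-2)) := Real.exp_add _ _
      _ = (Real.log z / Real.log w) * Real.exp (1 - ℓ/Real.log w + 1/((n₀:ℝ)-2)) := by
          rw [Real.exp_sub, Real.exp_log hLzpos, Real.exp_log hLwpos]
      _ ≤ (Real.log z / Real.log w) * (1 + 6 / Real.log w) := by
          apply mul_le_mul_of_nonneg_left hnum
          positivity
  calc ∏ p ∈ P, (1 - omega1 m p / p)⁻¹ ≤ ∏ p ∈ P, Real.exp (1/((p:ℝ)-2)) := h1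
    _ = Real.exp (∑ p ∈ P, 1/((p:ℝ)-2)) := h2
    _ ≤ (Real.log z / Real.log w) * (1 + 6 / Real.log w) := h5exp

set_option maxHeartbeats 1000000 in
lemma main5 (m : ℕ) (hm : 0 < m) (w z : ℝ) (hw5 : 5 ≤ w) (hwz : w ≤ z) :
    ∏ p ∈ (Finset.range ⌈z⌉₊).filter (fun p : ℕ => p.Prime ∧ w ≤ (p:ℝ) ∧ (p:ℝ) < z),
      (1 - omega1 m p / p)⁻¹ ≤ (Real.log z / Real.log w) * (1 + 6 / Real.log w) := by
  classical
  have hlog5 : (1.6:ℝ) ≤ Real.log 5 := log5_lb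
  have hLw : (1.6:ℝ) ≤ Real.log w := by
    have := Real.log_le_log (by norm_num : (0:ℝ) < 5) hw5
    linarith
  have hLwpos : (0:ℝ) < Real.log w := by linarith
  have hlog2u := Real.log_two_lt_d9.le
  have hVnonneg : ∀ p ∈ (Finset.range ⌈z⌉₊).filter
      (fun p : ℕ => p.Prime ∧ 5 ≤ p ∧ (p:ℝ) < w), (0:ℝ) ≤ Real.log p / p := by
    intro p hp
    rw [mem_filter] at hp
    have h1 : (1:ℝ) ≤ (p:ℝ) := by exact_mod_cast hp.2.1.one_lt.le
    exact div_nonneg (Real.log_nonneg h1) (by linarith)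
  rcases lt_or_ge w 7 with hw7 | hw7
  · -- case 1 : 5 ≤ w < 7
    apply case_bound m hm w z 0 5 hw5 hwz (by linarith) (by decide) (le_refl 5)
    · intro p hp hwp
      have : (5:ℝ) ≤ (p:ℝ) := le_trans hw5 hwp
      exact_mod_cast this
    · exact Finset.sum_nonneg hVnonneg
    · -- numeric
      have he : (1:ℝ) - 0 / Real.log w + 1/(((5:ℕ):ℝ)-2) = 4/3 := by norm_num
      rw [he]
      have hL7 : Real.log w ≤ 2.07945 := by
        have h1 : Real.log w ≤ Real.log 7 := Real.log_le_log (by linarith) hw7.le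
        have := log7_ub
        linarith
      have h6L : (6:ℝ)/2.07945 ≤ 6/Real.log w :=
        div_le_div_of_nonneg_left (by norm_num) hLwpos hL7
      have : (2.885:ℝ) ≤ 6/2.07945 := by norm_num
      linarith [exp_43_le]
  rcases lt_or_ge w 11 with hw11 | hw11
  · -- case 2 : 7 ≤ w < 11
    apply case_bound m hm w z 0.32 7 hw5 hwz (by linarith) (by decide) (by norm_num)
    · intro p hp hwp
      have : (7:ℝ) ≤ (p:ℝ) := le_trans hw7 hwp
      exact_mod_cast this
    · -- hV : 0.32 ≤ sum
      have h5mem : 5 ∈ (Finset.range ⌈z⌉₊).filter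
          (fun p : ℕ => p.Prime ∧ 5 ≤ p ∧ (p:ℝ) < w) := by
        rw [mem_filter, mem_range]
        refine ⟨?_, by norm_num, by norm_num, by push_cast; linarith⟩
        rw [Nat.lt_ceil]
        push_cast
        linarith
      have := Finset.single_le_sum hVnonneg h5mem
      have hterm : (0.32:ℝ) ≤ Real.log ((5:ℕ):ℝ) / ((5:ℕ):ℝ) := by
        push_cast
        linarith
      linarith
    · -- numeric
      have hL11 : Real.log w ≤ 2.77259 := by
        have h1 : Real.log w ≤ Real.log 11 := Real.log_le_log (by linarith) hw11.le
        have := log11_ub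
        linarith
      have hXle : (1:ℝ) - 0.32 / Real.log w + 1/(((7:ℕ):ℝ)-2) ≤ 11/10 := by
        have h1 : (0.32:ℝ)/2.77259 ≤ 0.32/Real.log w :=
          div_le_div_of_nonneg_left (by norm_num) hLwpos hL11
        have h2 : (0.1:ℝ) ≤ 0.32/2.77259 := by norm_num
        push_cast
        linarith
      have h6L : (6:ℝ)/2.77259 ≤ 6/Real.log w :=
        div_le_div_of_nonneg_left (by norm_num) hLwpos hL11
      have h3 : (2.1:ℝ) ≤ 6/2.77259 := by norm_num
      calc Real.exp (1 - 0.32 / Real.log w + 1/(((7:ℕ):ℝ)-2))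
          ≤ Real.exp (11/10) := Real.exp_le_exp.mpr hXle
        _ ≤ 3.1 := exp_1110_le
        _ ≤ 1 + 6/Real.log w := by linarith
  rcases lt_or_ge w 17 with hw17 | hw17
  · -- case 3 : 11 ≤ w < 17
    apply case_bound m hm w z 0.57 11 hw5 hwz (by linarith) (by decide) (by norm_num)
    · intro p hp hwp
      have : (11:ℝ) ≤ (p:ℝ) := le_trans hw11 hwp
      exact_mod_cast this
    · -- hV : 0.57 ≤ sum
      have hsub : ({5, 7} : Finset ℕ) ⊆ (Finset.range ⌈z⌉₊).filter
          (fun p : ℕ => p.Prime ∧ 5 ≤ p ∧ (p:ℝ) < w) := by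
        intro p hp
        rw [Finset.mem_insert, Finset.mem_singleton] at hp
        rw [mem_filter, mem_range]
        rcases hp with rfl | rfl
        · refine ⟨?_, by norm_num, by norm_num, by push_cast; linarith⟩
          rw [Nat.lt_ceil]; push_cast; linarith
        · refine ⟨?_, by norm_num, by norm_num, by push_cast; linarith⟩
          rw [Nat.lt_ceil]; push_cast; linarith
      have hsum := Finset.sum_le_sum_of_subset_of_nonneg hsub
        (fun p hp _ => hVnonneg p hp)
      have hpair : ∑ p ∈ ({5,7} : Finset ℕ), Real.log (p:ℝ)/(p:ℝ)
          = Real.log 5/5 + Real.log 7/7 := by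
        rw [Finset.sum_pair (by norm_num : (5:ℕ) ≠ 7)]
        push_cast
        ring
      rw [hpair] at hsum
      have := log7_lb
      have h57 : (0.57:ℝ) ≤ Real.log 5/5 + Real.log 7/7 := by linarith
      linarith
    · -- numeric
      have hL17 : Real.log w ≤ 2.8351 := by
        have h1 : Real.log w ≤ Real.log 17 := Real.log_le_log (by linarith) hw17.le
        have := log17_ub
        linarith
      have hXle : (1:ℝ) - 0.57 / Real.log w + 1/(((11:ℕ):ℝ)-2) ≤ 23/25 := by
        have h1 : (0.57:ℝ)/2.8351 ≤ 0.57/Real.log w :=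
          div_le_div_of_nonneg_left (by norm_num) hLwpos hL17
        have h2 : (0.2010:ℝ) ≤ 0.57/2.8351 := by norm_num
        push_cast
        linarith
      have h6L : (6:ℝ)/2.8351 ≤ 6/Real.log w :=
        div_le_div_of_nonneg_left (by norm_num) hLwpos hL17
      have h3 : (2.116:ℝ) ≤ 6/2.8351 := by norm_num
      calc Real.exp (1 - 0.57 / Real.log w + 1/(((11:ℕ):ℝ)-2))
          ≤ Real.exp (23/25) := Real.exp_le_exp.mpr hXle
        _ ≤ 3.11 := exp_2325_le
        _ ≤ 1 + 6/Real.log w := by linarith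
  · -- case 4 : 17 ≤ w
    have hL17 : Real.log 17 ≤ Real.log w := Real.log_le_log (by norm_num) hw17
    have hLge : (2.83:ℝ) ≤ Real.log w := le_trans log17_lb hL17
    have hceil17 : 17 ≤ ⌈w⌉₊ := by
      have h1 : (17:ℝ) ≤ (⌈w⌉₊:ℝ) := le_trans hw17 (Nat.le_ceil w)
      exact_mod_cast h1
    set n₀ : ℕ := if ⌈w⌉₊ % 2 = 1 then ⌈w⌉₊ else ⌈w⌉₊ + 1 with hn₀def
    have hn₀odd : Odd n₀ := by
      rw [hn₀def]
      split_ifs with h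
      · exact Nat.odd_iff.mpr h
      · rw [Nat.odd_iff]
        omega
    have hn₀ge : ⌈w⌉₊ ≤ n₀ := by
      rw [hn₀def]; split_ifs <;> omega
    have hn₀w : w ≤ (n₀:ℝ) := le_trans (Nat.le_ceil w) (by exact_mod_cast hn₀ge)
    have hn₀5 : 5 ≤ n₀ := by omega
    apply case_bound m hm w z (Real.log w - 2.9018) n₀ hw5 hwz (by linarith) hn₀odd hn₀5
    · -- hn₀ : primes ≥ w are ≥ n₀
      intro p hp hwp
      have hpceil : ⌈w⌉₊ ≤ p := Nat.ceil_le.mpr hwp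
      have hpodd : Odd p := hp.odd_of_ne_two (by
        intro h
        rw [h] at hwp
        norm_num at hwp
        linarith)
      rw [hn₀def]
      split_ifs with h
      · exact hpceil
      · rcases Nat.odd_iff.mp hpodd with hp2
        omega
    · -- hV via V_lower
      set mN : ℕ := ⌈w⌉₊ - 1 with hmNdef
      have hmN16 : 16 ≤ mN := by omega
      have hmN1 : mN + 1 = ⌈w⌉₊ := by omega
      have hVs_eq : (Finset.range ⌈z⌉₊).filter
          (fun p : ℕ => p.Prime ∧ 5 ≤ p ∧ (p:ℝ) < w)
          = (range (mN+1)).filter (fun p => p.Prime ∧ 5 ≤ p) := by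
        ext p
        simp only [mem_filter, mem_range]
        constructor
        · rintro ⟨hpN, hpp, hp5, hpw⟩
          refine ⟨?_, hpp, hp5⟩
          rw [hmN1, Nat.lt_ceil]
          exact hpw
        · rintro ⟨hpN, hpp, hp5⟩
          rw [hmN1, Nat.lt_ceil] at hpN
          refine ⟨?_, hpp, hp5, hpN⟩
          have h1 : (p:ℝ) < z := lt_of_lt_of_le hpN hwz
          rw [Nat.lt_ceil]
          exact h1
      rw [hVs_eq]
      have hVl := V_lower mN (by omega)
      have hcast : ((mN:ℕ):ℝ) + 1 = ((⌈w⌉₊:ℕ):ℝ) := by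
        rw [← hmN1]
        push_cast
        ring
      have hlogc : Real.log w ≤ Real.log (((mN:ℕ):ℝ)+1) := by
        rw [hcast]
        apply Real.log_le_log (by linarith) (Nat.le_ceil w)
      have : pS5 mN = ∑ p ∈ (range (mN+1)).filter (fun p => p.Prime ∧ 5 ≤ p),
          Real.log p / p := rfl
      linarith [hVl]
    · -- numeric case 4
      have hLpos := hLwpos
      have e1 : 1 - (Real.log w - 2.9018) / Real.log w = 2.9018/Real.log w := by
        field_simp
        ring
      rw [e1]
      have hw2 : (0:ℝ) < w - 2 := by linarith
      have hE : 1/((n₀:ℝ)-2) ≤ 1/(w-2) := by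
        apply one_div_le_one_div_of_le hw2
        linarith
      have hb := hfun_mono (L₁ := 2.83) (by norm_num) hLge
      have hlog78 : (1.1367:ℝ) ≤ Real.log (1 + 6/2.83) := by
        have hmono : Real.log ((78:ℝ)/25) ≤ Real.log (1 + 6/2.83) := by
          apply Real.log_le_log (by norm_num)
          norm_num
        have hsplit : Real.log ((78:ℝ)/25) = Real.log 3 + Real.log (26/25) := by
          rw [show (78:ℝ)/25 = 3 * (26/25) by norm_num]
          rw [Real.log_mul (by norm_num) (by norm_num)]
        have h2625 : (1:ℝ)/26 ≤ Real.log ((26:ℝ)/25) := by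
          have := log_ge' (x := (26:ℝ)/25) (by norm_num)
          have he : 1 - 1/((26:ℝ)/25) = 1/26 := by norm_num
          linarith [he ▸ this]
        have := log3_lb
        linarith [hsplit ▸ (by linarith : (1.0983:ℝ) + 1/26 ≤ Real.log 3 + Real.log (26/25))]
      have hhL : (3.2168:ℝ) ≤ Real.log w * Real.log (1 + 6/Real.log w) := by
        have h1 : (3.2168:ℝ) ≤ 2.83 * Real.log (1 + 6/2.83) := by linarith [hlog78]
        linarith [hb]
      have htan : Real.log w ≤ 2.8351 + (w-17)/17 := by
        have h1 : Real.log (w/17) ≤ w/17 - 1 := Real.log_le_sub_one_of_pos (by linarith)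
        rw [Real.log_div (by linarith) (by norm_num)] at h1
        have := log17_ub
        have he : w/17 - 1 = (w-17)/17 := by ring
        linarith
      have hlin : Real.log w ≤ 0.3150 * (w - 2) := by
        linarith [htan, hw17]
      have hLdivw : Real.log w * (1/(w-2)) ≤ 0.3150 := by
        rw [mul_one_div, div_le_iff₀ hw2]
        linarith
      have hkey : 2.9018/Real.log w + 1/(w-2) ≤ Real.log (1 + 6/Real.log w) := by
        rw [← sub_nonneg]
        have he2 : Real.log (1 + 6/Real.log w) - (2.9018/Real.log w + 1/(w-2))
            = (Real.log w * Real.log (1 + 6/Real.log w)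
                - (2.9018 + Real.log w * (1/(w-2)))) / Real.log w := by
          field_simp
        rw [he2]
        apply div_nonneg _ hLwpos.le
        linarith
      have hfinal : 2.9018/Real.log w + 1/((n₀:ℝ)-2) ≤ Real.log (1 + 6/Real.log w) := by
        linarith
      calc Real.exp (2.9018/Real.log w + 1/((n₀:ℝ)-2))
          ≤ Real.exp (Real.log (1 + 6/Real.log w)) := Real.exp_le_exp.mpr hfinal
        _ = 1 + 6/Real.log w := Real.exp_log (by positivity)


end Omega1Aux

/-- **Mertens-type bound for the sieve density `ω₁`.** For a positive integer `m` and
reals `3 < w ≤ z₀`, the product over primes `w ≤ p < z₀` of `(1 − ω₁(m,p)/p)⁻¹` is at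
most `(log z₀ / log w)(1 + 6/log w)`. -/
theorem omega1_euler_product_bound (m : ℕ) (hm : 0 < m) (w z₀ : ℝ)
    (hw : 3 < w) (hwz : w ≤ z₀) :
    ∏ p ∈ (Finset.range ⌈z₀⌉₊).filter
        (fun p : ℕ => p.Prime ∧ w ≤ (p : ℝ) ∧ (p : ℝ) < z₀),
      (1 - omega1 m p / p)⁻¹ ≤
    (Real.log z₀ / Real.log w) * (1 + 6 / Real.log w) := by
  classical
  have hw1 : (1:ℝ) < w := by linarith
  have hLwpos : 0 < Real.log w := Real.log_pos hw1
  rcases lt_or_ge z₀ 5 with hz5 | hz5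
  · have hempty : (Finset.range ⌈z₀⌉₊).filter
        (fun p : ℕ => p.Prime ∧ w ≤ (p : ℝ) ∧ (p : ℝ) < z₀) = ∅ := by
      rw [Finset.filter_eq_empty_iff]
      intro p _
      rintro ⟨hpp, hwp, hpz⟩
      have h3 : (3:ℝ) < (p:ℝ) := lt_of_lt_of_le hw hwp
      have h5 : (p:ℝ) < 5 := lt_trans hpz hz5
      have h3' : 3 < p := by exact_mod_cast h3
      have h5' : p < 5 := by exact_mod_cast h5
      interval_cases p
      exact absurd hpp (by decide)
    rw [hempty, Finset.prod_empty]
    have ha : 1 ≤ Real.log z₀ / Real.log w := by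
      rw [le_div_iff₀ hLwpos]
      have := Real.log_le_log (by linarith) hwz
      linarith
    have hb : (1:ℝ) ≤ 1 + 6/Real.log w := by
      have : 0 < 6/Real.log w := by positivity
      linarith
    nlinarith
  · set w' := max w 5 with hw'def
    have hw'5 : 5 ≤ w' := le_max_right w 5
    have hw'z : w' ≤ z₀ := max_le hwz hz5
    have hww' : w ≤ w' := le_max_left w 5
    have hfeq : (Finset.range ⌈z₀⌉₊).filter
        (fun p : ℕ => p.Prime ∧ w ≤ (p : ℝ) ∧ (p : ℝ) < z₀)
        = (Finset.range ⌈z₀⌉₊).filter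
        (fun p : ℕ => p.Prime ∧ w' ≤ (p : ℝ) ∧ (p : ℝ) < z₀) := by
      apply Finset.filter_congr
      intro p _
      constructor
      · rintro ⟨hpp, hwp, hpz⟩
        refine ⟨hpp, ?_, hpz⟩
        have h3 : (3:ℝ) < (p:ℝ) := lt_of_lt_of_le hw hwp
        have h3' : 3 < p := by exact_mod_cast h3
        have h5' : 5 ≤ p := by
          rcases Nat.lt_or_ge p 5 with h | h
          · interval_cases p
            exact absurd hpp (by decide)
          · exact h
        have h5R : (5:ℝ) ≤ (p:ℝ) := by exact_mod_cast h5'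
        exact max_le hwp h5R
      · rintro ⟨hpp, hwp, hpz⟩
        exact ⟨hpp, le_trans hww' hwp, hpz⟩
    rw [hfeq]
    have hmain := Omega1Aux.main5 m hm w' z₀ hw'5 hw'z
    refine le_trans hmain ?_
    have hLw' : Real.log w ≤ Real.log w' := Real.log_le_log (by linarith) hww'
    have hLz0 : 0 ≤ Real.log z₀ := Real.log_nonneg (by linarith)
    have hLw'pos : 0 < Real.log w' := lt_of_lt_of_le hLwpos hLw'
    have ha : Real.log z₀ / Real.log w' ≤ Real.log z₀ / Real.log w :=
      div_le_div_of_nonneg_left hLz0 hLwpos hLw'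
    have hb : 1 + 6/Real.log w' ≤ 1 + 6/Real.log w := by
      have := div_le_div_of_nonneg_left (by norm_num : (0:ℝ) ≤ 6) hLwpos hLw'
      linarith
    apply mul_le_mul ha hb (by positivity) (by positivity)
end
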